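/- arXiv:2512.16398 — 6 statements merged into one kernel-verified Lean document; each statement's English description precedes it below -/
import Mathlib

section
/- For every graph F on r ≥ 2 vertices and every real z < r!/(r^r − r), there exists an integer k ≥ 2 with i_k(F) ≥ z. Consequently, sup_{k} i_k(F) ≥ r!/(r^r − r). -/
open Filter Topology

/-- The number of `|V(F)|`-element subsets of the vertex set of `G` that induce a
subgraph isomorphic to `F`. -/
noncomputable def inducedCount {α β : Type*} [Fintype α] [Fintype β]
    (F : SimpleGraph α) (G : SimpleGraph β) : ℕ :=
  Set.ncard {s : Finset β | s.card = Fintype.card α ∧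
    Nonempty (F ≃g SimpleGraph.induce (↑s : Set β) G)}

/-- The induced density `p(F,G) = P(F,G)/C(n,r)`. -/
noncomputable def inducedDensity {α β : Type*} [Fintype α] [Fintype β]
    (F : SimpleGraph α) (G : SimpleGraph β) : ℝ :=
  (inducedCount F G : ℝ) / ((Fintype.card β).choose (Fintype.card α))

/-- `i_k(F,n)`: the maximum induced density of `F` over `K_k`-free graphs on `n` vertices. -/
noncomputable def ikn {α : Type*} [Fintype α] (F : SimpleGraph α) (k n : ℕ) : ℝ :=
  sSup {x : ℝ | ∃ G : SimpleGraph (Fin n), G.CliqueFree k ∧ x = inducedDensity F G}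

/-- `i_k(F) = lim_{n → ∞} i_k(F,n)`. -/
noncomputable def ik {α : Type*} [Fintype α] (F : SimpleGraph α) (k : ℕ) : ℝ :=
  limUnder atTop (fun n => ikn F k n)

/-- A graph `F` is inducibility diverse if for every `k` there is `m > k`
with `i_k(F) < i_m(F)`. -/
def InducibilityDiverse {α : Type*} [Fintype α] (F : SimpleGraph α) : Prop :=
  ∀ k : ℕ, ∃ m : ℕ, k < m ∧ ik F k < ik F m

section Aux
set_option linter.unusedSectionVars false

open SimpleGraph

variable {α β γ : Type*} [Fintype α] [Fintype β] [Fintype γ] (F : SimpleGraph α)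

/-- The set of subsets counted by `inducedCount`. -/
def Tset (G : SimpleGraph β) : Set (Finset β) :=
  {s : Finset β | s.card = Fintype.card α ∧
    Nonempty (F ≃g SimpleGraph.induce (↑s : Set β) G)}

lemma inducedCount_eq (G : SimpleGraph β) : inducedCount F G = (Tset F G).ncard := rfl

/-- Transfer an induced subgraph along an adjacency-preserving embedding. -/
noncomputable def keyIso (H : SimpleGraph β) (G : SimpleGraph γ) (f : β ↪ γ)
    (hf : ∀ a b, H.Adj a b ↔ G.Adj (f a) (f b)) (s : Finset β) :
    H.induce (↑s : Set β) ≃g G.induce (↑(s.map f) : Set γ) where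
  toEquiv := Equiv.ofBijective
    (fun x => ⟨f x.1, by
      obtain ⟨x, hx⟩ := x
      simp only [Finset.coe_map, Set.mem_image, Finset.mem_coe]
      exact ⟨x, hx, rfl⟩⟩)
    (by
      constructor
      · intro x y hxy
        apply Subtype.ext
        exact f.injective (congrArg Subtype.val hxy)
      · rintro ⟨y, hy⟩
        simp only [Finset.coe_map, Set.mem_image, Finset.mem_coe] at hy
        obtain ⟨x, hx, rfl⟩ := hy
        exact ⟨⟨x, hx⟩, rfl⟩)
  map_rel_iff' := by
    rintro ⟨a, ha⟩ ⟨b, hb⟩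
    simp only [Equiv.ofBijective_apply, comap_adj, Function.Embedding.coe_subtype]
    exact (hf a b).symm

/-- Counting induced copies in a comap along an embedding. -/
lemma lemmaA (f : β ↪ γ) (G : SimpleGraph γ) :
    inducedCount F (G.comap f) =
      Set.ncard {s : Finset γ | ↑s ⊆ Set.range f ∧ s.card = Fintype.card α ∧
        Nonempty (F ≃g G.induce (↑s : Set γ))} := by
  classical
  rw [inducedCount_eq]
  have himg : (Finset.map f) '' (Tset F (G.comap f)) =
      {s : Finset γ | ↑s ⊆ Set.range f ∧ s.card = Fintype.card α ∧
        Nonempty (F ≃g G.induce (↑s : Set γ))} := by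
    ext s
    constructor
    · rintro ⟨s', ⟨hcard, ⟨e⟩⟩, rfl⟩
      refine ⟨?_, by simpa using hcard, ⟨e.trans (keyIso (G.comap f) G f (fun a b => Iff.rfl) s')⟩⟩
      intro x hx
      simp only [Finset.coe_map, Set.mem_image, Finset.mem_coe] at hx
      obtain ⟨y, _, rfl⟩ := hx
      exact ⟨y, rfl⟩
    · rintro ⟨hsub, hcard, ⟨e⟩⟩
      have hmap : (s.preimage f f.injective.injOn).map f = s := by
        rw [Finset.map_eq_image, Finset.image_preimage]
        ext x
        simp only [Finset.mem_filter, and_iff_left_iff_imp]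
        intro hx
        exact hsub hx
      have k := keyIso (G.comap f) G f (fun a b => Iff.rfl) (s.preimage f f.injective.injOn)
      rw [hmap] at k
      refine ⟨s.preimage f f.injective.injOn, ⟨?_, ⟨e.trans k.symm⟩⟩, hmap⟩
      rw [← hmap, Finset.card_map] at hcard
      exact hcard
  rw [← himg, Set.ncard_image_of_injective _ (Finset.map_injective f)]

lemma count_comap_le (f : β ↪ γ) (G : SimpleGraph γ) :
    inducedCount F (G.comap f) ≤ inducedCount F G := by
  rw [lemmaA, inducedCount_eq]
  exact Set.ncard_le_ncard (fun s hs => ⟨hs.2.1, hs.2.2⟩) (Set.toFinite _)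

lemma count_comap_equiv (e : β ≃ γ) (G : SimpleGraph γ) :
    inducedCount F (G.comap e) = inducedCount F G := by
  refine le_antisymm (count_comap_le F e.toEmbedding G) ?_
  have h2 : (G.comap ⇑e).comap ⇑e.symm = G := by
    ext x y
    simp
  calc inducedCount F G = inducedCount F ((G.comap ⇑e).comap ⇑e.symm) := by rw [h2]
    _ ≤ inducedCount F (G.comap ⇑e) := count_comap_le F e.symm.toEmbedding _

lemma count_le_choose (G : SimpleGraph β) :
    inducedCount F G ≤ (Fintype.card β).choose (Fintype.card α) := by
  classical
  rw [inducedCount_eq]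
  have hsub : Tset F G ⊆ ↑(Finset.univ.powersetCard (Fintype.card α) :
      Finset (Finset β)) := by
    intro s hs
    simp only [Finset.mem_coe, Finset.mem_powersetCard]
    exact ⟨Finset.subset_univ s, hs.1⟩
  calc (Tset F G).ncard ≤ _ := Set.ncard_le_ncard hsub (Set.toFinite _)
    _ = (Finset.univ.powersetCard (Fintype.card α) : Finset (Finset β)).card := by
        rw [Set.ncard_coe_finset]
    _ ≤ _ := by
        rw [Finset.card_powersetCard, Finset.card_univ]

lemma inducedDensity_nonneg (G : SimpleGraph β) : 0 ≤ inducedDensity F G := by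
  unfold inducedDensity
  positivity

lemma inducedDensity_le_one (G : SimpleGraph β) : inducedDensity F G ≤ 1 := by
  unfold inducedDensity
  rcases Nat.eq_zero_or_pos ((Fintype.card β).choose (Fintype.card α)) with h | h
  · rw [h]; simp
  · rw [div_le_one (by exact_mod_cast h)]
    exact_mod_cast count_le_choose F G

lemma ikn_nonneg (k n : ℕ) : 0 ≤ ikn F k n := by
  rcases Set.eq_empty_or_nonempty
      {x : ℝ | ∃ G : SimpleGraph (Fin n), G.CliqueFree k ∧ x = inducedDensity F G} with h | h
  · rw [ikn, h, Real.sSup_empty]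
  · obtain ⟨x, G, hG, rfl⟩ := h
    exact Real.sSup_nonneg' ⟨_, ⟨G, hG, rfl⟩, inducedDensity_nonneg F G⟩

lemma ikn_le_one (k n : ℕ) : ikn F k n ≤ 1 := by
  refine Real.sSup_le ?_ zero_le_one
  rintro x ⟨G, _, rfl⟩
  exact inducedDensity_le_one F G

lemma ikn_bddAbove (k n : ℕ) :
    BddAbove {x : ℝ | ∃ G : SimpleGraph (Fin n), G.CliqueFree k ∧ x = inducedDensity F G} := by
  refine ⟨1, ?_⟩
  rintro x ⟨G, _, rfl⟩
  exact inducedDensity_le_one F G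

lemma le_ikn {k n : ℕ} (G : SimpleGraph (Fin n)) (hG : G.CliqueFree k) :
    inducedDensity F G ≤ ikn F k n :=
  le_csSup (ikn_bddAbove F k n) ⟨G, hG, rfl⟩

end Aux

section Mono
set_option linter.unusedSectionVars false
open SimpleGraph
variable {α : Type*} [Fintype α] (F : SimpleGraph α)

lemma ikn_succ_le (k n : ℕ) (hn : Fintype.card α ≤ n) :
    ikn F k (n + 1) ≤ ikn F k n := by
  classical
  refine Real.sSup_le ?_ (ikn_nonneg F k n)
  rintro x ⟨G, hG, rfl⟩
  set rr := Fintype.card α with hrr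
  set T : Finset (Finset (Fin (n+1))) := Finset.univ.filter (fun s => s ∈ Tset F G) with hT
  have hTcoe : (Tset F G : Set (Finset (Fin (n+1)))) = ↑T := by
    ext s; simp [hT]
  have hcount : inducedCount F G = T.card := by
    rw [inducedCount_eq, hTcoe, Set.ncard_coe_finset]
  have hcardT : ∀ s ∈ T, s.card = rr := by
    intro s hs
    rw [hT, Finset.mem_filter] at hs
    exact hs.2.1
  set Del : Fin (n+1) → ℕ := fun v => (T.filter (fun s => v ∉ s)).card with hDel
  have hsum : ∑ v, Del v = (n + 1 - rr) * T.card := by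
    have h1 : ∀ v, Del v = ∑ s ∈ T, if v ∉ s then 1 else 0 := by
      intro v; rw [hDel]; simp [Finset.card_filter]
    simp only [h1]
    rw [Finset.sum_comm]
    have h2 : ∀ s ∈ T, (∑ v : Fin (n+1), if v ∉ s then 1 else 0) = n + 1 - rr := by
      intro s hs
      rw [← Finset.card_filter]
      have : Finset.univ.filter (fun v => v ∉ s) = sᶜ := by
        ext v; simp
      rw [this, Finset.card_compl, hcardT s hs]
      simp
    rw [Finset.sum_congr rfl h2, Finset.sum_const, smul_eq_mul, mul_comm]
  -- pigeonhole
  obtain ⟨v, -, hv⟩ : ∃ v ∈ (Finset.univ : Finset (Fin (n+1))),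
      (n + 1 - rr) * T.card ≤ (n + 1) * Del v := by
    apply Finset.exists_le_of_sum_le Finset.univ_nonempty
    rw [Finset.sum_const, Finset.card_univ, Fintype.card_fin, smul_eq_mul,
      ← Finset.mul_sum, hsum]
  -- the deleted graph
  set fv : Fin n ↪ Fin (n+1) :=
    ⟨fun u => Equiv.swap (Fin.last n) v u.castSucc,
      fun a b hab => Fin.castSucc_injective n ((Equiv.swap (Fin.last n) v).injective hab)⟩
    with hfv
  have hvrange : ∀ x : Fin (n+1), x ∈ Set.range ⇑fv ↔ x ≠ v := by
    intro x
    constructor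
    · rintro ⟨u, rfl⟩ h
      simp only [hfv, Function.Embedding.coeFn_mk] at h
      have h2 := congrArg (Equiv.swap (Fin.last n) v) (show Equiv.swap (Fin.last n) v u.castSucc = v from h)
      rw [Equiv.swap_apply_self, Equiv.swap_apply_right] at h2
      exact absurd h2 (Fin.castSucc_lt_last u).ne
    · intro hx
      have hy : Equiv.swap (Fin.last n) v x ≠ Fin.last n := by
        intro h
        have := congrArg (Equiv.swap (Fin.last n) v) h
        rw [Equiv.swap_apply_self, Equiv.swap_apply_left] at this
        exact hx this
      obtain ⟨u, hu⟩ := Fin.exists_castSucc_eq.mpr hy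
      refine ⟨u, ?_⟩
      show Equiv.swap (Fin.last n) v u.castSucc = x
      rw [hu, Equiv.swap_apply_self]
  set G' : SimpleGraph (Fin n) := G.comap ⇑fv with hG'
  have hG'free : G'.CliqueFree k := hG.comap ⟨(SimpleGraph.Embedding.comap fv G).toCopy⟩
  have hDelv : Del v = inducedCount F G' := by
    rw [hG', lemmaA]
    have hsets : {s : Finset (Fin (n+1)) | ↑s ⊆ Set.range ⇑fv ∧ s.card = Fintype.card α ∧
        Nonempty (F ≃g G.induce (↑s : Set (Fin (n+1))))} =
        ↑(T.filter (fun s => v ∉ s)) := by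
      ext s
      simp only [Set.mem_setOf_eq, Finset.coe_filter, Finset.mem_coe, Finset.mem_filter, hT,
        Finset.mem_univ, true_and]
      constructor
      · rintro ⟨hsub, hcard, hiso⟩
        refine ⟨⟨hcard, hiso⟩, fun hvs => ?_⟩
        exact ((hvrange v).1 (hsub hvs)) rfl
      · rintro ⟨⟨hcard, hiso⟩, hvs⟩
        refine ⟨fun x hx => (hvrange x).2 ?_, hcard, hiso⟩
        rintro rfl
        exact hvs hx
    rw [hsets, Set.ncard_coe_finset]
  -- the numeric inequality
  have hid : (n + 1) * n.choose rr = (n + 1 - rr) * (n + 1).choose rr := by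
    rw [Nat.add_one_mul_choose_eq, Nat.choose_succ_right_eq, Nat.mul_comm]
  have hkey : T.card * n.choose rr ≤ Del v * (n + 1).choose rr := by
    have h3 : (n + 1) * (T.card * n.choose rr) ≤ (n + 1) * (Del v * (n + 1).choose rr) := by
      calc (n + 1) * (T.card * n.choose rr) = T.card * ((n + 1) * n.choose rr) := by ring
        _ = (n + 1 - rr) * T.card * (n + 1).choose rr := by rw [hid]; ring
        _ ≤ (n + 1) * Del v * (n + 1).choose rr :=
            Nat.mul_le_mul_right _ hv
        _ = (n + 1) * (Del v * (n + 1).choose rr) := by ring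
    exact Nat.le_of_mul_le_mul_left h3 (Nat.succ_pos n)
  have hpos1 : 0 < ((n + 1).choose rr : ℝ) := by
    exact_mod_cast Nat.choose_pos (by omega : rr ≤ n + 1)
  have hpos2 : 0 < (n.choose rr : ℝ) := by
    exact_mod_cast Nat.choose_pos hn
  have hdle : inducedDensity F G ≤ inducedDensity F G' := by
    rw [inducedDensity, inducedDensity, hcount, ← hDelv]
    simp only [Fintype.card_fin, ← hrr]
    rw [div_le_div_iff₀ hpos1 hpos2]
    exact_mod_cast hkey
  exact hdle.trans (le_ikn F G' hG'free)

end Mono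

section Conv
set_option linter.unusedSectionVars false
open SimpleGraph
variable {α : Type*} [Fintype α] (F : SimpleGraph α)

lemma ikn_tendsto (k : ℕ) :
    Tendsto (fun n => ikn F k n) atTop
      (𝓝 (⨅ m : ℕ, ikn F k (m + Fintype.card α))) := by
  have hanti : Antitone (fun m => ikn F k (m + Fintype.card α)) := by
    apply antitone_nat_of_succ_le
    intro m
    have h := ikn_succ_le F k (m + Fintype.card α) (Nat.le_add_left _ _)
    have : m + 1 + Fintype.card α = m + Fintype.card α + 1 := by omega
    rw [this]
    exact h
  have hbdd : BddBelow (Set.range fun m => ikn F k (m + Fintype.card α)) := by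
    refine ⟨0, ?_⟩
    rintro x ⟨m, rfl⟩
    exact ikn_nonneg F k _
  exact (tendsto_add_atTop_iff_nat (Fintype.card α)).1 (tendsto_atTop_ciInf hanti hbdd)

lemma ik_eq (k : ℕ) : ik F k = ⨅ m : ℕ, ikn F k (m + Fintype.card α) :=
  (ikn_tendsto F k).limUnder_eq

lemma ik_le_one (k : ℕ) : ik F k ≤ 1 := by
  rw [ik_eq]
  refine le_trans (ciInf_le ⟨0, ?_⟩ 0) (ikn_le_one F k _)
  rintro x ⟨m, rfl⟩
  exact ikn_nonneg F k _

lemma le_ik_of_subseq {k : ℕ} {φ : ℕ → ℕ} (hφ : Tendsto φ atTop atTop) {z : ℝ}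
    (hz : ∀ᶠ t in atTop, z ≤ ikn F k (φ t)) : z ≤ ik F k := by
  rw [ik_eq]
  exact ge_of_tendsto ((ikn_tendsto F k).comp hφ) hz

end Conv

section Blowup
set_option linter.unusedSectionVars false
open SimpleGraph
variable {α β : Type*} [Fintype α] [Fintype β] (F : SimpleGraph α)

lemma blowup_count (G : SimpleGraph β) {t : ℕ} (ht : 1 ≤ t) :
    inducedCount F G * t ^ (Fintype.card α) ≤
      inducedCount F (G.comap (Prod.fst : β × Fin t → β)) := by
  classical
  haveI : Inhabited (Fin t) := ⟨⟨0, ht⟩⟩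
  set T : Finset (Finset β) := Finset.univ.filter (fun s => s ∈ Tset F G) with hT
  set T' : Finset (Finset (β × Fin t)) :=
    Finset.univ.filter (fun s => s ∈ Tset F (G.comap (Prod.fst : β × Fin t → β))) with hT'
  have hcT : inducedCount F G = T.card := by
    rw [inducedCount_eq, show (Tset F G : Set (Finset β)) = ↑T by ext s; simp [hT],
      Set.ncard_coe_finset]
  have hcT' : inducedCount F (G.comap (Prod.fst : β × Fin t → β)) = T'.card := by
    rw [inducedCount_eq,
      show (Tset F (G.comap (Prod.fst : β × Fin t → β)) : Set (Finset (β × Fin t))) = ↑T' by ext s; simp [hT'],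
      Set.ncard_coe_finset]
  set D : Finset ((s : Finset β) × (↥s → Fin t)) :=
    T.sigma (fun _ => Finset.univ) with hD
  set gext : ((s : Finset β) × (↥s → Fin t)) → β → Fin t :=
    fun p v => if h : v ∈ p.1 then p.2 ⟨v, h⟩ else default with hgext
  set Φ : ((s : Finset β) × (↥s → Fin t)) → Finset (β × Fin t) :=
    fun p => p.1.map ⟨fun v => (v, gext p v), fun a b hab => congrArg Prod.fst hab⟩ with hΦ
  have himg : ∀ p, (Φ p).image Prod.fst = p.1 := by
    intro p
    ext x
    simp [hΦ, Finset.mem_image, Finset.mem_map]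
    constructor
    · rintro ⟨a, ha, rfl⟩; exact ha
    · intro hx; exact ⟨x, hx, rfl⟩
  have hmaps : ∀ p ∈ D, Φ p ∈ T' := by
    rintro ⟨s, g⟩ hp
    rw [hD, Finset.mem_sigma] at hp
    have hsT : s ∈ T := hp.1
    rw [hT, Finset.mem_filter] at hsT
    obtain ⟨-, hcard, ⟨e⟩⟩ := hsT
    rw [hT', Finset.mem_filter]
    refine ⟨Finset.mem_univ _, ?_, ?_⟩
    · rw [hΦ]; simpa using hcard
    · exact ⟨e.trans (keyIso G (G.comap (Prod.fst : β × Fin t → β))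
        ⟨fun v => (v, gext ⟨s, g⟩ v), fun a b hab => congrArg Prod.fst hab⟩
        (fun a b => Iff.rfl) s)⟩
  have hinj : Set.InjOn Φ ↑D := by
    rintro ⟨s1, g1⟩ h1 ⟨s2, g2⟩ h2 heq
    have hs : s1 = s2 := by
      have a := himg ⟨s1, g1⟩
      have b := himg ⟨s2, g2⟩
      rw [heq] at a
      exact a.symm.trans b
    subst hs
    have hg : g1 = g2 := by
      funext v
      have hv : ((v : β), gext ⟨s1, g1⟩ v) ∈ Φ ⟨s1, g1⟩ := by
        rw [hΦ]
        exact Finset.mem_map_of_mem _ v.2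
      rw [heq] at hv
      rw [hΦ] at hv
      simp only [Finset.mem_map, Function.Embedding.coeFn_mk] at hv
      obtain ⟨w, hw, hwe⟩ := hv
      have hwv : w = (v : β) := congrArg Prod.fst hwe
      subst hwv
      have := congrArg Prod.snd hwe
      rw [hgext] at this
      simpa [dif_pos v.2, dif_pos ((Finset.coe_mem v))] using this.symm
    rw [hg]
  have hDcard : D.card = T.card * t ^ (Fintype.card α) := by
    rw [hD, Finset.card_sigma]
    have : ∀ s ∈ T, (Finset.univ : Finset (↥s → Fin t)).card = t ^ (Fintype.card α) := by
      intro s hs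
      rw [hT, Finset.mem_filter] at hs
      rw [Finset.card_univ, Fintype.card_fun, Fintype.card_coe, Fintype.card_fin, hs.2.1]
    rw [Finset.sum_congr rfl this, Finset.sum_const, smul_eq_mul]
  calc inducedCount F G * t ^ (Fintype.card α) = D.card := by rw [hcT, hDcard]
    _ ≤ T'.card := Finset.card_le_card_of_injOn Φ hmaps hinj
    _ = inducedCount F (G.comap (Prod.fst : β × Fin t → β)) := hcT'.symm

end Blowup

section BVdef
variable (r : ℕ)

def BV : ℕ → Type
  | 0 => Unit
  | (d+1) => Fin r × BV d

instance fintypeBV : ∀ d, Fintype (BV r d)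
  | 0 => inferInstanceAs (Fintype Unit)
  | (d+1) => letI := fintypeBV d; inferInstanceAs (Fintype (Fin r × BV r d))

lemma card_BV : ∀ d, Fintype.card (BV r d) = r ^ d
  | 0 => rfl
  | (d+1) => by
    have h : Fintype.card (BV r (d+1)) = Fintype.card (Fin r) * Fintype.card (BV r d) :=
      Fintype.card_prod (Fin r) (BV r d)
    rw [h, Fintype.card_fin, card_BV d, pow_succ, mul_comm]

variable {r}

def BG (F : SimpleGraph (Fin r)) : ∀ d, SimpleGraph (BV r d)
  | 0 => ⊥
  | (d+1) =>
    { Adj := fun (a b : Fin r × BV r d) =>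
        (a.1 = b.1 ∧ (BG F d).Adj a.2 b.2) ∨ (a.1 ≠ b.1 ∧ F.Adj a.1 b.1)
      symm := ⟨by
        rintro a b (⟨h1, h2⟩ | ⟨h1, h2⟩)
        · exact Or.inl ⟨h1.symm, h2.symm⟩
        · exact Or.inr ⟨h1.symm, h2.symm⟩⟩
      loopless := ⟨by
        rintro a (⟨h1, h2⟩ | ⟨h1, h2⟩)
        · exact (BG F d).irrefl h2
        · exact h1 rfl⟩ }

lemma BG_succ_adj (F : SimpleGraph (Fin r)) (d : ℕ) (a b : Fin r × BV r d) :
    (BG F (d+1)).Adj a b ↔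
      ((a.1 = b.1 ∧ (BG F d).Adj a.2 b.2) ∨ (a.1 ≠ b.1 ∧ F.Adj a.1 b.1)) := Iff.rfl

end BVdef

section Rec
set_option linter.unusedSectionVars false
open SimpleGraph
variable {r : ℕ} (F : SimpleGraph (Fin r))

lemma count_BG_succ (hr : 2 ≤ r) (d : ℕ) :
    (r ^ d) ^ r + r * inducedCount F (BG F d) ≤ inducedCount F (BG F (d+1)) := by
  classical
  set T : Finset (Finset (Fin r × BV r d)) :=
    Finset.univ.filter (fun s => s ∈ Tset F (BG F (d+1))) with hT
  set Td : Finset (Finset (BV r d)) :=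
    Finset.univ.filter (fun s => s ∈ Tset F (BG F d)) with hTd
  have hcT : inducedCount F (BG F (d+1)) = T.card := by
    rw [inducedCount_eq,
      show Tset F (BG F (d+1)) = (↑T : Set (Finset (Fin r × BV r d))) by
        ext s; exact (Finset.mem_filter.trans (and_iff_right (Finset.mem_univ _))).symm]
    exact Set.ncard_coe_finset T
  have hcTd : inducedCount F (BG F d) = Td.card := by
    rw [inducedCount_eq,
      show (Tset F (BG F d) : Set (Finset (BV r d))) = ↑Td by ext s; simp [hTd],
      Set.ncard_coe_finset]
  set Φt : (Fin r → BV r d) → Finset (Fin r × BV r d) :=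
    fun h => Finset.image (fun i => (i, h i)) Finset.univ with hΦt
  set Φp : Fin r × Finset (BV r d) → Finset (Fin r × BV r d) :=
    fun p => p.2.map ⟨fun u => (p.1, u), fun a b hab => congrArg Prod.snd hab⟩ with hΦp
  set D : Finset ((Fin r → BV r d) ⊕ (Fin r × Finset (BV r d))) :=
    Finset.disjSum Finset.univ (Finset.univ ×ˢ Td) with hD
  set Φ : ((Fin r → BV r d) ⊕ (Fin r × Finset (BV r d))) → Finset (Fin r × BV r d) :=
    Sum.elim Φt Φp with hΦ
  have hmemt : ∀ (h : Fin r → BV r d) (x : Fin r × BV r d),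
      x ∈ Φt h ↔ ∃ i, (i, h i) = x := by
    intro h x
    simp [hΦt]
  have hmemp : ∀ (c : Fin r) (s' : Finset (BV r d)) (x : Fin r × BV r d),
      x ∈ Φp (c, s') ↔ ∃ u ∈ s', (c, u) = x := by
    intro c s' x
    simp [hΦp]
    rfl
  -- maps into T
  have hmaps : ∀ p ∈ D, Φ p ∈ T := by
    rintro (h | ⟨c, s'⟩) hp
    · have hre : Φ (Sum.inl h) = Φt h := by simp [hΦ]
      rw [hre, hT, Finset.mem_filter]
      have hinj : Function.Injective (fun i : Fin r => (i, h i)) :=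
        fun a b hab => congrArg Prod.fst hab
      refine ⟨Finset.mem_univ _, ?_, ?_⟩
      · show (Φt h).card = Fintype.card (Fin r)
        rw [hΦt, Finset.card_image_of_injective _ hinj, Finset.card_univ]
      · refine ⟨?_⟩
        refine ⟨Equiv.ofBijective (fun i : Fin r => ⟨(i, h i), ?_⟩) ⟨?_, ?_⟩, ?_⟩
        · refine (hmemt h (i, h i)).2 ?_
          exact ⟨i, rfl⟩
        · intro a b hab
          exact congrArg (Prod.fst ∘ Subtype.val) hab
        · rintro ⟨x, hx⟩
          replace hx := (hmemt h x).1 hx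
          obtain ⟨i, rfl⟩ := hx
          exact ⟨i, rfl⟩
        · intro i j
          simp only [Equiv.ofBijective_apply, comap_adj, Function.Embedding.coe_subtype]
          constructor
          · rintro (⟨hij, hadj⟩ | ⟨hij, hadj⟩)
            · exfalso
              cases hij
              exact (BG F d).irrefl hadj
            · exact hadj
          · intro hF
            exact Or.inr ⟨F.ne_of_adj hF, hF⟩
    · have hre : Φ (Sum.inr (c, s')) = Φp (c, s') := by simp [hΦ]
      rw [hre]
      rw [hD, Finset.mem_disjSum] at hp
      obtain ⟨q, hq, hqe⟩ := hp.resolve_left (by rintro ⟨a, -, h⟩; exact absurd h (by simp))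
      have hq2 : (c, s') = q := by
        cases hqe
        rfl
      rw [← hq2] at hq
      rw [Finset.mem_product] at hq
      have hs' : s' ∈ Td := hq.2
      rw [hTd, Finset.mem_filter] at hs'
      obtain ⟨-, hcard, ⟨e⟩⟩ := hs'
      rw [hT, Finset.mem_filter]
      refine ⟨Finset.mem_univ _, ?_, ?_⟩
      · show (Φp (c, s')).card = Fintype.card (Fin r)
        rw [hΦp]
        simpa using hcard
      · refine ⟨e.trans (keyIso (BG F d) (BG F (d+1))
          ⟨fun u => (c, u), fun a b hab => congrArg Prod.snd hab⟩ ?_ s')⟩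
        intro a b
        show (BG F d).Adj a b ↔ ((c = c ∧ (BG F d).Adj a b) ∨ (c ≠ c ∧ F.Adj c c))
        constructor
        · intro hadj
          exact Or.inl ⟨rfl, hadj⟩
        · rintro (⟨-, hadj⟩ | ⟨hne, -⟩)
          · exact hadj
          · exact absurd rfl hne
  -- injectivity
  have hinj : Set.InjOn Φ ↑D := by
    have hfstp : ∀ (c : Fin r) (s' : Finset (BV r d)) (x : Fin r × BV r d),
        x ∈ Φp (c, s') → x.1 = c := by
      intro c s' x hx
      rw [hmemp] at hx
      obtain ⟨u, -, rfl⟩ := hx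
      rfl
    have i0 : Fin r := ⟨0, by omega⟩
    have i1 : Fin r := ⟨1, by omega⟩
    rintro (h | ⟨c, s'⟩) hp (h' | ⟨c', s''⟩) hp' heq
    · simp only [hΦ, Sum.elim_inl] at heq
      congr 1
      funext i
      have : (i, h i) ∈ Φt h := by rw [hmemt]; exact ⟨i, rfl⟩
      rw [heq, hmemt] at this
      obtain ⟨j, hj⟩ := this
      have hji : j = i := congrArg Prod.fst hj
      subst hji
      exact (congrArg Prod.snd hj).symm
    · exfalso
      simp only [hΦ, Sum.elim_inl, Sum.elim_inr] at heq
      have h0 : ((⟨0, by omega⟩ : Fin r), h ⟨0, by omega⟩) ∈ Φt h := by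
        rw [hmemt]; exact ⟨_, rfl⟩
      have h1 : ((⟨1, by omega⟩ : Fin r), h ⟨1, by omega⟩) ∈ Φt h := by
        rw [hmemt]; exact ⟨_, rfl⟩
      rw [heq] at h0 h1
      have e0 := hfstp _ _ _ h0
      have e1 := hfstp _ _ _ h1
      simp only at e0 e1
      rw [← e1] at e0
      exact absurd (congrArg Fin.val e0) (by simp)
    · exfalso
      simp only [hΦ, Sum.elim_inl, Sum.elim_inr] at heq
      have h0 : ((⟨0, by omega⟩ : Fin r), h' ⟨0, by omega⟩) ∈ Φt h' := by
        rw [hmemt]; exact ⟨_, rfl⟩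
      have h1 : ((⟨1, by omega⟩ : Fin r), h' ⟨1, by omega⟩) ∈ Φt h' := by
        rw [hmemt]; exact ⟨_, rfl⟩
      rw [← heq] at h0 h1
      have e0 := hfstp _ _ _ h0
      have e1 := hfstp _ _ _ h1
      simp only at e0 e1
      rw [← e1] at e0
      exact absurd (congrArg Fin.val e0) (by simp)
    · simp only [hΦ, Sum.elim_inr] at heq
      rw [hD, Finset.mem_coe, Finset.mem_disjSum] at hp
      obtain ⟨q, hq, hqe⟩ := hp.resolve_left (by rintro ⟨a, -, hh⟩; exact absurd hh (by simp))
      have hq2 : (c, s') = q := by cases hqe; rfl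
      rw [← hq2, Finset.mem_product] at hq
      have hs' : s' ∈ Td := hq.2
      rw [hTd, Finset.mem_filter] at hs'
      have hcard : s'.card = Fintype.card (Fin r) := hs'.2.1
      have hne : s'.Nonempty := by
        rw [← Finset.card_pos, hcard, Fintype.card_fin]
        omega
      obtain ⟨u, hu⟩ := hne
      have hcu : (c, u) ∈ Φp (c, s') := by rw [hmemp]; exact ⟨u, hu, rfl⟩
      rw [heq] at hcu
      have hcc : c = c' := (hfstp _ _ _ hcu).symm ▸ rfl
      have hcc' : (c, u).1 = c' := hfstp _ _ _ hcu
      simp only at hcc'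
      subst hcc'
      have hss : s' = s'' := by
        have : Function.Injective
            (Finset.map (⟨fun u => (c, u), fun a b hab => congrArg Prod.snd hab⟩ :
              BV r d ↪ Fin r × BV r d)) := Finset.map_injective _
        apply this
        exact heq
      rw [hss]
  -- cardinalities
  have hDcard : D.card = (r ^ d) ^ r + r * Td.card := by
    rw [hD, Finset.card_disjSum, Finset.card_product, Finset.card_univ, Finset.card_univ,
      Fintype.card_fun, card_BV, Fintype.card_fin]
  calc (r ^ d) ^ r + r * inducedCount F (BG F d) = D.card := by rw [hcTd, hDcard]
    _ ≤ T.card := Finset.card_le_card_of_injOn Φ hmaps hinj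
    _ = inducedCount F (BG F (d+1)) := hcT.symm

end Rec

section Final
set_option linter.unusedSectionVars false
open SimpleGraph

lemma cliqueFree_of_proj {β γ : Type*} [Fintype γ] (G : SimpleGraph β) (f : β → γ)
    (h : ∀ a b, G.Adj a b → f a ≠ f b) : G.CliqueFree (Fintype.card γ + 1) := by
  intro s hs
  have hinj : Set.InjOn f ↑s := by
    intro a ha b hb hab
    by_contra hne
    exact h a b (hs.1 ha hb hne) hab
  have hle := Finset.card_le_card_of_injOn f (fun a _ => Finset.mem_univ (f a)) hinj
  rw [hs.2, Finset.card_univ] at hle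
  omega

lemma analysis_lemma {r : ℕ} (hr : 2 ≤ r) {z : ℝ}
    (hz : z < (r.factorial : ℝ) / ((r : ℝ) ^ r - r)) (P : ℕ → ℕ)
    (hP : ∀ d, (r ^ d) ^ r + r * P d ≤ P (d + 1)) :
    ∃ d, 1 ≤ d ∧ z < (P d : ℝ) * r.factorial / (r : ℝ) ^ (d * r) := by
  have hr2 : (2 : ℝ) ≤ (r : ℝ) := by exact_mod_cast hr
  have hr0 : (0 : ℝ) < r := by linarith
  have hrr : (r : ℝ) < (r : ℝ) ^ r := by
    calc (r : ℝ) < (r : ℝ) * (r : ℝ) := by nlinarith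
      _ = (r : ℝ) ^ 2 := by ring
      _ ≤ (r : ℝ) ^ r := by
          apply pow_le_pow_right₀ (by linarith) hr
  have hden : (0 : ℝ) < (r : ℝ) ^ r - r := by linarith
  set L : ℝ := (r.factorial : ℝ) / ((r : ℝ) ^ r - r) with hL
  set x : ℝ := (r : ℝ) / (r : ℝ) ^ r with hx
  have hx0 : 0 ≤ x := by positivity
  have hx1 : x < 1 := by
    rw [hx, div_lt_one (by positivity)]
    exact hrr
  have hLpos : 0 < L := by
    rw [hL]
    have : (0 : ℝ) < r.factorial := by exact_mod_cast r.factorial_pos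
    positivity
  have hfac : (0 : ℝ) < r.factorial := by exact_mod_cast r.factorial_pos
  have hLx : L * (1 - x) = (r.factorial : ℝ) / (r : ℝ) ^ r := by
    rw [hL, hx]
    field_simp
  have claim : ∀ d, L * (1 - x ^ d) ≤ (P d : ℝ) * r.factorial / (r : ℝ) ^ (d * r) := by
    intro d
    induction d with
    | zero =>
        simp only [pow_zero, sub_self, mul_zero, Nat.zero_mul]
        positivity
    | succ d ih =>
      have hpow : (0 : ℝ) < (r : ℝ) ^ (d * r) := by positivity
      have hstep : ((r : ℝ) ^ (d * r) + r * P d) ≤ (P (d + 1) : ℝ) := by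
        have hcast : (((r ^ d) ^ r + r * P d : ℕ) : ℝ) ≤ (P (d + 1) : ℝ) := by
          exact_mod_cast hP d
        push_cast at hcast
        rw [← pow_mul] at hcast
        linarith
      have key : (r.factorial : ℝ) / (r : ℝ) ^ r
            + x * ((P d : ℝ) * r.factorial / (r : ℝ) ^ (d * r))
          ≤ (P (d + 1) : ℝ) * r.factorial / (r : ℝ) ^ ((d + 1) * r) := by
        have heq : (r.factorial : ℝ) / (r : ℝ) ^ r
              + x * ((P d : ℝ) * r.factorial / (r : ℝ) ^ (d * r))
            = ((r : ℝ) ^ (d * r) + r * P d) * r.factorial / ((r : ℝ) ^ (d * r) * (r : ℝ) ^ r) := by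
          rw [hx]
          field_simp
        have hsplit : (d + 1) * r = d * r + r := by ring
        rw [heq, hsplit, pow_add]
        apply div_le_div_of_nonneg_right ?_ (by positivity)
        · exact mul_le_mul_of_nonneg_right hstep hfac.le
      calc L * (1 - x ^ (d + 1)) = L * (1 - x) + x * (L * (1 - x ^ d)) := by
            rw [pow_succ]; ring
        _ = (r.factorial : ℝ) / (r : ℝ) ^ r + x * (L * (1 - x ^ d)) := by rw [hLx]
        _ ≤ (r.factorial : ℝ) / (r : ℝ) ^ r
              + x * ((P d : ℝ) * r.factorial / (r : ℝ) ^ (d * r)) := by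
            exact add_le_add (le_refl _) (mul_le_mul_of_nonneg_left ih hx0)
        _ ≤ _ := key
  have htend : Filter.Tendsto (fun d : ℕ => L * (1 - x ^ d)) Filter.atTop (nhds L) := by
    have h0 := tendsto_pow_atTop_nhds_zero_of_lt_one hx0 hx1
    have h1 : Filter.Tendsto (fun d : ℕ => 1 - x ^ d) Filter.atTop (nhds (1 - 0)) :=
      (tendsto_const_nhds : Filter.Tendsto (fun _ : ℕ => (1 : ℝ)) Filter.atTop (nhds 1)).sub h0
    have h2 := h1.const_mul L
    simpa using h2
  have hev : ∀ᶠ d in Filter.atTop, z < L * (1 - x ^ d) :=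
    htend.eventually_const_lt hz
  obtain ⟨d, hd1, hdz⟩ := (((Filter.eventually_ge_atTop 1).and hev)).exists
  exact ⟨d, hd1, lt_of_lt_of_le hdz (claim d)⟩

end Final

/-- For every graph `F` on `r ≥ 2` vertices and every real `z < r!/(r^r - r)` there is
`k ≥ 2` with `i_k(F) ≥ z`; consequently `sup_k i_k(F) ≥ r!/(r^r - r)`. -/
theorem stmt3 {r : ℕ} (hr : 2 ≤ r) (F : SimpleGraph (Fin r)) :
    (∀ z : ℝ, z < (r.factorial : ℝ) / ((r : ℝ) ^ r - r) →
      ∃ k : ℕ, 2 ≤ k ∧ z ≤ ik F k) ∧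
    (r.factorial : ℝ) / ((r : ℝ) ^ r - r) ≤ ⨆ k : ℕ, ik F k := by
  have main : ∀ z : ℝ, z < (r.factorial : ℝ) / ((r : ℝ) ^ r - r) →
      ∃ k : ℕ, 2 ≤ k ∧ z ≤ ik F k := by
    intro z hz
    set P : ℕ → ℕ := fun d => inducedCount F (BG F d) with hPdef
    have hP : ∀ d, (r ^ d) ^ r + r * P d ≤ P (d + 1) := fun d => count_BG_succ F hr d
    obtain ⟨d, hd1, hdz⟩ := analysis_lemma hr hz P hP
    have hpowpos : 0 < r ^ d := Nat.one_le_pow d r (by omega)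
    refine ⟨r ^ d + 1, by omega, ?_⟩
    apply le_ik_of_subseq F (φ := fun t => r ^ d * t)
    · exact tendsto_atTop_mono (fun t => Nat.le_mul_of_pos_left t hpowpos) tendsto_id
    · filter_upwards [Filter.eventually_ge_atTop 1] with t ht
      have hcards : Fintype.card (Fin (r ^ d * t)) = Fintype.card (BV r d × Fin t) := by
        rw [Fintype.card_fin, Fintype.card_prod, card_BV, Fintype.card_fin]
      set e : Fin (r ^ d * t) ≃ BV r d × Fin t := Fintype.equivOfCardEq hcards with he
      set G' : SimpleGraph (Fin (r ^ d * t)) :=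
        ((BG F d).comap (Prod.fst : BV r d × Fin t → BV r d)).comap ⇑e with hG'
      have hfree : G'.CliqueFree (r ^ d + 1) := by
        have h1 : ∀ a b, G'.Adj a b → (e a).1 ≠ (e b).1 := by
          intro a b hab hfst
          rw [hG'] at hab
          simp only [SimpleGraph.comap_adj] at hab
          exact (BG F d).ne_of_adj hab hfst
        have h2 := cliqueFree_of_proj G' (fun a => (e a).1) h1
        rwa [card_BV] at h2
      have hcount : P d * t ^ r ≤ inducedCount F G' := by
        rw [hG', count_comap_equiv]
        have hb := blowup_count F (BG F d) (t := t) ht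
        rwa [Fintype.card_fin] at hb
      have hnr : r ≤ r ^ d * t := by
        calc r = r ^ 1 := (pow_one r).symm
          _ ≤ r ^ d := Nat.pow_le_pow_right (by omega) hd1
          _ ≤ r ^ d * t := Nat.le_mul_of_pos_right _ (by omega)
      have hchoosepos : (0 : ℝ) < ((r ^ d * t).choose r : ℝ) := by
        exact_mod_cast Nat.choose_pos hnr
      have hckey : ((r ^ d * t).choose r) * r.factorial ≤ (r ^ d) ^ r * t ^ r := by
        have h3 : (r ^ d * t).descFactorial r ≤ (r ^ d * t) ^ r := Nat.descFactorial_le_pow _ _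
        rw [Nat.descFactorial_eq_factorial_mul_choose] at h3
        calc ((r ^ d * t).choose r) * r.factorial
            = r.factorial * ((r ^ d * t).choose r) := by ring
          _ ≤ (r ^ d * t) ^ r := h3
          _ = (r ^ d) ^ r * t ^ r := by rw [mul_pow]
      have hdens : (P d : ℝ) * r.factorial / (r : ℝ) ^ (d * r) ≤ inducedDensity F G' := by
        rw [inducedDensity, Fintype.card_fin, Fintype.card_fin]
        rw [div_le_div_iff₀ (by positivity) hchoosepos]
        calc (P d : ℝ) * r.factorial * ((r ^ d * t).choose r : ℝ)
            = (P d : ℝ) * ((((r ^ d * t).choose r) : ℝ) * (r.factorial : ℝ)) := by ring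
          _ ≤ (P d : ℝ) * (((r ^ d) ^ r : ℕ) * ((t ^ r : ℕ)) : ℝ) := by
              apply mul_le_mul_of_nonneg_left _ (Nat.cast_nonneg _)
              exact_mod_cast hckey
          _ = ((P d * t ^ r : ℕ) : ℝ) * (r : ℝ) ^ (d * r) := by
              push_cast
              rw [← pow_mul]
              ring
          _ ≤ (inducedCount F G' : ℝ) * (r : ℝ) ^ (d * r) := by
              apply mul_le_mul_of_nonneg_right _ (by positivity)
              exact_mod_cast hcount
      exact le_trans hdz.le (hdens.trans (le_ikn F G' hfree))
  refine ⟨main, ?_⟩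
  by_contra hlt
  push_neg at hlt
  have hbdd : BddAbove (Set.range fun k => ik F k) := by
    refine ⟨1, ?_⟩
    rintro y ⟨k, rfl⟩
    exact ik_le_one F k
  obtain ⟨k, -, hk⟩ := main (((⨆ k : ℕ, ik F k) + (r.factorial : ℝ) / ((r : ℝ) ^ r - r)) / 2)
    (by linarith)
  have hle : ik F k ≤ ⨆ k : ℕ, ik F k := le_ciSup hbdd k
  linarith
end

section
/- For all sufficiently large r, the number of graphs on the labeled vertex set {1,…,r} that are robust is at least (1 − 3/r)·2^{r(r−1)/2}. In particular, asymptotically almost surely a uniformly random graph on r vertices is robust. -/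
open Filter Topology

/-- A graph `F` on `r` vertices is robust if there is no partition of its vertex set into
`s` nonempty parts, `2 ≤ s ≤ r-1`, such that between any two distinct parts the bipartite
graph is complete or empty. -/
def Robust {r : ℕ} (F : SimpleGraph (Fin r)) : Prop :=
  ¬ ∃ P : Finpartition (Finset.univ : Finset (Fin r)),
      2 ≤ P.parts.card ∧ P.parts.card ≤ r - 1 ∧
      ∀ X ∈ P.parts, ∀ Y ∈ P.parts, X ≠ Y →
        ((∀ x ∈ X, ∀ y ∈ Y, F.Adj x y) ∨ (∀ x ∈ X, ∀ y ∈ Y, ¬ F.Adj x y))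

/-- `M` is a module of `G`: all vertices of `M` have the same adjacency to each
vertex outside `M`. -/
def IsModule {r : ℕ} (M : Finset (Fin r)) (G : SimpleGraph (Fin r)) : Prop :=
  ∀ x ∈ M, ∀ y ∈ M, ∀ w ∉ M, (G.Adj x w ↔ G.Adj y w)

lemma card_simpleGraph (β : Type*) [Fintype β] [DecidableEq β] :
    Fintype.card (SimpleGraph β) = 2 ^ (Fintype.card β).choose 2 := by
  classical
  have e : SimpleGraph β ≃ ({e : Sym2 β // ¬ e.IsDiag} → Prop) := by
    refine ⟨fun G f => ↑f ∈ G.edgeSet,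
      fun f => SimpleGraph.fromEdgeSet {e | ∃ h : ¬ e.IsDiag, f ⟨e, h⟩}, ?_, ?_⟩
    · intro G
      have hset : {e : Sym2 β | ∃ _h : ¬ e.IsDiag, e ∈ G.edgeSet} = G.edgeSet := by
        ext e
        simp only [Set.mem_setOf_eq]
        exact ⟨fun ⟨_, he⟩ => he, fun he => ⟨G.not_isDiag_of_mem_edgeSet he, he⟩⟩
      show SimpleGraph.fromEdgeSet _ = G
      rw [hset, SimpleGraph.fromEdgeSet_edgeSet]
    · intro f
      funext e
      have hd := e.2
      show (↑e ∈ (SimpleGraph.fromEdgeSet {e' | ∃ h : ¬ e'.IsDiag, f ⟨e', h⟩}).edgeSet) = f e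
      simp only [SimpleGraph.edgeSet_fromEdgeSet, Set.mem_diff, Set.mem_setOf_eq]
      rw [eq_iff_iff]
      constructor
      · rintro ⟨⟨h, hf⟩, -⟩; convert hf
      · intro hf; exact ⟨⟨hd, hf⟩, by simpa using hd⟩
  rw [Fintype.card_congr e, Fintype.card_fun, Fintype.card_prop, Sym2.card_subtype_not_diag]

lemma exists_module {r : ℕ} {G : SimpleGraph (Fin r)} (h : ¬ Robust G) :
    ∃ M : Finset (Fin r), 2 ≤ M.card ∧ M.card ≤ r - 1 ∧ IsModule M G := by
  rw [Robust, not_not] at h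
  obtain ⟨P, h2, hr, hu⟩ := h
  have hsum : ∑ X ∈ P.parts, X.card = r := by
    simpa using P.sum_card_parts
  have hbig : ∃ M ∈ P.parts, 2 ≤ M.card := by
    by_contra hc
    push_neg at hc
    have : ∑ X ∈ P.parts, X.card ≤ ∑ _X ∈ P.parts, 1 := by
      refine Finset.sum_le_sum fun X hX => ?_
      have := hc X hX; omega
    simp only [Finset.sum_const, smul_eq_mul, mul_one] at this
    omega
  obtain ⟨M, hMp, hM2⟩ := hbig
  refine ⟨M, hM2, ?_, ?_⟩
  · obtain ⟨Y, hYp, hYM⟩ : ∃ Y ∈ P.parts, Y ≠ M := by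
      by_contra hc
      push_neg at hc
      have : P.parts ⊆ {M} := fun Z hZ => Finset.mem_singleton.2 (hc Z hZ)
      have := Finset.card_le_card this
      simp at this; omega
    have hdisj : Disjoint M Y := P.disjoint hMp hYp (Ne.symm hYM)
    have hY1 : 1 ≤ Y.card := Finset.card_pos.2 (P.nonempty_of_mem_parts hYp)
    have : M.card + Y.card ≤ r := by
      have hsub : M ∪ Y ⊆ Finset.univ := Finset.subset_univ _
      have := Finset.card_le_card hsub
      rw [Finset.card_union_of_disjoint hdisj] at this
      simpa using this
    omega
  · intro x hx y hy w hw
    obtain ⟨Y, hYp, hwY⟩ := P.exists_mem (Finset.mem_univ w)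
    have hYM : M ≠ Y := by rintro rfl; exact hw hwY
    rcases hu M hMp Y hYp hYM with hall | hnone
    · exact ⟨fun _ => hall y hy w hwY, fun _ => hall x hx w hwY⟩
    · exact ⟨fun hxw => absurd hxw (hnone x hx w hwY),
        fun hyw => absurd hyw (hnone y hy w hwY)⟩

lemma card_isModule_le {r : ℕ} (M : Finset (Fin r)) (hM : M.Nonempty) :
    Nat.card {G : SimpleGraph (Fin r) // IsModule M G} ≤
      2 ^ (M.card.choose 2 + (r - M.card).choose 2 + (r - M.card)) := by
  classical
  obtain ⟨u₀, hu₀⟩ := hM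
  set f : {G : SimpleGraph (Fin r) // IsModule M G} →
      SimpleGraph {x // x ∈ M} × SimpleGraph {x : Fin r // x ∉ M} ×
        ({x : Fin r // x ∉ M} → Prop) :=
    fun G => (G.1.comap Subtype.val, G.1.comap Subtype.val, fun w => G.1.Adj u₀ w.1) with hf
  have hinj : Function.Injective f := by
    rintro ⟨G₁, hG₁⟩ ⟨G₂, hG₂⟩ h
    rw [Prod.ext_iff, Prod.ext_iff] at h
    obtain ⟨h1, h2, h3⟩ := h
    simp only [hf] at h1 h2 h3
    have key : ∀ x y : Fin r, x ∈ M → y ∉ M → (G₁.Adj x y ↔ G₂.Adj x y) := by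
      intro x y hx hy
      have e3 : G₁.Adj u₀ y ↔ G₂.Adj u₀ y := by
        have := congrFun h3 ⟨y, hy⟩
        simpa using this.to_iff
      rw [hG₁ x hx u₀ hu₀ y hy, e3, ← hG₂ x hx u₀ hu₀ y hy]
    refine Subtype.ext (SimpleGraph.ext ?_)
    ext x y
    by_cases hx : x ∈ M <;> by_cases hy : y ∈ M
    · have : (G₁.comap (Subtype.val : {x // x ∈ M} → Fin r)).Adj ⟨x, hx⟩ ⟨y, hy⟩ ↔
          (G₂.comap Subtype.val).Adj ⟨x, hx⟩ ⟨y, hy⟩ := by rw [h1]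
      simpa using this
    · exact key x y hx hy
    · rw [SimpleGraph.adj_comm, key y x hy hx, SimpleGraph.adj_comm]
    · have : (G₁.comap (Subtype.val : {x : Fin r // x ∉ M} → Fin r)).Adj ⟨x, hx⟩ ⟨y, hy⟩ ↔
          (G₂.comap (Subtype.val : {x : Fin r // x ∉ M} → Fin r)).Adj ⟨x, hx⟩ ⟨y, hy⟩ := by
        rw [h2]
      simpa using this
  have hle := Nat.card_le_card_of_injective f hinj
  rw [Nat.card_eq_fintype_card, Nat.card_eq_fintype_card] at hle
  rw [Nat.card_eq_fintype_card]
  refine hle.trans ?_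
  rw [Fintype.card_prod, Fintype.card_prod, card_simpleGraph, card_simpleGraph,
    Fintype.card_fun, Fintype.card_prop]
  have c1 : Fintype.card {x // x ∈ M} = M.card := Fintype.card_coe M
  have c2 : Fintype.card {x : Fin r // x ∉ M} = r - M.card := by
    rw [Fintype.card_subtype_compl, c1, Fintype.card_fin]
  rw [c1, c2, pow_add, pow_add, mul_assoc]

lemma nonrobust_card_le (r : ℕ) :
    Nat.card {G : SimpleGraph (Fin r) // ¬ Robust G} ≤
      ∑ k ∈ Finset.Icc 2 (r-1),
        r.choose k * 2 ^ (k.choose 2 + (r-k).choose 2 + (r-k)) := by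
  classical
  set p : Finset (Fin r) → Prop := fun M => 2 ≤ M.card ∧ M.card ≤ r - 1 with hp
  set g : {G : SimpleGraph (Fin r) // ¬ Robust G} →
      Σ M : {M : Finset (Fin r) // p M}, {G' : SimpleGraph (Fin r) // IsModule M.1 G'} :=
    fun G => ⟨⟨(exists_module G.2).choose, (exists_module G.2).choose_spec.1,
        (exists_module G.2).choose_spec.2.1⟩, ⟨G.1, (exists_module G.2).choose_spec.2.2⟩⟩ with hg
  have hinj : Function.Injective g := by
    intro a b h
    have := congrArg (fun q : (Σ M : {M : Finset (Fin r) // p M},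
        {G' : SimpleGraph (Fin r) // IsModule M.1 G'}) => (q.2.1 : SimpleGraph (Fin r))) h
    exact Subtype.ext this
  have h1 : Nat.card {G : SimpleGraph (Fin r) // ¬ Robust G} ≤
      Nat.card (Σ M : {M : Finset (Fin r) // p M},
        {G' : SimpleGraph (Fin r) // IsModule M.1 G'}) :=
    Nat.card_le_card_of_injective g hinj
  rw [Nat.card_eq_fintype_card (α := Σ _, _), Fintype.card_sigma] at h1
  refine h1.trans ?_
  have h2 : ∀ M : {M : Finset (Fin r) // p M},
      Fintype.card {G' : SimpleGraph (Fin r) // IsModule M.1 G'} ≤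
        2 ^ ((M.1.card).choose 2 + (r - M.1.card).choose 2 + (r - M.1.card)) := by
    intro M
    rw [← Nat.card_eq_fintype_card]
    exact card_isModule_le M.1 (Finset.card_pos.1 (by have := M.2.1; omega))
  refine (Finset.sum_le_sum fun M _ => h2 M).trans ?_
  have h3 : ∑ M : {M : Finset (Fin r) // p M},
      2 ^ ((M.1.card).choose 2 + (r - M.1.card).choose 2 + (r - M.1.card)) =
      ∑ M ∈ Finset.univ.filter p,
        2 ^ ((M.card).choose 2 + (r - M.card).choose 2 + (r - M.card)) :=
    (Finset.sum_subtype (p := p) (Finset.univ.filter p)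
      (fun M => ⟨fun h => (Finset.mem_filter.1 h).2,
        fun h => Finset.mem_filter.2 ⟨Finset.mem_univ M, h⟩⟩)
      (fun M => 2 ^ ((M.card).choose 2 + (r - M.card).choose 2 + (r - M.card)))).symm
  rw [h3]
  have h4 : Finset.univ.filter p =
      (Finset.Icc 2 (r-1)).biUnion (fun k => Finset.powersetCard k Finset.univ) := by
    ext M
    simp only [hp, Finset.mem_filter, Finset.mem_univ, true_and, Finset.mem_biUnion,
      Finset.mem_Icc, Finset.mem_powersetCard, Finset.subset_univ]
    constructor
    · rintro ⟨ha, hb⟩; exact ⟨M.card, ⟨ha, hb⟩, rfl⟩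
    · rintro ⟨k, hk, rfl⟩; exact hk
  rw [h4, Finset.sum_biUnion]
  · refine Finset.sum_le_sum fun k hk => ?_
    have : ∀ M ∈ Finset.powersetCard k (Finset.univ : Finset (Fin r)),
        2 ^ ((M.card).choose 2 + (r - M.card).choose 2 + (r - M.card)) =
        2 ^ (k.choose 2 + (r-k).choose 2 + (r-k)) := by
      intro M hM
      rw [(Finset.mem_powersetCard.1 hM).2]
    rw [Finset.sum_congr rfl this, Finset.sum_const, Finset.card_powersetCard, smul_eq_mul]
    simp
  · intro a _ b _ hab
    simp only [Function.onFun]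
    rw [Finset.disjoint_left]
    intro M hMa hMb
    exact hab ((Finset.mem_powersetCard.1 hMa).2.symm.trans (Finset.mem_powersetCard.1 hMb).2)

lemma choose_two_add (k m : ℕ) : (k + m).choose 2 = k.choose 2 + m.choose 2 + k * m := by
  induction m with
  | zero => simp
  | succ m ih =>
    have : k + (m + 1) = (k + m) + 1 := rfl
    rw [this, Nat.choose_succ_succ, Nat.choose_one_right, ih, Nat.choose_succ_succ,
      Nat.choose_one_right, Nat.mul_succ]
    ring

lemma sq_le_sq_nat {a b : ℕ} (h : a ^ 2 ≤ b ^ 2) : a ≤ b :=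
  (Nat.pow_le_pow_iff_left two_ne_zero).1 h

lemma key_num {r k : ℕ} (h16 : r ^ 16 ≤ 2 ^ r) (hr : 3 ≤ r) (hk2 : 2 ≤ k) (hkr : k ≤ r - 1) :
    r ^ 3 * (r.choose k * 2 ^ (k.choose 2 + (r - k).choose 2 + (r - k))) ≤ 2 ^ (r.choose 2) := by
  have hkr' : k + 1 ≤ r := by omega
  have hid : r.choose 2 = (k.choose 2 + (r - k).choose 2 + (r - k)) + (k - 1) * (r - k) := by
    have h1 : r = k + (r - k) := by omega
    have h2 := choose_two_add k (r - k)
    have h3 : k * (r - k) = (r - k) + (k - 1) * (r - k) := by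
      obtain ⟨k', rfl⟩ : ∃ k', k = k' + 1 := ⟨k - 1, by omega⟩
      have h4 : k' + 1 - 1 = k' := rfl
      rw [h4, Nat.succ_mul, Nat.add_comm]
    calc r.choose 2 = (k + (r - k)).choose 2 := by rw [← h1]
      _ = _ := by rw [h2, h3]; ring
  have claim : r ^ 3 * r.choose k ≤ 2 ^ ((k - 1) * (r - k)) := by
    rcases lt_or_ge r (2 * k) with hbig | hsmall
    · set m := r - k with hm
      have hm1 : 1 ≤ m := by omega
      have hmr : 2 * m ≤ r - 1 := by omega
      have hch : r.choose k ≤ r ^ m := by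
        rw [← Nat.choose_symm (by omega : k ≤ r)]
        exact Nat.choose_le_pow _ _
      have hr4 : r ^ 4 ≤ 2 ^ (k - 1) := by
        apply sq_le_sq_nat
        have e1 : (r ^ 4) ^ 2 = r ^ 8 := by ring
        have e2 : 2 * r ^ 8 ≤ r ^ 16 := by
          calc 2 * r ^ 8 ≤ r ^ 8 * r ^ 8 :=
                Nat.mul_le_mul_right _ (by calc 2 ≤ r := by omega
                                          _ ≤ r ^ 8 := Nat.le_self_pow (by norm_num) r)
            _ = r ^ 16 := by ring
        have e3 : r ^ 8 ≤ 2 ^ (r - 1) := by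
          have : 2 * r ^ 8 ≤ 2 * 2 ^ (r - 1) := by
            calc 2 * r ^ 8 ≤ 2 ^ r := e2.trans h16
              _ = 2 * 2 ^ (r - 1) := by
                  rw [← pow_succ']
                  congr 1
                  omega
          exact Nat.le_of_mul_le_mul_left this (by norm_num)
        calc (r ^ 4) ^ 2 = r ^ 8 := e1
          _ ≤ 2 ^ (r - 1) := e3
          _ ≤ 2 ^ (2 * (k - 1)) := Nat.pow_le_pow_right (by norm_num) (by omega)
          _ = (2 ^ (k - 1)) ^ 2 := by rw [← pow_mul, mul_comm]
      calc r ^ 3 * r.choose k ≤ r ^ 3 * r ^ m := Nat.mul_le_mul_left _ hch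
        _ = r ^ (m + 3) := by rw [← pow_add]; ring_nf
        _ ≤ r ^ (4 * m) := Nat.pow_le_pow_right (by omega) (by omega)
        _ = (r ^ 4) ^ m := by rw [pow_mul]
        _ ≤ (2 ^ (k - 1)) ^ m := Nat.pow_le_pow_left hr4 m
        _ = 2 ^ ((k - 1) * m) := by rw [← pow_mul]
    · rcases eq_or_lt_of_le hk2 with hk2' | hk3
      · subst hk2'
        have hch : r.choose 2 ≤ r ^ 2 := Nat.choose_le_pow _ _
        have h42 : (4:ℕ) ≤ r ^ 2 := by
          calc (4:ℕ) = 2 * 2 := rfl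
            _ ≤ r * r := Nat.mul_le_mul (by omega) (by omega)
            _ = r ^ 2 := (sq r).symm
        have h5 : 4 * r ^ 5 ≤ 4 * 2 ^ (r - 2) := by
          calc 4 * r ^ 5 ≤ r ^ 2 * r ^ 5 := Nat.mul_le_mul_right _ h42
            _ = r ^ 7 := by ring
            _ ≤ r ^ 16 := Nat.pow_le_pow_right (by omega) (by norm_num)
            _ ≤ 2 ^ r := h16
            _ = 4 * 2 ^ (r - 2) := by
                rw [show (4:ℕ) = 2 ^ 2 from rfl, ← pow_add]
                congr 1
                omega
        have h6 : r ^ 5 ≤ 2 ^ (r - 2) := Nat.le_of_mul_le_mul_left h5 (by norm_num)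
        calc r ^ 3 * r.choose 2 ≤ r ^ 3 * r ^ 2 := Nat.mul_le_mul_left _ hch
          _ = r ^ 5 := by ring
          _ ≤ 2 ^ (r - 2) := h6
          _ = 2 ^ ((2 - 1) * (r - 2)) := by rw [Nat.one_mul]
      · have hch : r.choose k ≤ r ^ k := Nat.choose_le_pow _ _
        have hr4 : r ^ 4 ≤ 2 ^ (r - k) := by
          apply sq_le_sq_nat
          calc (r ^ 4) ^ 2 = r ^ 8 := by ring
            _ ≤ r ^ 16 := Nat.pow_le_pow_right (by omega) (by norm_num)
            _ ≤ 2 ^ r := h16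
            _ ≤ 2 ^ (2 * (r - k)) := Nat.pow_le_pow_right (by norm_num) (by omega)
            _ = (2 ^ (r - k)) ^ 2 := by rw [← pow_mul, mul_comm]
        calc r ^ 3 * r.choose k ≤ r ^ 3 * r ^ k := Nat.mul_le_mul_left _ hch
          _ = r ^ (k + 3) := by rw [← pow_add]; ring_nf
          _ ≤ r ^ (4 * (k - 1)) := Nat.pow_le_pow_right (by omega) (by omega)
          _ = (r ^ 4) ^ (k - 1) := by rw [pow_mul]
          _ ≤ (2 ^ (r - k)) ^ (k - 1) := Nat.pow_le_pow_left hr4 _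
          _ = 2 ^ ((k - 1) * (r - k)) := by rw [← pow_mul, mul_comm (r - k)]
  calc r ^ 3 * (r.choose k * 2 ^ (k.choose 2 + (r - k).choose 2 + (r - k)))
      = (r ^ 3 * r.choose k) * 2 ^ (k.choose 2 + (r - k).choose 2 + (r - k)) := by ring
    _ ≤ 2 ^ ((k - 1) * (r - k)) * 2 ^ (k.choose 2 + (r - k).choose 2 + (r - k)) :=
        Nat.mul_le_mul_right _ claim
    _ = 2 ^ (r.choose 2) := by rw [← pow_add, hid]; ring_nf

lemma total_card (r : ℕ) :
    Nat.card {G : SimpleGraph (Fin r) // Robust G} +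
      Nat.card {G : SimpleGraph (Fin r) // ¬ Robust G} = 2 ^ (r * (r - 1) / 2) := by
  classical
  rw [Nat.card_eq_fintype_card, Nat.card_eq_fintype_card, Fintype.card_subtype,
    Fintype.card_subtype, Finset.card_filter_add_card_filter_not, Finset.card_univ,
    card_simpleGraph, Fintype.card_fin, Nat.choose_two_right]

lemma ev16 : ∀ᶠ r : ℕ in atTop, r ^ 16 ≤ 2 ^ r := by
  have h := tendsto_pow_const_div_const_pow_of_one_lt 16 (by norm_num : (1:ℝ) < 2)
  filter_upwards [h.eventually_lt_const (by norm_num : (0:ℝ) < 1)] with n hn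
  have h2 : (0:ℝ) < 2 ^ n := by positivity
  rw [div_lt_one h2] at hn
  exact_mod_cast hn.le

lemma main_bound : ∃ r0 : ℕ, 3 ≤ r0 ∧ ∀ r : ℕ, r0 ≤ r →
    (r:ℕ) ^ 2 * Nat.card {G : SimpleGraph (Fin r) // ¬ Robust G} ≤ 2 ^ (r * (r - 1) / 2) := by
  obtain ⟨r1, hr1⟩ := eventually_atTop.1 ev16
  refine ⟨max r1 3, le_max_right _ _, fun r hr => ?_⟩
  have h16 : r ^ 16 ≤ 2 ^ r := hr1 r (le_trans (le_max_left _ _) hr)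
  have hr3 : 3 ≤ r := le_trans (le_max_right _ _) hr
  have step : r ^ 3 * Nat.card {G : SimpleGraph (Fin r) // ¬ Robust G} ≤
      r * 2 ^ (r.choose 2) := by
    calc r ^ 3 * Nat.card {G : SimpleGraph (Fin r) // ¬ Robust G}
        ≤ r ^ 3 * ∑ k ∈ Finset.Icc 2 (r-1),
            r.choose k * 2 ^ (k.choose 2 + (r-k).choose 2 + (r-k)) :=
          Nat.mul_le_mul_left _ (nonrobust_card_le r)
      _ = ∑ k ∈ Finset.Icc 2 (r-1),
            r ^ 3 * (r.choose k * 2 ^ (k.choose 2 + (r-k).choose 2 + (r-k))) :=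
          Finset.mul_sum _ _ _
      _ ≤ ∑ _k ∈ Finset.Icc 2 (r-1), 2 ^ (r.choose 2) := by
          refine Finset.sum_le_sum fun k hk => ?_
          obtain ⟨hk2, hkr⟩ := Finset.mem_Icc.1 hk
          exact key_num h16 hr3 hk2 hkr
      _ = (Finset.Icc 2 (r-1)).card * 2 ^ (r.choose 2) := by
          rw [Finset.sum_const, smul_eq_mul]
      _ ≤ r * 2 ^ (r.choose 2) := by
          refine Nat.mul_le_mul_right _ ?_
          rw [Nat.card_Icc]
          omega
  have step2 : r * (r ^ 2 * Nat.card {G : SimpleGraph (Fin r) // ¬ Robust G}) ≤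
      r * 2 ^ (r.choose 2) := by
    calc r * (r ^ 2 * Nat.card {G : SimpleGraph (Fin r) // ¬ Robust G})
        = r ^ 3 * Nat.card {G : SimpleGraph (Fin r) // ¬ Robust G} := by ring
      _ ≤ r * 2 ^ (r.choose 2) := step
  have := Nat.le_of_mul_le_mul_left step2 (by omega)
  rwa [Nat.choose_two_right] at this

open Filter Topology in
/-- For all sufficiently large `r`, at least a `(1 - 3/r)`-fraction of the `2^(r(r-1)/2)`
labeled graphs on `r` vertices are robust; in particular a.a.s. a uniformly random graph
on `r` vertices is robust. -/
theorem stmt4 :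
    (∃ r0 : ℕ, ∀ r : ℕ, r0 ≤ r →
      (1 - 3 / (r : ℝ)) * 2 ^ (r * (r - 1) / 2) ≤
        (Nat.card {G : SimpleGraph (Fin r) // Robust G} : ℝ)) ∧
    Tendsto (fun r : ℕ =>
      (Nat.card {G : SimpleGraph (Fin r) // Robust G} : ℝ) / 2 ^ (r * (r - 1) / 2))
      atTop (𝓝 1) := by
  obtain ⟨r0, hr03, hmain⟩ := main_bound
  have part1 : ∀ r : ℕ, r0 ≤ r →
      (1 - 3 / (r : ℝ)) * 2 ^ (r * (r - 1) / 2) ≤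
        (Nat.card {G : SimpleGraph (Fin r) // Robust G} : ℝ) := by
    intro r hr
    have hr3 : 3 ≤ r := le_trans hr03 hr
    set A := Nat.card {G : SimpleGraph (Fin r) // Robust G} with hA
    set B := Nat.card {G : SimpleGraph (Fin r) // ¬ Robust G} with hB
    have htot : A + B = 2 ^ (r * (r - 1) / 2) := total_card r
    have hmb : r ^ 2 * B ≤ 2 ^ (r * (r - 1) / 2) := hmain r hr
    set T : ℕ := 2 ^ (r * (r - 1) / 2) with hT
    have hrR : (3:ℝ) ≤ (r:ℝ) := by exact_mod_cast hr3
    have hrpos : (0:ℝ) < (r:ℝ) := by linarith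
    have hTpos : (0:ℝ) < (T:ℝ) := by positivity
    have hAR : (A:ℝ) = (T:ℝ) - (B:ℝ) := by
      have : (A:ℝ) + (B:ℝ) = (T:ℝ) := by exact_mod_cast htot
      linarith
    have hmbR : (r:ℝ) ^ 2 * (B:ℝ) ≤ (T:ℝ) := by exact_mod_cast hmb
    have hBnn : (0:ℝ) ≤ (B:ℝ) := by positivity
    have hkey : (r:ℝ) * (B:ℝ) ≤ 3 * (T:ℝ) := by nlinarith
    have hBle : (B:ℝ) ≤ 3 / (r:ℝ) * (T:ℝ) := by
      rw [div_mul_eq_mul_div, le_div_iff₀ hrpos]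
      nlinarith
    have hTR : ((2:ℝ)) ^ (r * (r - 1) / 2) = (T:ℝ) := by
      rw [hT]; push_cast; ring
    rw [hTR, hAR]
    nlinarith
  refine ⟨⟨r0, part1⟩, ?_⟩
  have hupper : ∀ r : ℕ,
      (Nat.card {G : SimpleGraph (Fin r) // Robust G} : ℝ) / 2 ^ (r * (r - 1) / 2) ≤ 1 := by
    intro r
    have hAT : Nat.card {G : SimpleGraph (Fin r) // Robust G} ≤ 2 ^ (r * (r - 1) / 2) := by
      have := total_card r
      omega
    rw [div_le_one (by positivity)]
    exact_mod_cast hAT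
  have hlower : ∀ᶠ r : ℕ in atTop, (1 - 3 / (r : ℝ)) ≤
      (Nat.card {G : SimpleGraph (Fin r) // Robust G} : ℝ) / 2 ^ (r * (r - 1) / 2) := by
    rw [eventually_atTop]
    refine ⟨r0, fun r hr => ?_⟩
    rw [le_div_iff₀ (by positivity)]
    exact part1 r hr
  have hlow_tendsto : Tendsto (fun r : ℕ => 1 - 3 / (r : ℝ)) atTop (𝓝 1) := by
    have h3 := tendsto_const_div_atTop_nhds_zero_nat (3:ℝ)
    have h1 : Tendsto (fun _ : ℕ => (1:ℝ)) atTop (𝓝 1) := tendsto_const_nhds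
    simpa using h1.sub h3
  exact tendsto_of_tendsto_of_tendsto_of_le_of_le' hlow_tendsto tendsto_const_nhds
    hlower (Filter.Eventually.of_forall hupper)
end

section
/- Let F be a symmetrizable family of finite simple graphs, all on r vertices, let k ≥ 3 and n ≥ 1. Then there exists a complete multipartite graph G on n vertices with at most k−1 parts (hence K_k-free) such that P(F,G) ≥ P(F,G') for every K_k-free graph G' on n vertices; that is, the maximum of P(F,·) over K_k-free n-vertex graphs is attained by a complete multipartite graph with fewer than k parts. -/
open Filter Topology

/-- The number of `r`-element subsets of the vertex set of `G` that induce a subgraph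
isomorphic to some member of the family `𝓕`. -/
noncomputable def famCount {r : ℕ} {β : Type*} [Fintype β]
    (𝓕 : Set (SimpleGraph (Fin r))) (G : SimpleGraph β) : ℕ :=
  Set.ncard {s : Finset β | s.card = r ∧
    ∃ F ∈ 𝓕, Nonempty (F ≃g SimpleGraph.induce (↑s : Set β) G)}

/-- `G` is `H`-free: `G` contains no subgraph isomorphic to `H` (not necessarily
induced), i.e. there is no injective graph homomorphism from `H` to `G`. -/
def HFree {γ β : Type*} (H : SimpleGraph γ) (G : SimpleGraph β) : Prop :=
  ¬ ∃ f : γ ↪ β, ∀ a b, H.Adj a b → G.Adj (f a) (f b)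

/-- `i_H(𝓕,n)`: the maximum of `p(𝓕,G)` over `H`-free graphs `G` on `n` vertices. -/
noncomputable def iHn {γ : Type*} (H : SimpleGraph γ) {r : ℕ}
    (𝓕 : Set (SimpleGraph (Fin r))) (n : ℕ) : ℝ :=
  sSup {x : ℝ | ∃ G : SimpleGraph (Fin n), HFree H G ∧
    x = (famCount 𝓕 G : ℝ) / (n.choose r)}

/-- `i_H(𝓕) = lim_{n → ∞} i_H(𝓕,n)`. -/
noncomputable def iH {γ : Type*} (H : SimpleGraph γ) {r : ℕ}
    (𝓕 : Set (SimpleGraph (Fin r))) : ℝ :=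
  limUnder atTop (fun n => iHn H 𝓕 n)

/-- The Zykov symmetrization of `F` at the (nonadjacent) pair `x, y`: the neighborhood of
`x` is replaced by that of `y`, so that `x` and `y` become nonadjacent twins. -/
def zykov {α : Type*} (F : SimpleGraph α) (x y : α) : SimpleGraph α where
  Adj a b := a ≠ b ∧
    ((a = x ∧ F.Adj y b) ∨ (b = x ∧ F.Adj a y) ∨ (a ≠ x ∧ b ≠ x ∧ F.Adj a b))
  symm := ⟨by
    rintro a b ⟨hab, h⟩
    refine ⟨hab.symm, ?_⟩
    rcases h with ⟨h1, h2⟩ | ⟨h1, h2⟩ | ⟨h1, h2, h3⟩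
    · exact Or.inr (Or.inl ⟨h1, h2.symm⟩)
    · exact Or.inl ⟨h1, h2.symm⟩
    · exact Or.inr (Or.inr ⟨h2, h1, h3.symm⟩)⟩
  loopless := ⟨fun a h => h.1 rfl⟩

/-- A family of graphs (all of the same order) is symmetrizable if it is closed under
Zykov symmetrization, up to isomorphism. -/
def Symmetrizable {r : ℕ} (𝓕 : Set (SimpleGraph (Fin r))) : Prop :=
  ∀ F ∈ 𝓕, ∀ x y : Fin r, x ≠ y → ¬ F.Adj x y →
    ∃ F' ∈ 𝓕, Nonempty (zykov F x y ≃g F')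

section ZAdj
variable {β : Type*} {G : SimpleGraph β} {x y a b : β}

lemma zykov_adj_iff :
    (zykov G x y).Adj a b ↔ a ≠ b ∧
      ((a = x ∧ G.Adj y b) ∨ (b = x ∧ G.Adj a y) ∨ (a ≠ x ∧ b ≠ x ∧ G.Adj a b)) := Iff.rfl

lemma zykov_adj_of_ne (ha : a ≠ x) (hb : b ≠ x) :
    (zykov G x y).Adj a b ↔ G.Adj a b := by
  constructor
  · rintro ⟨hab, (⟨h, _⟩ | ⟨h, _⟩ | ⟨_, _, h⟩)⟩
    · exact absurd h ha
    · exact absurd h hb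
    · exact h
  · intro h; exact ⟨h.ne, Or.inr (Or.inr ⟨ha, hb, h⟩)⟩

lemma zykov_adj_left (hxy : ¬ G.Adj x y) :
    (zykov G x y).Adj x b ↔ G.Adj y b := by
  constructor
  · rintro ⟨hab, (⟨_, h⟩ | ⟨h1, h2⟩ | ⟨h, _, _⟩)⟩
    · exact h
    · exact absurd h2 hxy
    · exact absurd rfl h
  · intro h
    refine ⟨?_, Or.inl ⟨rfl, h⟩⟩
    rintro rfl; exact hxy h.symm

lemma not_zykov_adj_self : ¬ (zykov G x y).Adj x y := by
  rintro ⟨hab, (⟨_, h⟩ | ⟨h1, _⟩ | ⟨h, _, _⟩)⟩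
  · exact G.loopless.irrefl y h
  · exact hab h1.symm
  · exact h rfl

end ZAdj

section ZInduce
open SimpleGraph
variable {β : Type*} [DecidableEq β] {G : SimpleGraph β} {x y : β}

omit [DecidableEq β] in
lemma induce_zykov_not_mem {s : Finset β} (hx : x ∉ s) :
    SimpleGraph.induce (↑s : Set β) (zykov G x y) = SimpleGraph.induce (↑s : Set β) G := by
  ext ⟨a, ha⟩ ⟨b, hb⟩
  exact zykov_adj_of_ne (ne_of_mem_of_not_mem ha hx) (ne_of_mem_of_not_mem hb hx)

omit [DecidableEq β] in
lemma induce_zykov_mem {s : Finset β} (hx : x ∈ s) (hy : y ∈ s) :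
    SimpleGraph.induce (↑s : Set β) (zykov G x y)
      = zykov (SimpleGraph.induce (↑s : Set β) G) ⟨x, hx⟩ ⟨y, hy⟩ := by
  ext ⟨a, ha⟩ ⟨b, hb⟩
  show (zykov G x y).Adj a b ↔ _
  rw [zykov_adj_iff, zykov_adj_iff]
  simp only [ne_eq, Subtype.mk.injEq, comap_adj, Function.Embedding.coe_subtype]

def zykovIso {α α' : Type*} {F : SimpleGraph α} {H : SimpleGraph α'} (e : F ≃g H)
    (a b : α) : zykov F a b ≃g zykov H (e a) (e b) := by
  refine ⟨e.toEquiv, ?_⟩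
  intro u v
  show (zykov H (e a) (e b)).Adj (e u) (e v) ↔ (zykov F a b).Adj u v
  rw [zykov_adj_iff, zykov_adj_iff]
  simp only [ne_eq, EmbeddingLike.apply_eq_iff_eq, e.map_rel_iff]

def induceZykovIsoSwap (hxy : ¬ G.Adj x y) {s : Finset β}
    (hx : x ∈ s) (hy : y ∉ s) :
    SimpleGraph.induce (↑s : Set β) (zykov G x y)
      ≃g SimpleGraph.induce (↑(insert y (s.erase x)) : Set β) G := by
  have hxy' : x ≠ y := fun h => hy (h ▸ hx)
  have hmem : ∀ a, a ∈ (↑s : Set β) ↔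
      Equiv.swap x y a ∈ (↑(insert y (s.erase x)) : Set β) := by
    intro a
    constructor
    · intro has
      rcases eq_or_ne a x with h | h
      · rw [h, Equiv.swap_apply_left]
        exact Finset.mem_coe.2 (Finset.mem_insert_self _ _)
      · have hay : a ≠ y := ne_of_mem_of_not_mem (Finset.mem_coe.1 has) hy
        rw [Equiv.swap_apply_of_ne_of_ne h hay]
        exact Finset.mem_coe.2
          (Finset.mem_insert_of_mem (Finset.mem_erase.2 ⟨h, Finset.mem_coe.1 has⟩))
    · intro hat
      by_contra has
      rcases eq_or_ne a x with h | h
      · exact has (h ▸ (Finset.mem_coe.2 hx))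
      · rcases eq_or_ne a y with h2 | h2
        · rw [h2, Equiv.swap_apply_right] at hat
          simp only [Finset.mem_coe, Finset.mem_insert, Finset.mem_erase] at hat
          rcases hat with h3 | ⟨h3, _⟩
          · exact hxy' h3
          · exact h3 rfl
        · rw [Equiv.swap_apply_of_ne_of_ne h h2] at hat
          simp only [Finset.mem_coe, Finset.mem_insert, Finset.mem_erase] at hat
          rcases hat with h3 | ⟨_, h3⟩
          · exact h2 h3
          · exact has (Finset.mem_coe.2 h3)
  refine ⟨Equiv.subtypeEquiv (Equiv.swap x y) hmem, ?_⟩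
  rintro ⟨a, ha⟩ ⟨b, hb⟩
  show G.Adj (Equiv.swap x y a) (Equiv.swap x y b) ↔ (zykov G x y).Adj a b
  have hay : a ≠ y := ne_of_mem_of_not_mem (Finset.mem_coe.1 ha) hy
  have hby : b ≠ y := ne_of_mem_of_not_mem (Finset.mem_coe.1 hb) hy
  rcases eq_or_ne a x with hax | hax
  · rcases eq_or_ne b x with hbx | hbx
    · rw [hax, hbx, Equiv.swap_apply_left]
      constructor
      · intro h; exact absurd h (G.loopless.irrefl y)
      · intro h; exact absurd h ((zykov G x y).loopless.irrefl x)
    · rw [hax, Equiv.swap_apply_left, Equiv.swap_apply_of_ne_of_ne hbx hby]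
      exact (zykov_adj_left hxy).symm
  · rcases eq_or_ne b x with hbx | hbx
    · rw [hbx, Equiv.swap_apply_left, Equiv.swap_apply_of_ne_of_ne hax hay]
      constructor
      · intro h; exact ((zykov_adj_left hxy).2 h.symm).symm
      · intro h; exact ((zykov_adj_left hxy).1 h.symm).symm
    · rw [Equiv.swap_apply_of_ne_of_ne hax hay, Equiv.swap_apply_of_ne_of_ne hbx hby]
      exact (zykov_adj_of_ne hax hbx).symm

lemma zykov_cliqueFree {k : ℕ} (hne : x ≠ y) (hxy : ¬ G.Adj x y)
    (hG : G.CliqueFree k) : (zykov G x y).CliqueFree k := by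
  intro t ht
  rw [SimpleGraph.isNClique_iff] at ht
  obtain ⟨htc, htcard⟩ := ht
  by_cases hx : x ∈ t
  · have hyt : y ∉ t := by
      intro hyt
      exact not_zykov_adj_self (htc (Finset.mem_coe.2 hx) (Finset.mem_coe.2 hyt) hne)
    have hcard1 : 1 ≤ t.card := Finset.card_pos.2 ⟨x, hx⟩
    refine hG (insert y (t.erase x)) ⟨?_, ?_⟩
    · intro a ha b hb hab
      simp only [Finset.coe_insert, Set.mem_insert_iff, Finset.mem_coe,
        Finset.mem_erase] at ha hb
      rcases ha with ha1 | ⟨hax, hat⟩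
      · rcases hb with hb1 | ⟨hbx, hbt⟩
        · exact absurd (ha1.trans hb1.symm) hab
        · have h2 : (zykov G x y).Adj x b :=
            htc (Finset.mem_coe.2 hx) (Finset.mem_coe.2 hbt) (Ne.symm hbx)
          rw [ha1]
          exact (zykov_adj_left hxy).1 h2
      · rcases hb with hb1 | ⟨hbx, hbt⟩
        · have h2 : (zykov G x y).Adj x a :=
            htc (Finset.mem_coe.2 hx) (Finset.mem_coe.2 hat) (Ne.symm hax)
          rw [hb1]
          exact ((zykov_adj_left hxy).1 h2).symm
        · exact (zykov_adj_of_ne hax hbx).1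
            (htc (Finset.mem_coe.2 hat) (Finset.mem_coe.2 hbt) hab)
    · rw [Finset.card_insert_of_notMem (fun h => hyt (Finset.mem_of_mem_erase h)),
        Finset.card_erase_of_mem hx, htcard]
      omega
  · refine hG t ⟨?_, htcard⟩
    intro a ha b hb hab
    exact (zykov_adj_of_ne (ne_of_mem_of_not_mem (Finset.mem_coe.1 ha) hx)
      (ne_of_mem_of_not_mem (Finset.mem_coe.1 hb) hx)).1 (htc ha hb hab)

end ZInduce

section Counting
open SimpleGraph
variable {r : ℕ} {β : Type*} [Fintype β] [DecidableEq β] (𝓕 : Set (SimpleGraph (Fin r)))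

def goodSet (G : SimpleGraph β) : Set (Finset β) :=
  {s : Finset β | s.card = r ∧ ∃ F ∈ 𝓕, Nonempty (F ≃g SimpleGraph.induce (↑s : Set β) G)}

lemma famCount_eq_goodSet (G : SimpleGraph β) : famCount 𝓕 G = (goodSet 𝓕 G).ncard := rfl

lemma goodSet_split (G : SimpleGraph β) (x y : β) :
    (goodSet 𝓕 G).ncard = (goodSet 𝓕 G ∩ {s | x ∉ s}).ncard
      + (goodSet 𝓕 G ∩ {s | x ∈ s ∧ y ∉ s}).ncard
      + (goodSet 𝓕 G ∩ {s | x ∈ s ∧ y ∈ s}).ncard := by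
  have h1 : goodSet 𝓕 G = (goodSet 𝓕 G ∩ {s | x ∉ s}) ∪
      ((goodSet 𝓕 G ∩ {s | x ∈ s ∧ y ∉ s}) ∪ (goodSet 𝓕 G ∩ {s | x ∈ s ∧ y ∈ s})) := by
    ext s
    simp only [Set.mem_inter_iff, Set.mem_union, Set.mem_setOf_eq]
    constructor
    · intro h
      by_cases hx : x ∈ s
      · by_cases hy : y ∈ s
        · exact Or.inr (Or.inr ⟨h, hx, hy⟩)
        · exact Or.inr (Or.inl ⟨h, hx, hy⟩)
      · exact Or.inl ⟨h, hx⟩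
    · rintro (⟨h, _⟩ | ⟨h, _⟩ | ⟨h, _⟩) <;> exact h
  have d2 : Disjoint (goodSet 𝓕 G ∩ {s | x ∈ s ∧ y ∉ s})
      (goodSet 𝓕 G ∩ {s | x ∈ s ∧ y ∈ s}) := by
    rw [Set.disjoint_left]
    rintro s ⟨_, _, hy⟩ ⟨_, _, hy'⟩
    exact hy hy'
  have d1 : Disjoint (goodSet 𝓕 G ∩ {s | x ∉ s})
      ((goodSet 𝓕 G ∩ {s | x ∈ s ∧ y ∉ s}) ∪ (goodSet 𝓕 G ∩ {s | x ∈ s ∧ y ∈ s})) := by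
    rw [Set.disjoint_left]
    rintro s ⟨_, hx⟩ (⟨_, hx', _⟩ | ⟨_, hx', _⟩) <;> exact hx hx'
  conv_lhs => rw [h1]
  rw [Set.ncard_union_eq d1, Set.ncard_union_eq d2, add_assoc]

variable {G : SimpleGraph β} {x y : β}

lemma goodSet_zykov_notmem :
    goodSet 𝓕 (zykov G x y) ∩ {s | x ∉ s} = goodSet 𝓕 G ∩ {s | x ∉ s} := by
  ext s
  simp only [Set.mem_inter_iff, Set.mem_setOf_eq, goodSet]
  constructor
  · rintro ⟨⟨hc, F, hF, hiso⟩, hxs⟩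
    refine ⟨⟨hc, F, hF, ?_⟩, hxs⟩
    rwa [induce_zykov_not_mem hxs] at hiso
  · rintro ⟨⟨hc, F, hF, hiso⟩, hxs⟩
    refine ⟨⟨hc, F, hF, ?_⟩, hxs⟩
    rwa [induce_zykov_not_mem (G := G) (y := y) hxs]

lemma goodSet_zykov_swap (hxy : ¬ G.Adj x y) (hne : x ≠ y) :
    (goodSet 𝓕 (zykov G x y) ∩ {s | x ∈ s ∧ y ∉ s}).ncard
      = (goodSet 𝓕 G ∩ {s | y ∈ s ∧ x ∉ s}).ncard := by
  set σ : Finset β → Finset β := fun s => insert y (s.erase x) with hσ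
  have rec1 : ∀ u : Finset β, x ∈ u → y ∉ u → insert x ((σ u).erase y) = u := by
    intro u hxu hyu
    rw [hσ]
    simp only
    rw [Finset.erase_insert (fun h => hyu (Finset.mem_of_mem_erase h))]
    exact Finset.insert_erase hxu
  have hσinj : Set.InjOn σ (goodSet 𝓕 (zykov G x y) ∩ {s | x ∈ s ∧ y ∉ s}) := by
    rintro s ⟨_, hxs, hys⟩ t ⟨_, hxt, hyt⟩ h
    calc s = insert x ((σ s).erase y) := (rec1 s hxs hys).symm
      _ = insert x ((σ t).erase y) := by rw [h]
      _ = t := rec1 t hxt hyt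
  have himg : σ '' (goodSet 𝓕 (zykov G x y) ∩ {s | x ∈ s ∧ y ∉ s})
      = goodSet 𝓕 G ∩ {s | y ∈ s ∧ x ∉ s} := by
    ext t
    constructor
    · rintro ⟨s, ⟨⟨hc, F, hF, ⟨e⟩⟩, hxs, hys⟩, rfl⟩
      have hc1 : 1 ≤ s.card := Finset.card_pos.2 ⟨x, hxs⟩
      have hcardσ : (σ s).card = s.card := by
        rw [hσ]
        simp only
        rw [Finset.card_insert_of_notMem (fun h => hys (Finset.mem_of_mem_erase h)),
          Finset.card_erase_of_mem hxs]
        omega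
      refine ⟨⟨hcardσ.trans hc, F, hF, ⟨e.trans (induceZykovIsoSwap hxy hxs hys)⟩⟩, ?_, ?_⟩
      · exact Finset.mem_insert_self _ _
      · simp only [hσ, Finset.mem_insert]
        rintro (h | h)
        · exact hne h
        · exact Finset.notMem_erase x _ h
    · rintro ⟨⟨hc, F, hF, ⟨e⟩⟩, hyt, hxt⟩
      have hc1 : 1 ≤ t.card := Finset.card_pos.2 ⟨y, hyt⟩
      refine ⟨insert x (t.erase y), ⟨⟨?_, F, hF, ?_⟩, ?_, ?_⟩, ?_⟩
      case _ =>
        rw [Finset.card_insert_of_notMem (fun h => hxt (Finset.mem_of_mem_erase h)),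
          Finset.card_erase_of_mem hyt]
        omega
      case _ =>
        have hxs' : x ∈ insert x (t.erase y) := Finset.mem_insert_self _ _
        have hys' : y ∉ insert x (t.erase y) := by
          simp only [Finset.mem_insert]
          rintro (h | h)
          · exact hne h.symm
          · exact Finset.notMem_erase y _ h
        have E := induceZykovIsoSwap (s := insert x (t.erase y)) hxy hxs' hys'
        have hσeq : insert y ((insert x (t.erase y)).erase x) = t := by
          rw [Finset.erase_insert (fun h => hxt (Finset.mem_of_mem_erase h))]
          exact Finset.insert_erase hyt
        rw [hσeq] at E
        exact ⟨e.trans E.symm⟩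
      case _ => exact Finset.mem_insert_self _ _
      case _ =>
        simp only [Finset.mem_insert]
        rintro (h | h)
        · exact hne h.symm
        · exact Finset.notMem_erase y _ h
      case _ =>
        rw [hσ]
        simp only
        rw [Finset.erase_insert (fun h => hxt (Finset.mem_of_mem_erase h))]
        exact Finset.insert_erase hyt
  rw [← himg, Set.ncard_image_of_injOn hσinj]
end Counting

section Key
open SimpleGraph
variable {r : ℕ} {β : Type*} [Fintype β] [DecidableEq β] {𝓕 : Set (SimpleGraph (Fin r))}
  {G : SimpleGraph β} {x y : β}

omit [Fintype β] [DecidableEq β] in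
lemma goodSet_zykov_mem (hsym : Symmetrizable 𝓕) (hxy : ¬ G.Adj x y) (hne : x ≠ y) :
    goodSet 𝓕 G ∩ {s | x ∈ s ∧ y ∈ s} ⊆ goodSet 𝓕 (zykov G x y) ∩ {s | x ∈ s ∧ y ∈ s} := by
  rintro s ⟨⟨hc, F, hF, ⟨e⟩⟩, hxs, hys⟩
  set x1 : ↥(↑s : Set β) := ⟨x, Finset.mem_coe.2 hxs⟩ with hx1
  set y1 : ↥(↑s : Set β) := ⟨y, Finset.mem_coe.2 hys⟩ with hy1
  set x0 : Fin r := e.symm x1 with hx0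
  set y0 : Fin r := e.symm y1 with hy0
  have hne0 : x0 ≠ y0 := by
    intro h
    have h2 : x1 = y1 := e.symm.toEquiv.injective h
    rw [hx1, hy1, Subtype.mk.injEq] at h2
    exact hne h2
  have hadj0 : ¬ F.Adj x0 y0 := by
    intro h
    exact hxy (e.symm.map_rel_iff.1 h)
  obtain ⟨F', hF', ⟨e'⟩⟩ := hsym F hF x0 y0 hne0 hadj0
  refine ⟨⟨hc, F', hF', ?_⟩, hxs, hys⟩
  have E := zykovIso e x0 y0
  rw [hx0, hy0, RelIso.apply_symm_apply, RelIso.apply_symm_apply] at E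
  rw [induce_zykov_mem hxs hys]
  exact ⟨e'.symm.trans E⟩

lemma famCount_zykov_ge (hsym : Symmetrizable 𝓕) (hxy : ¬ G.Adj x y) (hne : x ≠ y) :
    famCount 𝓕 G + (goodSet 𝓕 G ∩ {s | y ∈ s ∧ x ∉ s}).ncard
      ≤ famCount 𝓕 (zykov G x y) + (goodSet 𝓕 G ∩ {s | x ∈ s ∧ y ∉ s}).ncard := by
  rw [famCount_eq_goodSet, famCount_eq_goodSet, goodSet_split 𝓕 G x y,
    goodSet_split 𝓕 (zykov G x y) x y, goodSet_zykov_notmem, goodSet_zykov_swap 𝓕 hxy hne]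
  have h3 : (goodSet 𝓕 G ∩ {s | x ∈ s ∧ y ∈ s}).ncard
      ≤ (goodSet 𝓕 (zykov G x y) ∩ {s | x ∈ s ∧ y ∈ s}).ncard :=
    Set.ncard_le_ncard (goodSet_zykov_mem hsym hxy hne) (Set.toFinite _)
  omega

lemma famCount_zykov_eq {k : ℕ} (hsym : Symmetrizable 𝓕) (hfree : G.CliqueFree k)
    (hmax : ∀ G' : SimpleGraph β, G'.CliqueFree k → famCount 𝓕 G' ≤ famCount 𝓕 G)
    (hxy : ¬ G.Adj x y) (hne : x ≠ y) :
    famCount 𝓕 (zykov G x y) = famCount 𝓕 G := by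
  have h1 := famCount_zykov_ge hsym hxy hne
  have h2 := famCount_zykov_ge hsym (fun h => hxy h.symm) hne.symm
  have h3 := hmax _ (zykov_cliqueFree hne hxy hfree)
  have h4 := hmax _ (zykov_cliqueFree hne.symm (fun h => hxy h.symm) hfree)
  omega
end Key

section ECount
open SimpleGraph
variable {β : Type*} {G : SimpleGraph β} {x y z : β}

noncomputable def eCount (G : SimpleGraph β) : ℕ :=
  Set.ncard {p : β × β | G.Adj p.1 p.2}

lemma eCount_split [Fintype β] (G : SimpleGraph β) (x : β) :
    eCount G = Set.ncard {p : β × β | G.Adj p.1 p.2 ∧ p.1 ≠ x ∧ p.2 ≠ x}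
      + 2 * Set.ncard {b : β | G.Adj x b} := by
  have h1 : {p : β × β | G.Adj p.1 p.2}
      = {p : β × β | G.Adj p.1 p.2 ∧ p.1 ≠ x ∧ p.2 ≠ x} ∪
        ({p : β × β | G.Adj p.1 p.2 ∧ p.1 = x} ∪ {p : β × β | G.Adj p.1 p.2 ∧ p.2 = x}) := by
    ext p
    simp only [Set.mem_setOf_eq, Set.mem_union]
    constructor
    · intro h
      by_cases h1 : p.1 = x
      · exact Or.inr (Or.inl ⟨h, h1⟩)
      · by_cases h2 : p.2 = x
        · exact Or.inr (Or.inr ⟨h, h2⟩)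
        · exact Or.inl ⟨h, h1, h2⟩
    · rintro (⟨h, _⟩ | ⟨h, _⟩ | ⟨h, _⟩) <;> exact h
  have d2 : Disjoint {p : β × β | G.Adj p.1 p.2 ∧ p.1 = x}
      {p : β × β | G.Adj p.1 p.2 ∧ p.2 = x} := by
    rw [Set.disjoint_left]
    rintro p ⟨h, h1⟩ ⟨_, h2⟩
    rw [h1, h2] at h
    exact G.loopless.irrefl x h
  have d1 : Disjoint {p : β × β | G.Adj p.1 p.2 ∧ p.1 ≠ x ∧ p.2 ≠ x}
      ({p : β × β | G.Adj p.1 p.2 ∧ p.1 = x} ∪ {p : β × β | G.Adj p.1 p.2 ∧ p.2 = x}) := by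
    rw [Set.disjoint_left]
    rintro p ⟨_, h1, h2⟩ (⟨_, h⟩ | ⟨_, h⟩)
    · exact h1 h
    · exact h2 h
  have e1 : Set.ncard {p : β × β | G.Adj p.1 p.2 ∧ p.1 = x}
      = Set.ncard {b : β | G.Adj x b} := by
    rw [show {p : β × β | G.Adj p.1 p.2 ∧ p.1 = x}
        = (fun b => ((x, b) : β × β)) '' {b : β | G.Adj x b} by
      ext p
      simp only [Set.mem_setOf_eq, Set.mem_image]
      constructor
      · rintro ⟨h, h1⟩
        exact ⟨p.2, by rw [h1] at h; exact h, by rw [← h1]⟩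
      · rintro ⟨b, hb, rfl⟩
        exact ⟨hb, rfl⟩]
    exact Set.ncard_image_of_injective _ (fun a b h => (Prod.mk.injEq _ _ _ _ ▸ h).2)
  have e2 : Set.ncard {p : β × β | G.Adj p.1 p.2 ∧ p.2 = x}
      = Set.ncard {b : β | G.Adj x b} := by
    rw [show {p : β × β | G.Adj p.1 p.2 ∧ p.2 = x}
        = (fun b => ((b, x) : β × β)) '' {b : β | G.Adj x b} by
      ext p
      simp only [Set.mem_setOf_eq, Set.mem_image]
      constructor
      · rintro ⟨h, h1⟩
        exact ⟨p.1, by rw [h1] at h; exact h.symm, by rw [← h1]⟩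
      · rintro ⟨b, hb, rfl⟩
        exact ⟨hb.symm, rfl⟩]
    exact Set.ncard_image_of_injective _ (fun a b h => (Prod.mk.injEq _ _ _ _ ▸ h).1)
  rw [eCount, h1, Set.ncard_union_eq d1, Set.ncard_union_eq d2, e1, e2]
  ring

lemma zykov_nbhd_x (hxy : ¬ G.Adj x y) :
    {b : β | (zykov G x y).Adj x b} = {b : β | G.Adj y b} := by
  ext b
  exact zykov_adj_left hxy

lemma zykov_nbhd_y (hxy : ¬ G.Adj x y) (hne : x ≠ y) :
    {b : β | (zykov G x y).Adj y b} = {b : β | G.Adj y b} := by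
  ext b
  simp only [Set.mem_setOf_eq]
  constructor
  · rintro ⟨hab, (⟨_, h⟩ | ⟨h, h2⟩ | ⟨_, _, h⟩)⟩
    · exact h
    · exact absurd h2 (G.loopless.irrefl y)
    · exact h
  · intro h
    have hbx : b ≠ x := fun hh => hxy ((hh ▸ h).symm)
    exact ⟨h.ne, Or.inr (Or.inr ⟨hne.symm, hbx, h⟩)⟩

lemma zykov_nbhd_other (hz : z ≠ x) (hzy : ¬ G.Adj z y) :
    {b : β | (zykov G x y).Adj z b} = {b : β | G.Adj z b} \ {x} := by
  ext b
  simp only [Set.mem_setOf_eq, Set.mem_diff, Set.mem_singleton_iff]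
  constructor
  · rintro ⟨hab, (⟨h, _⟩ | ⟨h, h2⟩ | ⟨_, hbx, h⟩)⟩
    · exact absurd h hz
    · exact absurd h2 hzy
    · exact ⟨h, hbx⟩
  · rintro ⟨h, hbx⟩
    exact ⟨h.ne, Or.inr (Or.inr ⟨hz, hbx, h⟩)⟩

lemma eCount_zykov [Fintype β] (hxy : ¬ G.Adj x y) (hne : x ≠ y) :
    eCount (zykov G x y) + 2 * Set.ncard {b : β | G.Adj x b}
      = eCount G + 2 * Set.ncard {b : β | G.Adj y b} := by
  have h0 : {p : β × β | (zykov G x y).Adj p.1 p.2 ∧ p.1 ≠ x ∧ p.2 ≠ x}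
      = {p : β × β | G.Adj p.1 p.2 ∧ p.1 ≠ x ∧ p.2 ≠ x} := by
    ext p
    simp only [Set.mem_setOf_eq]
    constructor
    · rintro ⟨h, h1, h2⟩
      exact ⟨(zykov_adj_of_ne h1 h2).1 h, h1, h2⟩
    · rintro ⟨h, h1, h2⟩
      exact ⟨(zykov_adj_of_ne h1 h2).2 h, h1, h2⟩
  rw [eCount_split (zykov G x y) x, eCount_split G x, h0, zykov_nbhd_x hxy]
  ring

lemma eCount_le [Fintype β] (G : SimpleGraph β) : eCount G ≤ Nat.card (β × β) := by
  rw [← Set.ncard_univ]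
  exact Set.ncard_le_ncard (Set.subset_univ _) Set.finite_univ

end ECount


/-- For a symmetrizable family `𝓕` and `k ≥ 3`, the maximum of `P(𝓕,·)` over `K_k`-free
graphs on `n` vertices is attained by a complete multipartite graph with at most `k-1`
parts (hence `K_k`-free). -/
theorem stmt6 {r k n : ℕ} (hk : 3 ≤ k) (hn : 1 ≤ n)
    (𝓕 : Set (SimpleGraph (Fin r))) (hsym : Symmetrizable 𝓕) :
    ∃ G : SimpleGraph (Fin n),
      (∃ f : Fin n → Fin (k - 1), ∀ a b : Fin n, G.Adj a b ↔ f a ≠ f b) ∧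
      G.CliqueFree k ∧
      ∀ G' : SimpleGraph (Fin n), G'.CliqueFree k → famCount 𝓕 G' ≤ famCount 𝓕 G := by
  classical
  haveI : Fintype (SimpleGraph (Fin n)) :=
    Fintype.ofInjective (fun G => G.Adj) (fun G H h => SimpleGraph.ext h)
  have hbot : (⊥ : SimpleGraph (Fin n)).CliqueFree k :=
    SimpleGraph.cliqueFree_bot (by omega)
  obtain ⟨G, hGmem, hGmax⟩ :=
    (Finset.univ.filter (fun G : SimpleGraph (Fin n) => G.CliqueFree k)).exists_max_image
      (fun G => famCount 𝓕 G * (Nat.card (Fin n × Fin n) + 1) + eCount G)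
      ⟨⊥, Finset.mem_filter.2 ⟨Finset.mem_univ _, hbot⟩⟩
  have hGfree : G.CliqueFree k := (Finset.mem_filter.1 hGmem).2
  have hφmax : ∀ G' : SimpleGraph (Fin n), G'.CliqueFree k →
      famCount 𝓕 G' * (Nat.card (Fin n × Fin n) + 1) + eCount G'
        ≤ famCount 𝓕 G * (Nat.card (Fin n × Fin n) + 1) + eCount G :=
    fun G' h => hGmax G' (Finset.mem_filter.2 ⟨Finset.mem_univ _, h⟩)
  have hfam : ∀ G' : SimpleGraph (Fin n), G'.CliqueFree k →
      famCount 𝓕 G' ≤ famCount 𝓕 G := by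
    intro G' h
    by_contra hlt
    push_neg at hlt
    have h1 := hφmax G' h
    have h2 := eCount_le G
    have h3 : (famCount 𝓕 G + 1) * (Nat.card (Fin n × Fin n) + 1)
        ≤ famCount 𝓕 G' * (Nat.card (Fin n × Fin n) + 1) :=
      Nat.mul_le_mul_right _ hlt
    nlinarith [h1, h2, h3]
  have hkey : ∀ x y : Fin n, x ≠ y → ¬ G.Adj x y →
      famCount 𝓕 (zykov G x y) = famCount 𝓕 G :=
    fun x y hne hxy => famCount_zykov_eq hsym hGfree hfam hxy hne
  have heC : ∀ x y : Fin n, x ≠ y → ¬ G.Adj x y →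
      eCount (zykov G x y) ≤ eCount G := by
    intro x y hne hxy
    have h1 := hφmax _ (zykov_cliqueFree hne hxy hGfree)
    rw [hkey x y hne hxy] at h1
    omega
  have htrans : ∀ x y z : Fin n, ¬ G.Adj x y → ¬ G.Adj y z → ¬ G.Adj x z := by
    intro x y z hxy hyz hxz
    by_cases hxyeq : x = y
    · exact hyz (hxyeq ▸ hxz)
    by_cases hyzeq : y = z
    · exact hxy (hyzeq ▸ hxz)
    have hzx : z ≠ x := fun h => hxz.ne h.symm
    have hzyne : z ≠ y := fun h => hxy (h ▸ hxz)
    have hyx : ¬ G.Adj y x := fun h => hxy h.symm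
    have hzy : ¬ G.Adj z y := fun h => hyz h.symm
    -- degree equalities
    have e1 := eCount_zykov (G := G) hxy hxyeq
    have e1' := eCount_zykov (G := G) hyx (Ne.symm hxyeq)
    have le1 := heC x y hxyeq hxy
    have le1' := heC y x (Ne.symm hxyeq) hyx
    have e2 := eCount_zykov (G := G) hyz hyzeq
    have e2' := eCount_zykov (G := G) hzy (Ne.symm hyzeq)
    have le2 := heC y z hyzeq hyz
    have le2' := heC z y (Ne.symm hyzeq) hzy
    -- the double symmetrization
    have hG1free : (zykov G x y).CliqueFree k := zykov_cliqueFree hxyeq hxy hGfree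
    have hfamG1 : famCount 𝓕 (zykov G x y) = famCount 𝓕 G := hkey x y hxyeq hxy
    have hG1zy : ¬ (zykov G x y).Adj z y := by
      rintro ⟨hab, (⟨h1, _⟩ | ⟨h1, h2⟩ | ⟨_, _, h3⟩)⟩
      · exact hzx h1
      · exact hxyeq h1.symm
      · exact hzy h3
    have hfam1 : ∀ G'' : SimpleGraph (Fin n), G''.CliqueFree k →
        famCount 𝓕 G'' ≤ famCount 𝓕 (zykov G x y) :=
      fun G'' h => hfamG1 ▸ hfam G'' h
    have hfamG2 : famCount 𝓕 (zykov (zykov G x y) z y) = famCount 𝓕 (zykov G x y) :=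
      famCount_zykov_eq hsym hG1free hfam1 hG1zy hzyne
    have hG2free : (zykov (zykov G x y) z y).CliqueFree k :=
      zykov_cliqueFree hzyne hG1zy hG1free
    have hφ2 := hφmax _ hG2free
    rw [hfamG2, hfamG1] at hφ2
    have heCG2 : eCount (zykov (zykov G x y) z y) ≤ eCount G := by omega
    have e3 := eCount_zykov (G := zykov G x y) (x := z) (y := y) hG1zy hzyne
    have hN1y : {b : Fin n | (zykov G x y).Adj y b} = {b : Fin n | G.Adj y b} :=
      zykov_nbhd_y hxy hxyeq
    have hN1z : {b : Fin n | (zykov G x y).Adj z b} = {b : Fin n | G.Adj z b} \ {x} :=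
      zykov_nbhd_other hzx hzy
    have hxNz : x ∈ {b : Fin n | G.Adj z b} := hxz.symm
    have hcard : ({b : Fin n | G.Adj z b} \ {x}).ncard + 1
        = Set.ncard {b : Fin n | G.Adj z b} :=
      Set.ncard_diff_singleton_add_one hxNz (Set.toFinite _)
    rw [hN1y, hN1z] at e3
    omega
  -- build the multipartite structure
  set sd : Setoid (Fin n) := ⟨fun a b => ¬ G.Adj a b,
    ⟨fun a => G.loopless.irrefl a, fun h h2 => h h2.symm, fun h1 h2 => htrans _ _ _ h1 h2⟩⟩ with hsd
  haveI : DecidableRel ((· ≈ ·) : Fin n → Fin n → Prop) := fun a b => Classical.dec _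
  haveI : Fintype (Quotient sd) := Quotient.fintype sd
  have hcardQ : Fintype.card (Quotient sd) ≤ k - 1 := by
    by_contra hq
    push_neg at hq
    obtain ⟨emb⟩ : Nonempty (Fin k ↪ Quotient sd) :=
      Function.Embedding.nonempty_of_card_le (by simp; omega)
    have hginj : Function.Injective (fun i : Fin k => (emb i).out) :=
      fun a b h => emb.injective (Quotient.out_injective h)
    refine hGfree (Finset.univ.image (fun i : Fin k => (emb i).out)) ⟨?_, ?_⟩
    · intro a ha b hb hab
      simp only [Finset.coe_image, Set.mem_image, Finset.mem_coe, Finset.coe_univ,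
        Set.mem_univ, true_and] at ha hb
      obtain ⟨i, rfl⟩ := ha
      obtain ⟨j, rfl⟩ := hb
      by_contra hnadj
      have hout : emb i = emb j := by
        rw [← Quotient.out_eq (emb i), ← Quotient.out_eq (emb j)]
        exact Quotient.sound (hnadj : sd.r _ _)
      exact hab (by rw [hout])
    · rw [Finset.card_image_of_injective _ hginj, Finset.card_univ, Fintype.card_fin]
  obtain ⟨embQ⟩ : Nonempty (Quotient sd ↪ Fin (k - 1)) :=
    Function.Embedding.nonempty_of_card_le (by simpa using hcardQ)
  refine ⟨G, ⟨fun v => embQ (Quotient.mk sd v), ?_⟩, hGfree, hfam⟩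
  intro a b
  constructor
  · intro hadj h
    have h2 : Quotient.mk sd a = Quotient.mk sd b := embQ.injective h
    exact (Quotient.exact h2 : ¬ G.Adj a b) hadj
  · intro hne
    by_contra hnadj
    exact hne (congrArg embQ (Quotient.sound (hnadj : sd.r a b)))
end

section
/- Let F = K_{a_1,…,a_r} be a complete multipartite graph with part sizes a_1 ≥ … ≥ a_r ≥ 1, r ≥ 2, that is strongly unbalanced, i.e., (a_i − a_j)² > a_i + a_j for all 1 ≤ i < j ≤ r. Let m ≥ r and suppose x ∈ Δ^{m−1} maximizes P_{F,m} over Δ^{m−1}. Then the positive coordinates of x are pairwise distinct: for all i ≠ j with x_i > 0 and x_j > 0, one has x_i ≠ x_j. -/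
/-- The density polynomial `P_{F,m}` of the complete multipartite graph with part sizes
`a_1, …, a_r`, in `m` variables:
`(s!/(a_1!⋯a_r!·π(F))) · Σ_σ ∏_i x_{σ(i)}^{a_i}`, summed over injections `σ : [r] → [m]`,
where `π(F) = ∏_n c(n)!` and `c(n)` is the number of parts of size `n`. -/
noncomputable def PF {r : ℕ} (a : Fin r → ℕ) (m : ℕ) (x : Fin m → ℝ) : ℝ :=
  (((∑ i, a i).factorial : ℝ) /
      (((∏ i, (a i).factorial) *
        ∏ n ∈ Finset.range ((∑ i, a i) + 1),
          ((Finset.univ.filter fun i => a i = n).card.factorial) : ℕ) : ℝ)) *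
    ∑ σ : Fin r ↪ Fin m, ∏ i, x (σ i) ^ a i


section StmtHelpers
open Finset

open Finset



lemma evenodd (t : ℝ) (n : ℕ) : 0 ≤ t ^ n + (-t) ^ n := by
  rcases Nat.even_or_odd n with h | h
  · rw [h.neg_pow]
    have := h.pow_nonneg t
    linarith
  · rw [h.neg_pow]; linarith

lemma lemA (c t : ℝ) (hc : 0 ≤ c) (p : ℕ) : 2 * c ^ p ≤ (c + t) ^ p + (c - t) ^ p := by
  have h2 : (c - t) ^ p = ∑ k ∈ range (p+1), c ^ k * (-t) ^ (p-k) * (p.choose k) := by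
    rw [sub_eq_add_neg, add_pow]
  rw [add_pow, h2, ← Finset.sum_add_distrib]
  have key := Finset.single_le_sum
    (f := fun k => c ^ k * t ^ (p-k) * (p.choose k) + c ^ k * (-t) ^ (p-k) * (p.choose k))
    (fun k _ => by
      have h1 : (0:ℝ) ≤ c ^ k * (p.choose k) := by positivity
      have h3 := evenodd t (p - k)
      have h4 := mul_nonneg h1 h3
      show (0:ℝ) ≤ c ^ k * t ^ (p-k) * (p.choose k) + c ^ k * (-t) ^ (p-k) * (p.choose k)
      nlinarith) (Finset.self_mem_range_succ p)
  simp only [Nat.sub_self, pow_zero, Nat.choose_self, Nat.cast_one, mul_one] at key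
  linarith

lemma lemB1 (u : ℝ) (hu : 0 ≤ u) (d : ℕ) (hd : 2 ≤ d) :
    2 + ((d*(d-1) : ℕ) : ℝ) * u ^ 2 ≤ (1+u) ^ d + (1-u) ^ d := by
  have h2 : (1 - u) ^ d = ∑ k ∈ range (d+1), 1 ^ k * (-u) ^ (d-k) * (d.choose k) := by
    rw [sub_eq_add_neg, add_pow]
  rw [add_pow, h2, ← Finset.sum_add_distrib]
  have hsub : ({d-2, d} : Finset ℕ) ⊆ range (d+1) := by
    intro k hk; simp only [mem_insert, mem_singleton] at hk
    rcases hk with h | h <;> simp [h] <;> omega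
  have hbound := Finset.sum_le_sum_of_subset_of_nonneg hsub
    (fun k _ _ => by
      have h1 : (0:ℝ) ≤ (1:ℝ) ^ k * (d.choose k) := by positivity
      have h3 := evenodd u (d - k)
      have h4 := mul_nonneg h1 h3
      show (0:ℝ) ≤ 1 ^ k * u ^ (d-k) * (d.choose k) + 1 ^ k * (-u) ^ (d-k) * (d.choose k)
      nlinarith)
  refine le_trans ?_ hbound
  rw [Finset.sum_pair (by omega : d - 2 ≠ d)]
  have e1 : d - (d-2) = 2 := by omega
  have e2 : d - d = 0 := by omega
  have e3 : d.choose (d-2) = d.choose 2 := by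
    have := Nat.choose_symm (show 2 ≤ d from hd); rw [← this]
  have e4 : ((d.choose 2 : ℕ) : ℝ) * 2 = ((d*(d-1) : ℕ) : ℝ) := by
    have heven : 2 ∣ d * (d-1) := by
      have h7 := Nat.even_mul_succ_self (d-1)
      have h5 : (d-1) * ((d-1)+1) = d * (d - 1) := by
        have h8 : d - 1 + 1 = d := by omega
        rw [h8]; ring
      rw [h5] at h7
      exact h7.two_dvd
    have hnn : d.choose 2 * 2 = d * (d-1) := by
      rw [Nat.choose_two_right]
      omega
    exact_mod_cast congrArg (Nat.cast : ℕ → ℝ) hnn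
  rw [e1, e2, e3]
  simp only [one_pow, pow_zero, Nat.choose_self, Nat.cast_one, mul_one]
  have h6 : (-u:ℝ)^2 = u^2 := by ring
  rw [h6]
  nlinarith [e4, sq_nonneg u]

noncomputable def uu (s : ℕ) : ℝ := 1 / (2 * ((s:ℝ)+1)^2)

lemma uu_pos (s : ℕ) : 0 < uu s := by
  unfold uu
  have : (0:ℝ) ≤ (s:ℝ) := Nat.cast_nonneg s
  positivity

lemma uu_le (s : ℕ) : uu s ≤ 1/2 := by
  unfold uu
  have h : (0:ℝ) ≤ (s:ℝ) := Nat.cast_nonneg s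
  rw [div_le_div_iff₀ (by positivity) (by norm_num)]
  nlinarith

lemma keyB0 (p q d : ℕ) (u : ℝ) (hu0 : 0 < u) (hu1 : u ≤ 1/2)
    (hdp : q + d = p) (hd2 : 2 ≤ d) (hK : 2*q + 2 ≤ d*(d-1))
    (hqKu : (q:ℝ) * ((d*(d-1):ℕ):ℝ) * u^2 < 1)
    (c : ℝ) (hc : 0 < c) :
    2 * c ^ (p + q) <
      (c + c * u) ^ p * (c - c * u) ^ q + (c - c * u) ^ p * (c + c * u) ^ q := by
  set K : ℝ := ((d*(d-1):ℕ):ℝ) with hKdef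
  have hK0 : (0:ℝ) ≤ K := Nat.cast_nonneg _
  have step1 : 2 + K * u ^ 2 ≤ (1+u) ^ d + (1-u) ^ d := lemB1 u (le_of_lt hu0) d hd2
  have step2 : (1 - (q:ℝ) * u^2) ≤ (1 - u^2)^q := by
    have hb := one_add_mul_le_pow (a := -u^2) (by nlinarith) q
    have he : (1 + -(u^2)) = 1 - u^2 := by ring
    rw [he] at hb
    linarith [hb]
  have hfac_nonneg : (0:ℝ) ≤ (1 - u^2)^q := by
    have : (0:ℝ) ≤ 1 - u^2 := by nlinarith
    positivity
  have step3 : (1 - (q:ℝ)*u^2) * (2 + K * u^2) ≤ (1 - u^2)^q * ((1+u)^d + (1-u)^d) :=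
    mul_le_mul step2 step1 (by positivity) hfac_nonneg
  have hKcast : (2*(q:ℝ) + 2) ≤ K := by
    rw [hKdef]; exact_mod_cast hK
  have h4 : (q:ℝ) * K * u^4 < u^2 := by
    have := mul_lt_mul_of_pos_right hqKu (pow_pos hu0 2)
    calc (q:ℝ) * K * u^4 = (q:ℝ) * K * u^2 * u^2 := by ring
      _ < 1 * u^2 := this
      _ = u^2 := by ring
  have h5 : 2*u^2 ≤ (K - 2*(q:ℝ))*u^2 :=
    mul_le_mul_of_nonneg_right (by linarith) (sq_nonneg u)
  have main : 2 < (1 - u^2)^q * ((1+u)^d + (1-u)^d) := by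
    have expand : (1 - (q:ℝ)*u^2) * (2 + K * u^2)
        = 2 + (K - 2*(q:ℝ))*u^2 - (q:ℝ)*K*u^4 := by ring
    have hu2pos : 0 < u^2 := pow_pos hu0 2
    linarith [step3, h4, h5]
  have hiden : (1+u)^p * (1-u)^q + (1-u)^p * (1+u)^q = (1 - u^2)^q * ((1+u)^d + (1-u)^d) := by
    rw [← hdp, pow_add, pow_add]
    have h6 : (1 - u^2)^q = (1+u)^q * (1-u)^q := by
      rw [← mul_pow]; congr 1; ring
    rw [h6]; ring
  have e1 : c + c*u = c*(1+u) := by ring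
  have e2 : c - c*u = c*(1-u) := by ring
  rw [e1, e2]; simp only [mul_pow]
  have hcp : (0:ℝ) < c^p * c^q := by positivity
  calc 2 * c^(p+q) = (c^p * c^q) * 2 := by rw [pow_add]; ring
    _ < (c^p * c^q) * ((1 - u^2)^q * ((1+u)^d + (1-u)^d)) := (mul_lt_mul_iff_right₀ hcp).mpr main
    _ = (c^p * c^q) * ((1+u)^p * (1-u)^q + (1-u)^p * (1+u)^q) := by rw [hiden]
    _ = c ^ p * (1 + u) ^ p * (c ^ q * (1 - u) ^ q) + c ^ p * (1 - u) ^ p * (c ^ q * (1 + u) ^ q) := by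
        ring

lemma keyB (s p q : ℕ) (hq : 1 ≤ q) (hqp : q < p) (hps : p + q ≤ s)
    (hpq : ((p:ℝ) + (q:ℝ)) < ((p:ℝ) - (q:ℝ)) ^ 2) (c : ℝ) (hc : 0 < c) :
    2 * c ^ (p + q) <
      (c + c * uu s) ^ p * (c - c * uu s) ^ q + (c - c * uu s) ^ p * (c + c * uu s) ^ q := by
  set d := p - q with hddef
  have hdp : q + d = p := by omega
  have hcast : ((p:ℝ) - (q:ℝ)) = (d:ℝ) := by
    rw [hddef, Nat.cast_sub (le_of_lt hqp)]
  have hd2nat : p + q + 1 ≤ d^2 := by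
    have h1 : ((p:ℝ) + q) < (d:ℝ)^2 := by rw [← hcast]; exact hpq
    have h9 : (((p+q):ℕ):ℝ) < ((d^2 : ℕ):ℝ) := by push_cast; linarith
    exact_mod_cast h9
  have hd2 : 2 ≤ d := by nlinarith
  have hK : 2*q + 2 ≤ d*(d-1) := by
    have heven : Even (d*(d-1)) := by
      have h7 := Nat.even_mul_succ_self (d-1)
      have h5 : (d-1) * ((d-1)+1) = d * (d - 1) := by
        have h8 : d - 1 + 1 = d := by omega
        rw [h8]; ring
      rwa [h5] at h7
    obtain ⟨w, hw⟩ := heven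
    have hsq : d^2 = d*d := sq d
    have hmm : d * (d-1) = d*d - d*1 := by
      rw [← Nat.mul_sub]
    omega
  have hqs : q ≤ s := by omega
  have hds : d ≤ s := by omega
  have hKs : d*(d-1) ≤ s*s := Nat.mul_le_mul hds (le_trans (Nat.sub_le d 1) hds)
  have hqKu : (q:ℝ) * ((d*(d-1):ℕ):ℝ) * (uu s)^2 < 1 := by
    have hq' : (q:ℝ) ≤ (s:ℝ) := by exact_mod_cast hqs
    have hK' : ((d*(d-1):ℕ):ℝ) ≤ (s:ℝ)*(s:ℝ) := by exact_mod_cast hKs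
    have hs0 : (0:ℝ) ≤ (s:ℝ) := Nat.cast_nonneg s
    have hK0 : (0:ℝ) ≤ ((d*(d-1):ℕ):ℝ) := Nat.cast_nonneg _
    have h1 : (q:ℝ) * ((d*(d-1):ℕ):ℝ) ≤ (s:ℝ)*((s:ℝ)*(s:ℝ)) :=
      mul_le_mul hq' hK' hK0 hs0
    have h2 : (s:ℝ)*((s:ℝ)*(s:ℝ)) * (uu s)^2 < 1 := by
      unfold uu
      rw [div_pow, one_pow, mul_div_assoc']
      rw [div_lt_one (by positivity)]
      nlinarith
    have hu2 : (0:ℝ) ≤ (uu s)^2 := sq_nonneg _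
    nlinarith
  exact keyB0 p q d (uu s) (uu_pos s) (uu_le s) hdp hd2 hK hqKu c hc

noncomputable def Ssum {r : ℕ} (a : Fin r → ℕ) (m : ℕ) (x : Fin m → ℝ) : ℝ :=
  ∑ σ : Fin r ↪ Fin m, ∏ i, x (σ i) ^ a i

lemma Ssum_comp {r m : ℕ} (a : Fin r → ℕ) (e : Fin m ≃ Fin m) (x : Fin m → ℝ) :
    Ssum a m (fun k => x (e k)) = Ssum a m x := by
  unfold Ssum
  refine Fintype.sum_bijective (fun σ => σ.trans e.toEmbedding) ?_ _ _ (fun σ => ?_)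
  · have : Function.Bijective (fun σ : Fin r ↪ Fin m => σ.trans e.toEmbedding) :=
      Equiv.bijective
        { toFun := fun σ : Fin r ↪ Fin m => σ.trans e.toEmbedding
          invFun := fun σ : Fin r ↪ Fin m => σ.trans e.symm.toEmbedding
          left_inv := fun σ => by ext k; simp
          right_inv := fun σ => by ext k; simp }
    exact this
  · rfl

lemma prod_split_one {r m : ℕ} (a : Fin r → ℕ) (x : Fin m → ℝ) (σ : Fin r ↪ Fin m)
    (g : Fin m → ℝ) (k : Fin r) (h1 : ∀ idx, idx ≠ k → g (σ idx) = x (σ idx)) :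
    ∏ idx, g (σ idx) ^ a idx = g (σ k) ^ a k * ∏ idx ∈ univ.erase k, x (σ idx) ^ a idx := by
  rw [← Finset.mul_prod_erase univ (fun idx => g (σ idx) ^ a idx) (mem_univ k)]
  congr 1
  refine Finset.prod_congr rfl (fun idx hidx => ?_)
  rw [h1 idx (Finset.mem_erase.mp hidx).1]

lemma prod_split_two {r m : ℕ} (a : Fin r → ℕ) (x : Fin m → ℝ) (σ : Fin r ↪ Fin m)
    (g : Fin m → ℝ) (k l : Fin r) (hkl : k ≠ l)
    (h1 : ∀ idx, idx ≠ k → idx ≠ l → g (σ idx) = x (σ idx)) :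
    ∏ idx, g (σ idx) ^ a idx =
      g (σ k) ^ a k * g (σ l) ^ a l * ∏ idx ∈ (univ.erase k).erase l, x (σ idx) ^ a idx := by
  rw [← Finset.mul_prod_erase univ (fun idx => g (σ idx) ^ a idx) (mem_univ k)]
  rw [← Finset.mul_prod_erase (univ.erase k) (fun idx => g (σ idx) ^ a idx)
    (Finset.mem_erase.mpr ⟨Ne.symm hkl, mem_univ l⟩)]
  rw [← mul_assoc]
  congr 1
  refine Finset.prod_congr rfl (fun idx hidx => ?_)
  have h2 := Finset.mem_erase.mp hidx
  have h3 := Finset.mem_erase.mp h2.2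
  rw [h1 idx h3.1 h2.1]



/-- For a strongly unbalanced complete multipartite graph `F = K_{a_1,…,a_r}`
(`(a_i - a_j)² > a_i + a_j` for all `i < j`), any maximizer of `P_{F,m}` over the
standard simplex has pairwise distinct positive coordinates. -/
theorem stmt15 {r m : ℕ} (hr : 2 ≤ r) (hm : r ≤ m)
    (a : Fin r → ℕ) (ha : ∀ i, 1 ≤ a i)
    (hsorted : ∀ i j : Fin r, i ≤ j → a j ≤ a i)
    (hsu : ∀ i j : Fin r, i < j → ((a i : ℝ) + (a j : ℝ)) < ((a i : ℝ) - (a j : ℝ)) ^ 2)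
    (x : Fin m → ℝ) (hx : x ∈ stdSimplex ℝ (Fin m))
    (hmax : ∀ y ∈ stdSimplex ℝ (Fin m), PF a m y ≤ PF a m x) :
    ∀ i j : Fin m, i ≠ j → 0 < x i → 0 < x j → x i ≠ x j := by
  -- reduce to Ssum
  have hCpos : 0 < (((∑ i, a i).factorial : ℝ) /
      (((∏ i, (a i).factorial) *
        ∏ n ∈ Finset.range ((∑ i, a i) + 1),
          ((Finset.univ.filter fun i => a i = n).card.factorial) : ℕ) : ℝ)) := by
    apply div_pos
    · exact_mod_cast Nat.factorial_pos _
    · have h0 : 0 < ((∏ i, (a i).factorial) *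
          ∏ n ∈ Finset.range ((∑ i, a i) + 1),
            ((Finset.univ.filter fun i => a i = n).card.factorial)) :=
        Nat.mul_pos (Finset.prod_pos fun _ _ => Nat.factorial_pos _)
                    (Finset.prod_pos fun _ _ => Nat.factorial_pos _)
      exact_mod_cast h0
  have hSle : ∀ y ∈ stdSimplex ℝ (Fin m), Ssum a m y ≤ Ssum a m x := by
    intro y hy
    have h1 := hmax y hy
    have h2 : ∀ z : Fin m → ℝ, PF a m z = (((∑ i, a i).factorial : ℝ) /
      (((∏ i, (a i).factorial) *
        ∏ n ∈ Finset.range ((∑ i, a i) + 1),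
          ((Finset.univ.filter fun i => a i = n).card.factorial) : ℕ) : ℝ)) * Ssum a m z :=
      fun z => rfl
    rw [h2, h2] at h1
    exact le_of_mul_le_mul_left h1 hCpos
  intro i j hij hxi hxj heq
  set T : Finset (Fin m) := univ.filter (fun k => 0 < x k) with hTdef
  by_cases hT : r ≤ T.card
  case neg =>
    -- small support: Ssum x = 0 but uniform y gives positive value
    have hSx : Ssum a m x = 0 := by
      apply Finset.sum_eq_zero
      intro σ _
      have himg : ¬ (univ.image σ ⊆ T) := by
        intro hsub
        have hcard := Finset.card_le_card hsub
        rw [Finset.card_image_of_injective univ σ.injective, card_univ, Fintype.card_fin] at hcard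
        omega
      obtain ⟨v, hv1, hv2⟩ := Finset.not_subset.mp himg
      obtain ⟨k, _, hk⟩ := Finset.mem_image.mp hv1
      apply Finset.prod_eq_zero (mem_univ k)
      have hnpos : ¬ 0 < x (σ k) := by
        rw [hk]
        intro hpos
        exact hv2 (by rw [hTdef]; exact mem_filter.mpr ⟨mem_univ v, hk ▸ hpos⟩)
      have hz : x (σ k) = 0 := le_antisymm (not_lt.mp hnpos) (hx.1 (σ k))
      rw [hz]
      exact zero_pow (by have := ha k; omega)
    have hm0 : 0 < m := by omega
    have hym : (fun _ : Fin m => 1/(m:ℝ)) ∈ stdSimplex ℝ (Fin m) := by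
      constructor
      · intro k
        have : (0:ℝ) < m := by exact_mod_cast hm0
        positivity
      · simp only [Finset.sum_const, card_univ, Fintype.card_fin, nsmul_eq_mul]
        field_simp
    have hSy : 0 < Ssum a m (fun _ : Fin m => 1/(m:ℝ)) := by
      apply Finset.sum_pos
      · intro σ _
        apply Finset.prod_pos
        intro k _
        have : (0:ℝ) < m := by exact_mod_cast hm0
        positivity
      · have hne : Nonempty (Fin r ↪ Fin m) := ⟨Fin.castLEEmb hm⟩
        exact univ_nonempty
    have := hSle _ hym
    rw [hSx] at this
    linarith
  case pos =>
    -- main case: support has at least r elements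
    have hiT : i ∈ T := mem_filter.mpr ⟨mem_univ i, hxi⟩
    have hjT : j ∈ T := mem_filter.mpr ⟨mem_univ j, hxj⟩
    have hijsub : ({i, j} : Finset (Fin m)) ⊆ T := by
      intro v hv
      rcases mem_insert.mp hv with h | h
      · rwa [h]
      · rw [mem_singleton.mp h]; exact hjT
    have hijcard : ({i, j} : Finset (Fin m)).card = 2 := card_pair hij
    obtain ⟨B, hsubB, hBT, hBcard⟩ := Finset.exists_subsuperset_card_eq
      (n := r - 2 + ({i, j} : Finset (Fin m)).card) hijsub (by omega) (by rw [hijcard]; omega)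
    rw [hijcard] at hBcard
    have hBr : B.card = r := by omega
    have e0 : {v // v ∈ B} ≃ Fin r := B.equivFin.trans (finCongr hBr)
    set σ₀ : Fin r ↪ Fin m :=
      ⟨fun k => (e0.symm k : Fin m), fun k1 k2 h => e0.symm.injective (Subtype.ext h)⟩
      with hσ₀def
    have hσ₀B : ∀ k, σ₀ k ∈ B := fun k => (e0.symm k).2
    have hσ₀pos : ∀ k, 0 < x (σ₀ k) := fun k => (mem_filter.mp (hBT (hσ₀B k))).2
    have hiB : i ∈ B := hsubB (mem_insert_self i {j})
    have hjB : j ∈ B := hsubB (mem_insert.mpr (Or.inr (mem_singleton_self j)))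
    have hk₀ : σ₀ (e0 ⟨i, hiB⟩) = i := by
      show ((e0.symm (e0 ⟨i, hiB⟩) : {v // v ∈ B}) : Fin m) = i
      rw [Equiv.symm_apply_apply]
    have hl₀ : σ₀ (e0 ⟨j, hjB⟩) = j := by
      show ((e0.symm (e0 ⟨j, hjB⟩) : {v // v ∈ B}) : Fin m) = j
      rw [Equiv.symm_apply_apply]
    set k₀ : Fin r := e0 ⟨i, hiB⟩
    set l₀ : Fin r := e0 ⟨j, hjB⟩
    -- the perturbation
    set c : ℝ := x i with hcdef
    have hcj : x j = c := heq.symm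
    have hc0 : 0 < c := hxi
    set sa : ℕ := ∑ i, a i with hsadef
    set t : ℝ := c * uu sa with htdef
    have ht0 : 0 < t := mul_pos hc0 (uu_pos sa)
    have htc : t < c := by
      have h1 := uu_le sa
      have h2 := uu_pos sa
      rw [htdef]
      nlinarith
    set yp : Fin m → ℝ := Function.update (Function.update x i (c + t)) j (c - t) with hypdef
    set ym : Fin m → ℝ := Function.update (Function.update x i (c - t)) j (c + t) with hymdef
    have hypi : yp i = c + t := by
      rw [hypdef, Function.update_of_ne hij, Function.update_self]
    have hypj : yp j = c - t := by rw [hypdef, Function.update_self]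
    have hypo : ∀ v, v ≠ i → v ≠ j → yp v = x v := fun v h1 h2 => by
      rw [hypdef, Function.update_of_ne h2, Function.update_of_ne h1]
    have hymi : ym i = c - t := by
      rw [hymdef, Function.update_of_ne hij, Function.update_self]
    have hymj : ym j = c + t := by rw [hymdef, Function.update_self]
    have hymo : ∀ v, v ≠ i → v ≠ j → ym v = x v := fun v h1 h2 => by
      rw [hymdef, Function.update_of_ne h2, Function.update_of_ne h1]
    -- yp is in the simplex
    have hypmem : yp ∈ stdSimplex ℝ (Fin m) := by
      constructor
      · intro v
        by_cases h1 : v = i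
        · rw [h1, hypi]; linarith
        · by_cases h2 : v = j
          · rw [h2, hypj]; linarith
          · rw [hypo v h1 h2]; exact hx.1 v
      · have hs1 : ∑ v, yp v = (c - t) + ∑ v ∈ univ \ {j}, Function.update x i (c + t) v := by
          rw [hypdef]
          exact Finset.sum_update_of_mem (mem_univ j) _ _
        have hs2 : ∑ v ∈ univ \ {j}, Function.update x i (c + t) v
            = (c + t) + ∑ v ∈ (univ \ {j}) \ {i}, x v := by
          exact Finset.sum_update_of_mem
            (by simp [Finset.mem_sdiff, hij]) _ _
        have hs3 : (1:ℝ) = x j + ∑ v ∈ univ \ {j}, x v := by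
          rw [← hx.2]
          exact (Finset.sum_eq_add_sum_sdiff_singleton_of_mem (mem_univ j) x)
        have hs4 : ∑ v ∈ univ \ {j}, x v = x i + ∑ v ∈ (univ \ {j}) \ {i}, x v := by
          exact Finset.sum_eq_add_sum_sdiff_singleton_of_mem (by simp [Finset.mem_sdiff, hij]) x
        rw [hs1, hs2]
        rw [hs4] at hs3
        rw [hcj] at hs3
        rw [← hcdef] at hs3
        linarith
    -- Ssum ym = Ssum yp by the swap symmetry
    have hswap : ym = fun v => yp (Equiv.swap i j v) := by
      funext v
      by_cases h1 : v = i
      · rw [h1, Equiv.swap_apply_left, hypj, hymi]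
      · by_cases h2 : v = j
        · rw [h2, Equiv.swap_apply_right, hypi, hymj]
        · rw [Equiv.swap_apply_of_ne_of_ne h1 h2, hymo v h1 h2, hypo v h1 h2]
    have hSeq : Ssum a m ym = Ssum a m yp := by
      rw [hswap]
      exact Ssum_comp a (Equiv.swap i j) yp
    -- key inequality for pairs of distinct indices
    have hkeykl : ∀ k l : Fin r, k ≠ l → 2 * c ^ (a k + a l) <
        (c + t) ^ a k * (c - t) ^ a l + (c - t) ^ a k * (c + t) ^ a l := by
      intro k l hkl
      have hsum2 : a k + a l ≤ sa := by
        have h := Finset.sum_le_sum_of_subset (f := a) (Finset.subset_univ ({k, l} : Finset (Fin r)))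
        rwa [Finset.sum_pair hkl] at h
      have hane : ∀ k' l' : Fin r, k' < l' → a l' < a k' := by
        intro k' l' h
        have hle := hsorted k' l' (le_of_lt h)
        have hsu' := hsu k' l' h
        rcases lt_or_eq_of_le hle with h2 | h2
        · exact h2
        · exfalso
          rw [h2] at hsu'
          have hak := ha k'
          have h3 : (1:ℝ) ≤ (a k' : ℝ) := by exact_mod_cast hak
          nlinarith
      rcases lt_or_gt_of_ne hkl with h | h
      · have hne := hane k l h
        have hres := keyB sa (a k) (a l) (ha l) hne hsum2 (hsu k l h) c hc0
        rw [← htdef] at hres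
        exact hres
      · have hne := hane l k h
        have hres := keyB sa (a l) (a k) (ha k) hne (by omega) (hsu l k h) c hc0
        rw [← htdef] at hres
        rw [add_comm (a k) (a l)]
        linarith [hres]
    -- pointwise inequality over injections
    have hQnn : ∀ (σ : Fin r ↪ Fin m) (s : Finset (Fin r)),
        (0:ℝ) ≤ ∏ idx ∈ s, x (σ idx) ^ a idx :=
      fun σ s => Finset.prod_nonneg (fun idx _ => pow_nonneg (hx.1 _) _)
    have hper : ∀ σ : Fin r ↪ Fin m, 2 * ∏ idx, x (σ idx) ^ a idx ≤
        (∏ idx, yp (σ idx) ^ a idx) + (∏ idx, ym (σ idx) ^ a idx) := by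
      intro σ
      by_cases hi' : ∃ k, σ k = i
      · obtain ⟨k, hk⟩ := hi'
        by_cases hj' : ∃ l, σ l = j
        · obtain ⟨l, hl⟩ := hj'
          have hkl : k ≠ l := fun h => hij (by rw [← hk, h, hl])
          have hother : ∀ idx, idx ≠ k → idx ≠ l → σ idx ≠ i ∧ σ idx ≠ j := by
            intro idx h1 h2
            constructor
            · rw [← hk]; exact fun h => h1 (σ.injective h)
            · rw [← hl]; exact fun h => h2 (σ.injective h)
          have hxsplit := prod_split_two a x σ x k l hkl (fun _ _ _ => rfl)
          have hpsplit := prod_split_two a x σ yp k l hkl (fun idx h1 h2 =>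
            hypo _ (hother idx h1 h2).1 (hother idx h1 h2).2)
          have hmsplit := prod_split_two a x σ ym k l hkl (fun idx h1 h2 =>
            hymo _ (hother idx h1 h2).1 (hother idx h1 h2).2)
          rw [hxsplit, hpsplit, hmsplit, hk, hl, hypi, hypj, hymi, hymj, ← hcdef, hcj]
          have hQ := hQnn σ ((univ.erase k).erase l)
          have hkey := le_of_lt (hkeykl k l hkl)
          have hmul := mul_le_mul_of_nonneg_right hkey hQ
          rw [pow_add] at hmul
          linarith [hmul]
        · have hother : ∀ idx, idx ≠ k → σ idx ≠ i ∧ σ idx ≠ j := by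
            intro idx h1
            constructor
            · rw [← hk]; exact fun h => h1 (σ.injective h)
            · exact fun h => hj' ⟨idx, h⟩
          have hxsplit := prod_split_one a x σ x k (fun _ _ => rfl)
          have hpsplit := prod_split_one a x σ yp k (fun idx h1 =>
            hypo _ (hother idx h1).1 (hother idx h1).2)
          have hmsplit := prod_split_one a x σ ym k (fun idx h1 =>
            hymo _ (hother idx h1).1 (hother idx h1).2)
          rw [hxsplit, hpsplit, hmsplit, hk, hypi, hymi, ← hcdef]
          have hQ := hQnn σ (univ.erase k)
          have hmul := mul_le_mul_of_nonneg_right (lemA c t (le_of_lt hc0) (a k)) hQ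
          linarith [hmul]
      · by_cases hj' : ∃ l, σ l = j
        · obtain ⟨l, hl⟩ := hj'
          have hother : ∀ idx, idx ≠ l → σ idx ≠ i ∧ σ idx ≠ j := by
            intro idx h1
            constructor
            · exact fun h => hi' ⟨idx, h⟩
            · rw [← hl]; exact fun h => h1 (σ.injective h)
          have hxsplit := prod_split_one a x σ x l (fun _ _ => rfl)
          have hpsplit := prod_split_one a x σ yp l (fun idx h1 =>
            hypo _ (hother idx h1).1 (hother idx h1).2)
          have hmsplit := prod_split_one a x σ ym l (fun idx h1 =>
            hymo _ (hother idx h1).1 (hother idx h1).2)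
          rw [hxsplit, hpsplit, hmsplit, hl, hypj, hymj, hcj]
          have hQ := hQnn σ (univ.erase l)
          have hmul := mul_le_mul_of_nonneg_right (lemA c t (le_of_lt hc0) (a l)) hQ
          linarith [hmul]
        · have hpeq : ∀ idx, yp (σ idx) = x (σ idx) :=
            fun idx => hypo _ (fun h => hi' ⟨idx, h⟩) (fun h => hj' ⟨idx, h⟩)
          have hmeq : ∀ idx, ym (σ idx) = x (σ idx) :=
            fun idx => hymo _ (fun h => hi' ⟨idx, h⟩) (fun h => hj' ⟨idx, h⟩)
          have h1 : ∏ idx, yp (σ idx) ^ a idx = ∏ idx, x (σ idx) ^ a idx :=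
            Finset.prod_congr rfl (fun idx _ => by rw [hpeq idx])
          have h2 : ∏ idx, ym (σ idx) ^ a idx = ∏ idx, x (σ idx) ^ a idx :=
            Finset.prod_congr rfl (fun idx _ => by rw [hmeq idx])
          rw [h1, h2]
          linarith
    -- strict inequality at σ₀
    have hkl₀ : k₀ ≠ l₀ := fun h => hij (by rw [← hk₀, h, hl₀])
    have hstrict : 2 * ∏ idx, x (σ₀ idx) ^ a idx <
        (∏ idx, yp (σ₀ idx) ^ a idx) + (∏ idx, ym (σ₀ idx) ^ a idx) := by
      have hother : ∀ idx, idx ≠ k₀ → idx ≠ l₀ → σ₀ idx ≠ i ∧ σ₀ idx ≠ j := by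
        intro idx h1 h2
        constructor
        · rw [← hk₀]; exact fun h => h1 (σ₀.injective h)
        · rw [← hl₀]; exact fun h => h2 (σ₀.injective h)
      have hxsplit := prod_split_two a x σ₀ x k₀ l₀ hkl₀ (fun _ _ _ => rfl)
      have hpsplit := prod_split_two a x σ₀ yp k₀ l₀ hkl₀ (fun idx h1 h2 =>
        hypo _ (hother idx h1 h2).1 (hother idx h1 h2).2)
      have hmsplit := prod_split_two a x σ₀ ym k₀ l₀ hkl₀ (fun idx h1 h2 =>
        hymo _ (hother idx h1 h2).1 (hother idx h1 h2).2)
      rw [hxsplit, hpsplit, hmsplit, hk₀, hl₀, hypi, hypj, hymi, hymj, ← hcdef, hcj]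
      have hQpos : (0:ℝ) < ∏ idx ∈ (univ.erase k₀).erase l₀, x (σ₀ idx) ^ a idx :=
        Finset.prod_pos (fun idx _ => pow_pos (hσ₀pos idx) _)
      have hmul := mul_lt_mul_of_pos_right (hkeykl k₀ l₀ hkl₀) hQpos
      rw [pow_add] at hmul
      linarith [hmul]
    -- combine
    have hsum : 2 * Ssum a m x < Ssum a m yp + Ssum a m ym := by
      show 2 * ∑ σ : Fin r ↪ Fin m, ∏ idx, x (σ idx) ^ a idx <
        (∑ σ : Fin r ↪ Fin m, ∏ idx, yp (σ idx) ^ a idx) +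
        (∑ σ : Fin r ↪ Fin m, ∏ idx, ym (σ idx) ^ a idx)
      rw [← Finset.sum_add_distrib, Finset.mul_sum]
      exact Finset.sum_lt_sum (fun σ _ => hper σ) ⟨σ₀, mem_univ σ₀, hstrict⟩
    rw [hSeq] at hsum
    have := hSle yp hypmem
    linarith

end StmtHelpers
end

section
/- Let F = T(s,r) be the Turán graph with 2 ≤ r < s ≤ 3r+1, and let m ≥ r. Suppose x ∈ Δ^{m−1} maximizes P_{F,m} over Δ^{m−1}, and let ℓ be the number of nonzero coordinates of x. Then every nonzero coordinate of x equals 1/ℓ. -/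
open Finset

section TuranAux

variable {r m : ℕ}

/-- The embedding sum part of `PF`. -/
noncomputable def Tsum (a : Fin r → ℕ) (m : ℕ) (x : Fin m → ℝ) : ℝ :=
  ∑ σ : Fin r ↪ Fin m, ∏ k, x (σ k) ^ a k

/-- Double update. -/
def Xup (x : Fin m → ℝ) (i j : Fin m) (u v : ℝ) : Fin m → ℝ :=
  Function.update (Function.update x i u) j v

/-- exponent of coordinate `i` under embedding σ -/
def Eexp (a : Fin r → ℕ) (i : Fin m) (σ : Fin r ↪ Fin m) : ℕ :=
  ∑ k ∈ Finset.univ.filter (fun k => σ k = i), a k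

/-- residual product -/
noncomputable def Rres (a : Fin r → ℕ) (x : Fin m → ℝ) (i j : Fin m) (σ : Fin r ↪ Fin m) : ℝ :=
  ∏ k ∈ Finset.univ.filter (fun k => ¬ σ k = i ∧ ¬ σ k = j), x (σ k) ^ a k

/-- the coefficient of `u^α v^β` -/
noncomputable def Ecoef (a : Fin r → ℕ) (x : Fin m → ℝ) (i j : Fin m) (y : ℕ × ℕ) : ℝ :=
  ∑ σ ∈ Finset.univ.filter
      (fun σ : Fin r ↪ Fin m => (Eexp a i σ, Eexp a j σ) = y),
    Rres a x i j σ

lemma Xup_apply_i (x : Fin m → ℝ) {i j : Fin m} (hij : i ≠ j) (u v : ℝ) :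
    Xup x i j u v i = u := by
  simp [Xup, Function.update_of_ne hij]

lemma Xup_apply_j (x : Fin m → ℝ) (i j : Fin m) (u v : ℝ) :
    Xup x i j u v j = v := by simp [Xup]

lemma Xup_apply_other (x : Fin m → ℝ) {i j c : Fin m} (hci : c ≠ i) (hcj : c ≠ j) (u v : ℝ) :
    Xup x i j u v c = x c := by
  simp [Xup, Function.update_of_ne hcj, Function.update_of_ne hci]

lemma prod_split (a : Fin r → ℕ) (x : Fin m → ℝ) {i j : Fin m} (hij : i ≠ j)
    (u v : ℝ) (σ : Fin r ↪ Fin m) :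
    ∏ k, Xup x i j u v (σ k) ^ a k
      = u ^ Eexp a i σ * v ^ Eexp a j σ * Rres a x i j σ := by
  classical
  rw [← Finset.prod_filter_mul_prod_filter_not Finset.univ (fun k => σ k = i)]
  rw [← Finset.prod_filter_mul_prod_filter_not
    (Finset.univ.filter (fun k => ¬ σ k = i)) (fun k => σ k = j)]
  rw [Finset.filter_filter, Finset.filter_filter]
  have h1 : ∏ k ∈ Finset.univ.filter (fun k => σ k = i), Xup x i j u v (σ k) ^ a k
      = u ^ Eexp a i σ := by
    rw [Eexp, ← Finset.prod_pow_eq_pow_sum]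
    refine Finset.prod_congr rfl ?_
    intro k hk
    simp only [Finset.mem_filter] at hk
    rw [hk.2, Xup_apply_i x hij]
  have h2 : ∏ k ∈ Finset.univ.filter (fun k => ¬ σ k = i ∧ σ k = j), Xup x i j u v (σ k) ^ a k
      = v ^ Eexp a j σ := by
    have : Finset.univ.filter (fun k => ¬ σ k = i ∧ σ k = j)
        = Finset.univ.filter (fun k => σ k = j) := by
      ext k
      simp only [Finset.mem_filter, Finset.mem_univ, true_and]
      constructor
      · exact fun h => h.2
      · intro h; exact ⟨by rw [h]; exact fun hh => hij hh.symm, h⟩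
    rw [this, Eexp, ← Finset.prod_pow_eq_pow_sum]
    refine Finset.prod_congr rfl ?_
    intro k hk
    simp only [Finset.mem_filter] at hk
    rw [hk.2, Xup_apply_j]
  have h3 : ∏ k ∈ Finset.univ.filter (fun k => ¬ σ k = i ∧ ¬ σ k = j),
      Xup x i j u v (σ k) ^ a k = Rres a x i j σ := by
    refine Finset.prod_congr rfl ?_
    intro k hk
    simp only [Finset.mem_filter] at hk
    rw [Xup_apply_other x hk.2.1 hk.2.2]
  rw [h1, h2, h3]
  ring

lemma Eexp_mem {p : ℕ} (a : Fin r → ℕ) (ha : ∀ k, a k = p ∨ a k = p + 1)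
    (i : Fin m) (σ : Fin r ↪ Fin m) :
    Eexp a i σ ∈ ({0, p, p + 1} : Finset ℕ) := by
  classical
  by_cases h : ∃ k, σ k = i
  · obtain ⟨k0, hk0⟩ := h
    have : Finset.univ.filter (fun k => σ k = i) = {k0} := by
      ext k
      simp only [Finset.mem_filter, Finset.mem_univ, true_and, Finset.mem_singleton]
      constructor
      · intro h; exact σ.injective (h.trans hk0.symm)
      · intro h; rw [h, hk0]
    rw [Eexp, this, Finset.sum_singleton]
    rcases ha k0 with h | h <;> simp [h]
  · have : Finset.univ.filter (fun k => σ k = i) = ∅ := by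
      ext k; simp only [Finset.mem_filter, Finset.mem_univ, true_and, Finset.notMem_empty,
        iff_false]
      exact fun hk => h ⟨k, hk⟩
    simp [Eexp, this]

lemma master {p : ℕ} (a : Fin r → ℕ) (ha : ∀ k, a k = p ∨ a k = p + 1)
    (x : Fin m → ℝ) {i j : Fin m} (hij : i ≠ j) (u v : ℝ) :
    Tsum a m (Xup x i j u v)
      = ∑ y ∈ ({0, p, p + 1} : Finset ℕ) ×ˢ ({0, p, p + 1} : Finset ℕ),
          Ecoef a x i j y * u ^ y.1 * v ^ y.2 := by
  classical
  have h := Finset.sum_fiberwise_of_maps_to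
    (s := (Finset.univ : Finset (Fin r ↪ Fin m)))
    (t := ({0, p, p + 1} : Finset ℕ) ×ˢ ({0, p, p + 1} : Finset ℕ))
    (g := fun σ => (Eexp a i σ, Eexp a j σ))
    (fun σ _ => by
      simp only [Finset.mem_product]
      exact ⟨Eexp_mem a ha i σ, Eexp_mem a ha j σ⟩)
    (fun σ => ∏ k, Xup x i j u v (σ k) ^ a k)
  rw [Tsum, ← h]
  refine Finset.sum_congr rfl ?_
  intro y _
  rw [Ecoef, Finset.sum_mul, Finset.sum_mul]
  refine Finset.sum_congr rfl ?_
  intro σ hσ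
  simp only [Finset.mem_filter, Finset.mem_univ, true_and, Prod.mk.injEq] at hσ
  rw [prod_split a x hij u v σ, ← hσ]
  dsimp only
  ring

lemma Xup_swap_pt (x : Fin m → ℝ) {i j : Fin m} (hij : i ≠ j) (u v : ℝ) (c : Fin m) :
    Xup x i j u v (Equiv.swap i j c) = Xup x i j v u c := by
  rcases eq_or_ne c i with rfl | hci
  · rw [Equiv.swap_apply_left]
    simp [Xup, Function.update_of_ne hij]
  rcases eq_or_ne c j with rfl | hcj
  · rw [Equiv.swap_apply_right]
    simp [Xup, Function.update_of_ne hij]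
  · rw [Equiv.swap_apply_of_ne_of_ne hci hcj]
    simp [Xup, Function.update_of_ne hci, Function.update_of_ne hcj]

lemma Tsum_swap (a : Fin r → ℕ) (x : Fin m → ℝ) {i j : Fin m} (hij : i ≠ j) (u v : ℝ) :
    Tsum a m (Xup x i j u v) = Tsum a m (Xup x i j v u) := by
  classical
  refine Fintype.sum_equiv (Equiv.embeddingCongr (Equiv.refl (Fin r)) (Equiv.swap i j))
    _ _ ?_
  intro σ
  refine Finset.prod_congr rfl ?_
  intro k _
  have : (Equiv.embeddingCongr (Equiv.refl (Fin r)) (Equiv.swap i j)) σ k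
      = Equiv.swap i j (σ k) := by
    rfl
  rw [this, Xup_swap_pt x hij]

lemma Ecoef_nonneg (a : Fin r → ℕ) (x : Fin m → ℝ) (hx : ∀ c, 0 ≤ x c) (i j : Fin m)
    (y : ℕ × ℕ) : 0 ≤ Ecoef a x i j y := by
  refine Finset.sum_nonneg fun σ _ => Finset.prod_nonneg fun k _ => ?_
  exact pow_nonneg (hx _) _

lemma sum_Xup (x : Fin m → ℝ) {i j : Fin m} (hij : i ≠ j) (u v : ℝ) :
    ∑ c, Xup x i j u v c = (∑ c, x c) - x i - x j + u + v := by
  classical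
  rw [Xup, Finset.sum_update_of_mem (Finset.mem_univ j),
    Finset.sum_update_of_mem (by simp [hij] : i ∈ Finset.univ \ {j})]
  have h1 : (Finset.univ \ {j} : Finset (Fin m)) \ {i}
      = Finset.univ \ {i, j} := by
    ext c; simp [and_comm]
  rw [h1]
  have h2 : (∑ c ∈ Finset.univ \ {i, j}, x c) + (x i + x j) = ∑ c, x c := by
    have := Finset.sum_sdiff (f := x) (Finset.subset_univ ({i, j} : Finset (Fin m)))
    rwa [Finset.sum_pair hij] at this
  rw [← h2]; ring

lemma Xup_mem_simplex {x : Fin m → ℝ} (hx : x ∈ stdSimplex ℝ (Fin m)) {i j : Fin m}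
    (hij : i ≠ j) {u v : ℝ} (hu : 0 ≤ u) (hv : 0 ≤ v) (huv : u + v = x i + x j) :
    Xup x i j u v ∈ stdSimplex ℝ (Fin m) := by
  obtain ⟨hx0, hx1⟩ := hx
  refine ⟨fun c => ?_, ?_⟩
  · rcases eq_or_ne c j with rfl | hcj
    · rw [Xup_apply_j]; exact hv
    rcases eq_or_ne c i with rfl | hci
    · rw [Xup_apply_i x hij]; exact hu
    · rw [Xup_apply_other x hci hcj]; exact hx0 c
  · rw [sum_Xup x hij, hx1]; linarith

open Classical in
/-- support as a finset -/
noncomputable def fsupp (x : Fin m → ℝ) : Finset (Fin m) :=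
  Finset.univ.filter (fun c => x c ≠ 0)

lemma fsupp_Xup {x : Fin m → ℝ} {i j : Fin m} (hij : i ≠ j) (hi : x i ≠ 0) {u : ℝ}
    (hu : u ≠ 0) : fsupp (Xup x i j u 0) = (fsupp x).erase j := by
  ext c
  simp only [fsupp, Finset.mem_filter, Finset.mem_univ, true_and, Finset.mem_erase]
  rcases eq_or_ne c j with rfl | hcj
  · simp [Xup_apply_j]
  rcases eq_or_ne c i with rfl | hci
  · simp [Xup_apply_i x hij, hu, hcj, hi]
  · simp [Xup_apply_other x hci hcj, hcj]

lemma card_fsupp_Xup {x : Fin m → ℝ} {i j : Fin m} (hij : i ≠ j) (hi : x i ≠ 0)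
    (hj : x j ≠ 0) {u : ℝ} (hu : u ≠ 0) :
    (fsupp (Xup x i j u 0)).card = (fsupp x).card - 1 := by
  rw [fsupp_Xup hij hi hu, Finset.card_erase_of_mem]
  simp [fsupp, hj]

lemma sum_fsupp {x : Fin m → ℝ} (hx : x ∈ stdSimplex ℝ (Fin m)) :
    ∑ c ∈ fsupp x, x c = 1 := by
  rw [← hx.2]
  refine Finset.sum_subset (Finset.subset_univ _) ?_
  intro c _ hc
  classical
  by_contra h
  exact hc (by simp [fsupp, h])

/-- If the support has fewer than r elements, Tsum vanishes. -/
lemma Tsum_eq_zero (a : Fin r → ℕ) (ha1 : ∀ k, 1 ≤ a k) {x : Fin m → ℝ}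
    (hcard : (fsupp x).card < r) : Tsum a m x = 0 := by
  rw [Tsum]
  refine Finset.sum_eq_zero fun σ _ => ?_
  have : ∃ k, x (σ k) = 0 := by
    by_contra h
    push_neg at h
    have hmaps : ∀ k : Fin r, σ k ∈ fsupp x := by
      intro k; simp [fsupp, h k]
    have := Finset.card_le_card_of_injOn (s := (Finset.univ : Finset (Fin r)))
      (t := fsupp x) σ (fun k _ => hmaps k) (fun k _ l _ h => σ.injective h)
    simp only [Finset.card_univ, Fintype.card_fin] at this
    omega
  obtain ⟨k, hk⟩ := this
  refine Finset.prod_eq_zero (Finset.mem_univ k) ?_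
  rw [hk]
  exact zero_pow (by have := ha1 k; omega)

lemma Tsum_pos (a : Fin r → ℕ) (hrm : r ≤ m) (hm : 0 < m) :
    0 < Tsum a m (fun _ => (m : ℝ)⁻¹) := by
  rw [Tsum]
  have : Nonempty (Fin r ↪ Fin m) := ⟨Fin.castLEEmb hrm⟩
  haveI := this
  refine Finset.sum_pos (fun σ _ => Finset.prod_pos fun k _ => ?_) Finset.univ_nonempty
  positivity

/-- a maximizer has support at least r -/
lemma card_supp_ge (a : Fin r → ℕ) (ha1 : ∀ k, 1 ≤ a k) (hrm : r ≤ m) (hm : 0 < m)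
    {x : Fin m → ℝ}
    (hmax : ∀ y ∈ stdSimplex ℝ (Fin m), Tsum a m y ≤ Tsum a m x) :
    r ≤ (fsupp x).card := by
  by_contra h
  push_neg at h
  have h0 : Tsum a m x = 0 := Tsum_eq_zero a ha1 h
  have hunif : (fun _ => (m : ℝ)⁻¹) ∈ stdSimplex ℝ (Fin m) := by
    constructor
    · intro c; positivity
    · simp [Finset.card_univ]
      rw [mul_inv_cancel₀]
      exact_mod_cast hm.ne'
  have := hmax _ hunif
  have := Tsum_pos a hrm hm
  linarith


noncomputable def Fp1 (C : ℕ × ℕ → ℝ) (u v : ℝ) : ℝ :=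
  C (0,0) + C (0,1) * v + C (0,2) * v ^ 2
    + C (1,0) * u + C (1,1) * u * v + C (1,2) * u * v ^ 2
    + C (2,0) * u ^ 2 + C (2,1) * u ^ 2 * v + C (2,2) * u ^ 2 * v ^ 2

noncomputable def Fp2 (C : ℕ × ℕ → ℝ) (u v : ℝ) : ℝ :=
  C (0,0) + C (0,2) * v ^ 2 + C (0,3) * v ^ 3
    + C (2,0) * u ^ 2 + C (2,2) * u ^ 2 * v ^ 2 + C (2,3) * u ^ 2 * v ^ 3
    + C (3,0) * u ^ 3 + C (3,2) * u ^ 3 * v ^ 2 + C (3,3) * u ^ 3 * v ^ 3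

noncomputable def Fp3 (C : ℕ × ℕ → ℝ) (u v : ℝ) : ℝ :=
  C (0,0) + C (0,3) * v ^ 3 + C (0,4) * v ^ 4
    + C (3,0) * u ^ 3 + C (3,3) * u ^ 3 * v ^ 3 + C (3,4) * u ^ 3 * v ^ 4
    + C (4,0) * u ^ 4 + C (4,3) * u ^ 4 * v ^ 3 + C (4,4) * u ^ 4 * v ^ 4

lemma lemX {c1 c2 c3 c4 w W : ℝ} (h2 : 0 ≤ c2) (h3 : 0 ≤ c3) (h4 : 0 ≤ c4)
    (hw : 0 < w) (hwW : w ≤ W)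
    (h0 : 0 ≤ c1 * w + c2 * w ^ 2 + c3 * w ^ 3 + c4 * w ^ 4)
    (hW : c1 * W + c2 * W ^ 2 + c3 * W ^ 3 + c4 * W ^ 4
        ≤ c1 * w + c2 * w ^ 2 + c3 * w ^ 3 + c4 * w ^ 4) :
    w = W ∨ c1 * w + c2 * w ^ 2 + c3 * w ^ 3 + c4 * w ^ 4 = 0 := by
  rcases eq_or_lt_of_le hwW with h | hlt
  · exact Or.inl h
  right
  set gw := c1 * w + c2 * w ^ 2 + c3 * w ^ 3 + c4 * w ^ 4 with hgw
  set gW := c1 * W + c2 * W ^ 2 + c3 * W ^ 3 + c4 * W ^ 4 with hgW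
  have key : w * gW - W * gw
      = w * W * (W - w) * (c2 + c3 * (W + w) + c4 * (W ^ 2 + W * w + w ^ 2)) := by
    rw [hgw, hgW]; ring
  have hWpos : 0 < W := lt_trans hw hlt
  have h1 : 0 ≤ w * gW - W * gw := by
    rw [key]
    have h6 : 0 ≤ c2 + c3 * (W + w) + c4 * (W ^ 2 + W * w + w ^ 2) := by positivity
    have h5 : 0 ≤ w * W * (W - w) := by
      have : 0 ≤ W - w := by linarith
      positivity
    exact mul_nonneg h5 h6
  nlinarith [mul_le_mul_of_nonneg_left hW (le_of_lt hw)]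

lemma eq_of_w_eq {u v : ℝ} (hu : 0 < u) (hv : 0 < v) (h : u * v = (u + v) ^ 2 / 4) :
    u = v := by nlinarith [sq_nonneg (u - v)]

lemma core1 (C : ℕ × ℕ → ℝ) (hC : ∀ y, 0 ≤ C y) {u v : ℝ} (hu : 0 < u) (hv : 0 < v)
    {T1 T0 TH : ℝ}
    (e1 : 2 * T1 = Fp1 C u v + Fp1 C v u)
    (e0 : 2 * T0 = Fp1 C (u + v) 0 + Fp1 C 0 (u + v))
    (eH : 2 * TH = Fp1 C ((u+v)/2) ((u+v)/2) + Fp1 C ((u+v)/2) ((u+v)/2))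
    (hm0 : T0 ≤ T1) (hmH : TH ≤ T1) : u = v ∨ T0 = T1 := by
  obtain ⟨c1, hc1⟩ : ∃ c : ℝ, c = C (1,1) + (C (2,1) + C (1,2)) / 2 * (u + v) - (C (2,0) + C (0,2)) := ⟨_, rfl⟩
  obtain ⟨c2, hc2⟩ : ∃ c : ℝ, c = C (2,2) := ⟨_, rfl⟩
  have key1 : T1 - T0 = c1 * (u*v) + c2 * (u*v) ^ 2 + 0 * (u*v) ^ 3 + 0 * (u*v) ^ 4 := by
    rw [hc1, hc2]
    unfold Fp1 at e1 e0
    linear_combination (e1 - e0) / 2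
  have keyH : TH - T0 = c1 * ((u+v)^2/4) + c2 * ((u+v)^2/4) ^ 2
      + 0 * ((u+v)^2/4) ^ 3 + 0 * ((u+v)^2/4) ^ 4 := by
    rw [hc1, hc2]
    unfold Fp1 at eH e0
    linear_combination (eH - e0) / 2
  have hw : 0 < u * v := mul_pos hu hv
  have hwW : u * v ≤ (u + v) ^ 2 / 4 := by nlinarith [sq_nonneg (u - v)]
  have h0' : 0 ≤ c1 * (u*v) + c2 * (u*v) ^ 2 + 0 * (u*v) ^ 3 + 0 * (u*v) ^ 4 := by
    rw [← key1]; linarith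
  have hW' : c1 * ((u+v)^2/4) + c2 * ((u+v)^2/4) ^ 2 + 0 * ((u+v)^2/4) ^ 3
      + 0 * ((u+v)^2/4) ^ 4 ≤ c1 * (u*v) + c2 * (u*v) ^ 2 + 0 * (u*v) ^ 3 + 0 * (u*v) ^ 4 := by
    rw [← key1, ← keyH]; linarith
  have hres := lemX (hc2 ▸ hC (2,2)) le_rfl le_rfl hw hwW h0' hW'
  rcases hres with h | h
  · exact Or.inl (eq_of_w_eq hu hv h)
  · right; rw [← key1] at h; linarith

lemma core2 (C : ℕ × ℕ → ℝ) (hC : ∀ y, 0 ≤ C y) {u v : ℝ} (hu : 0 < u) (hv : 0 < v)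
    {T1 T0 TH : ℝ}
    (e1 : 2 * T1 = Fp2 C u v + Fp2 C v u)
    (e0 : 2 * T0 = Fp2 C (u + v) 0 + Fp2 C 0 (u + v))
    (eH : 2 * TH = Fp2 C ((u+v)/2) ((u+v)/2) + Fp2 C ((u+v)/2) ((u+v)/2))
    (hm0 : T0 ≤ T1) (hmH : TH ≤ T1) : u = v ∨ T0 = T1 := by
  obtain ⟨c1, hc1⟩ : ∃ c : ℝ, c = -(C (2,0) + C (0,2)) - 3/2 * (C (3,0) + C (0,3)) * (u + v) := ⟨_, rfl⟩
  obtain ⟨c2, hc2⟩ : ∃ c : ℝ, c = C (2,2) + (C (3,2) + C (2,3)) / 2 * (u + v) := ⟨_, rfl⟩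
  obtain ⟨c3, hc3⟩ : ∃ c : ℝ, c = C (3,3) := ⟨_, rfl⟩
  have key1 : T1 - T0 = c1 * (u*v) + c2 * (u*v) ^ 2 + c3 * (u*v) ^ 3 + 0 * (u*v) ^ 4 := by
    rw [hc1, hc2, hc3]
    unfold Fp2 at e1 e0
    linear_combination (e1 - e0) / 2
  have keyH : TH - T0 = c1 * ((u+v)^2/4) + c2 * ((u+v)^2/4) ^ 2
      + c3 * ((u+v)^2/4) ^ 3 + 0 * ((u+v)^2/4) ^ 4 := by
    rw [hc1, hc2, hc3]
    unfold Fp2 at eH e0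
    linear_combination (eH - e0) / 2
  have hw : 0 < u * v := mul_pos hu hv
  have hwW : u * v ≤ (u + v) ^ 2 / 4 := by nlinarith [sq_nonneg (u - v)]
  have hc2nn : 0 ≤ c2 := by
    rw [hc2]
    have := hC (2,2); have := hC (3,2); have := hC (2,3)
    nlinarith
  have h0' : 0 ≤ c1 * (u*v) + c2 * (u*v) ^ 2 + c3 * (u*v) ^ 3 + 0 * (u*v) ^ 4 := by
    rw [← key1]; linarith
  have hW' : c1 * ((u+v)^2/4) + c2 * ((u+v)^2/4) ^ 2 + c3 * ((u+v)^2/4) ^ 3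
      + 0 * ((u+v)^2/4) ^ 4 ≤ c1 * (u*v) + c2 * (u*v) ^ 2 + c3 * (u*v) ^ 3 + 0 * (u*v) ^ 4 := by
    rw [← key1, ← keyH]; linarith
  have hres := lemX hc2nn (hc3 ▸ hC (3,3)) le_rfl hw hwW h0' hW'
  rcases hres with h | h
  · exact Or.inl (eq_of_w_eq hu hv h)
  · right; rw [← key1] at h; linarith

lemma core3 (C : ℕ × ℕ → ℝ) (hC : ∀ y, 0 ≤ C y) {u v : ℝ} (hu : 0 < u) (hv : 0 < v)
    {T1 T0 TH : ℝ}
    (e1 : 2 * T1 = Fp3 C u v + Fp3 C v u)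
    (e0 : 2 * T0 = Fp3 C (u + v) 0 + Fp3 C 0 (u + v))
    (eH : 2 * TH = Fp3 C ((u+v)/2) ((u+v)/2) + Fp3 C ((u+v)/2) ((u+v)/2))
    (hm0 : T0 ≤ T1) (hmH : TH ≤ T1) : u = v ∨ T0 = T1 := by
  obtain ⟨c1, hc1⟩ : ∃ c : ℝ, c = -(3/2) * (C (3,0) + C (0,3)) * (u + v)
      - 2 * (C (4,0) + C (0,4)) * (u + v) ^ 2 := ⟨_, rfl⟩
  obtain ⟨c2, hc2⟩ : ∃ c : ℝ, c = C (4,0) + C (0,4) := ⟨_, rfl⟩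
  obtain ⟨c3, hc3⟩ : ∃ c : ℝ, c = C (3,3) + (C (4,3) + C (3,4)) / 2 * (u + v) := ⟨_, rfl⟩
  obtain ⟨c4, hc4⟩ : ∃ c : ℝ, c = C (4,4) := ⟨_, rfl⟩
  have key1 : T1 - T0 = c1 * (u*v) + c2 * (u*v) ^ 2 + c3 * (u*v) ^ 3 + c4 * (u*v) ^ 4 := by
    rw [hc1, hc2, hc3, hc4]
    unfold Fp3 at e1 e0
    linear_combination (e1 - e0) / 2
  have keyH : TH - T0 = c1 * ((u+v)^2/4) + c2 * ((u+v)^2/4) ^ 2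
      + c3 * ((u+v)^2/4) ^ 3 + c4 * ((u+v)^2/4) ^ 4 := by
    rw [hc1, hc2, hc3, hc4]
    unfold Fp3 at eH e0
    linear_combination (eH - e0) / 2
  have hw : 0 < u * v := mul_pos hu hv
  have hwW : u * v ≤ (u + v) ^ 2 / 4 := by nlinarith [sq_nonneg (u - v)]
  have hc2nn : 0 ≤ c2 := by rw [hc2]; have := hC (4,0); have := hC (0,4); linarith
  have hc3nn : 0 ≤ c3 := by
    rw [hc3]
    have := hC (3,3); have := hC (4,3); have := hC (3,4)
    nlinarith
  have h0' : 0 ≤ c1 * (u*v) + c2 * (u*v) ^ 2 + c3 * (u*v) ^ 3 + c4 * (u*v) ^ 4 := by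
    rw [← key1]; linarith
  have hW' : c1 * ((u+v)^2/4) + c2 * ((u+v)^2/4) ^ 2 + c3 * ((u+v)^2/4) ^ 3
      + c4 * ((u+v)^2/4) ^ 4 ≤ c1 * (u*v) + c2 * (u*v) ^ 2 + c3 * (u*v) ^ 3 + c4 * (u*v) ^ 4 := by
    rw [← key1, ← keyH]; linarith
  have hres := lemX hc2nn hc3nn (hc4 ▸ hC (4,4)) hw hwW h0' hW'
  rcases hres with h | h
  · exact Or.inl (eq_of_w_eq hu hv h)
  · right; rw [← key1] at h; linarith

lemma pair_lemma {p : ℕ} (a : Fin r → ℕ) (ha : ∀ k, a k = p ∨ a k = p + 1)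
    (hp1 : 1 ≤ p) (hp3 : p ≤ 3)
    {x : Fin m → ℝ} (hx : x ∈ stdSimplex ℝ (Fin m))
    (hmax : ∀ y ∈ stdSimplex ℝ (Fin m), Tsum a m y ≤ Tsum a m x)
    {i j : Fin m} (hij : i ≠ j) (hi : x i ≠ 0) (hj : x j ≠ 0) :
    x i = x j ∨ Tsum a m (Xup x i j (x i + x j) 0) = Tsum a m x := by
  classical
  have hu : 0 < x i := lt_of_le_of_ne (hx.1 i) (Ne.symm hi)
  have hv : 0 < x j := lt_of_le_of_ne (hx.1 j) (Ne.symm hj)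
  have hxX : Xup x i j (x i) (x j) = x := by
    funext c
    rcases eq_or_ne c j with rfl | hcj
    · simp [Xup]
    rcases eq_or_ne c i with rfl | hci
    · simp [Xup, Function.update_of_ne hcj]
    · simp [Xup, Function.update_of_ne hcj, Function.update_of_ne hci]
  have hy0 : Xup x i j (x i + x j) 0 ∈ stdSimplex ℝ (Fin m) :=
    Xup_mem_simplex hx hij (by linarith) le_rfl (by ring)
  have hyH : Xup x i j ((x i + x j) / 2) ((x i + x j) / 2) ∈ stdSimplex ℝ (Fin m) :=
    Xup_mem_simplex hx hij (by linarith) (by linarith) (by ring)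
  have hm0 : Tsum a m (Xup x i j (x i + x j) 0) ≤ Tsum a m x := hmax _ hy0
  have hmH : Tsum a m (Xup x i j ((x i + x j) / 2) ((x i + x j) / 2)) ≤ Tsum a m x :=
    hmax _ hyH
  have hCnn : ∀ y, 0 ≤ Ecoef a x i j y := Ecoef_nonneg a x hx.1 i j
  have expand2 : ∀ u' v' : ℝ, 2 * Tsum a m (Xup x i j u' v')
      = (∑ y ∈ ({0, p, p + 1} : Finset ℕ) ×ˢ ({0, p, p + 1} : Finset ℕ),
          Ecoef a x i j y * u' ^ y.1 * v' ^ y.2)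
        + (∑ y ∈ ({0, p, p + 1} : Finset ℕ) ×ˢ ({0, p, p + 1} : Finset ℕ),
          Ecoef a x i j y * v' ^ y.1 * u' ^ y.2) := by
    intro u' v'
    have h1 := master a ha x hij u' v'
    have h2 := master a ha x hij v' u'
    have h3 := Tsum_swap a x hij u' v'
    rw [two_mul]
    nth_rewrite 2 [h3]
    rw [h1, h2]
  interval_cases p
  · -- p = 1
    have hexp : ∀ u' v' : ℝ, (∑ y ∈ ({0, 1, 1 + 1} : Finset ℕ) ×ˢ ({0, 1, 1 + 1} : Finset ℕ),
          Ecoef a x i j y * u' ^ y.1 * v' ^ y.2) = Fp1 (Ecoef a x i j) u' v' := by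
      intro u' v'
      rw [Finset.sum_product, Fp1]
      norm_num [Finset.sum_insert, Finset.mem_insert]
      ring
    have e1 := expand2 (x i) (x j)
    have e0 := expand2 (x i + x j) 0
    have eH := expand2 ((x i + x j) / 2) ((x i + x j) / 2)
    rw [hexp, hexp, hxX] at e1
    rw [hexp, hexp] at e0
    rw [hexp] at eH
    exact core1 _ hCnn hu hv e1 e0 eH hm0 hmH
  · -- p = 2
    have hexp : ∀ u' v' : ℝ, (∑ y ∈ ({0, 2, 2 + 1} : Finset ℕ) ×ˢ ({0, 2, 2 + 1} : Finset ℕ),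
          Ecoef a x i j y * u' ^ y.1 * v' ^ y.2) = Fp2 (Ecoef a x i j) u' v' := by
      intro u' v'
      rw [Finset.sum_product, Fp2]
      norm_num [Finset.sum_insert, Finset.mem_insert]
      ring
    have e1 := expand2 (x i) (x j)
    have e0 := expand2 (x i + x j) 0
    have eH := expand2 ((x i + x j) / 2) ((x i + x j) / 2)
    rw [hexp, hexp, hxX] at e1
    rw [hexp, hexp] at e0
    rw [hexp] at eH
    exact core2 _ hCnn hu hv e1 e0 eH hm0 hmH
  · -- p = 3
    have hexp : ∀ u' v' : ℝ, (∑ y ∈ ({0, 3, 3 + 1} : Finset ℕ) ×ˢ ({0, 3, 3 + 1} : Finset ℕ),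
          Ecoef a x i j y * u' ^ y.1 * v' ^ y.2) = Fp3 (Ecoef a x i j) u' v' := by
      intro u' v'
      rw [Finset.sum_product, Fp3]
      norm_num [Finset.sum_insert, Finset.mem_insert]
      ring
    have e1 := expand2 (x i) (x j)
    have e0 := expand2 (x i + x j) 0
    have eH := expand2 ((x i + x j) / 2) ((x i + x j) / 2)
    rw [hexp, hexp, hxX] at e1
    rw [hexp, hexp] at e0
    rw [hexp] at eH
    exact core3 _ hCnn hu hv e1 e0 eH hm0 hmH

lemma main_ind {p : ℕ} (a : Fin r → ℕ) (ha : ∀ k, a k = p ∨ a k = p + 1)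
    (hp1 : 1 ≤ p) (hp3 : p ≤ 3) (hr : 2 ≤ r) (hrm : r ≤ m) :
    ∀ ℓ : ℕ, ∀ x : Fin m → ℝ, x ∈ stdSimplex ℝ (Fin m) → (fsupp x).card = ℓ →
      (∀ y ∈ stdSimplex ℝ (Fin m), Tsum a m y ≤ Tsum a m x) →
      ∀ i : Fin m, x i ≠ 0 → x i = 1 / (ℓ : ℝ) := by
  classical
  have ha1 : ∀ k, 1 ≤ a k := by
    intro k; rcases ha k with h | h <;> omega
  have hm0 : 0 < m := by omega
  intro ℓ
  induction ℓ using Nat.strong_induction_on with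
  | _ ℓ IH =>
    intro x hx hcard hmax i hi
    have hge : r ≤ ℓ := hcard ▸ card_supp_ge a ha1 hrm hm0 hmax
    -- helper: unequal support pair gives slid maximizer, uniform by IH
    have helper : ∀ b c : Fin m, b ≠ c → x b ≠ 0 → x c ≠ 0 → x b ≠ x c →
        (x b + x c = 1 / ((ℓ - 1 : ℕ) : ℝ)) ∧
        (∀ d : Fin m, d ≠ b → d ≠ c → x d ≠ 0 → x d = 1 / ((ℓ - 1 : ℕ) : ℝ)) := by
      intro b c hbc hb hc hne
      rcases pair_lemma a ha hp1 hp3 hx hmax hbc hb hc with h | hT0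
      · exact absurd h hne
      have hbpos : 0 < x b := lt_of_le_of_ne (hx.1 b) (Ne.symm hb)
      have hcpos : 0 < x c := lt_of_le_of_ne (hx.1 c) (Ne.symm hc)
      have hsumne : x b + x c ≠ 0 := by positivity
      have hy : Xup x b c (x b + x c) 0 ∈ stdSimplex ℝ (Fin m) :=
        Xup_mem_simplex hx hbc (by linarith) le_rfl (by ring)
      have hmax1 : ∀ y ∈ stdSimplex ℝ (Fin m),
          Tsum a m y ≤ Tsum a m (Xup x b c (x b + x c) 0) := by
        intro y hy'
        rw [hT0]; exact hmax y hy'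
      have hcard1 : (fsupp (Xup x b c (x b + x c) 0)).card = ℓ - 1 := by
        rw [card_fsupp_Xup hbc hb hc hsumne, hcard]
      have hℓpos : 1 ≤ ℓ := by omega
      have hIH := IH (ℓ - 1) (by omega) _ hy hcard1 hmax1
      constructor
      · have := hIH b (by rw [Xup_apply_i x hbc]; exact hsumne)
        rwa [Xup_apply_i x hbc] at this
      · intro d hdb hdc hd
        have := hIH d (by rw [Xup_apply_other x hdb hdc]; exact hd)
        rwa [Xup_apply_other x hdb hdc] at this
    -- all support values are equal
    have hequal : ∀ i' j' : Fin m, x i' ≠ 0 → x j' ≠ 0 → x i' = x j' := by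
      intro i' j' hi' hj'
      by_contra hne
      have hii : i' ≠ j' := fun h => hne (by rw [h])
      -- the slid point gives r ≤ ℓ - 1
      have hℓ1 : r + 1 ≤ ℓ := by
        rcases pair_lemma a ha hp1 hp3 hx hmax hii hi' hj' with h | hT0
        · exact absurd h hne
        have hbpos : 0 < x i' := lt_of_le_of_ne (hx.1 i') (Ne.symm hi')
        have hcpos : 0 < x j' := lt_of_le_of_ne (hx.1 j') (Ne.symm hj')
        have hsumne : x i' + x j' ≠ 0 := by positivity
        have hy : Xup x i' j' (x i' + x j') 0 ∈ stdSimplex ℝ (Fin m) :=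
          Xup_mem_simplex hx hii (by linarith) le_rfl (by ring)
        have hmax1 : ∀ y ∈ stdSimplex ℝ (Fin m),
            Tsum a m y ≤ Tsum a m (Xup x i' j' (x i' + x j') 0) := by
          intro y hy'; rw [hT0]; exact hmax y hy'
        have h1 := card_supp_ge a ha1 hrm hm0 hmax1
        rw [card_fsupp_Xup hii hi' hj' hsumne, hcard] at h1
        omega
      -- pick a third support element
      obtain ⟨k0, hk0⟩ : ∃ k0, k0 ∈ ((fsupp x).erase i').erase j' := by
        apply Finset.card_pos.mp
        have h1 : ℓ - 2 ≤ (((fsupp x).erase i').erase j').card := by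
          have e1 : (fsupp x).card - 1 ≤ ((fsupp x).erase i').card := Finset.pred_card_le_card_erase
          have e2 : ((fsupp x).erase i').card - 1 ≤ (((fsupp x).erase i').erase j').card :=
            Finset.pred_card_le_card_erase
          omega
        omega
      have hk0j : k0 ≠ j' := Finset.ne_of_mem_erase hk0
      have hk0i : k0 ≠ i' := Finset.ne_of_mem_erase (Finset.mem_of_mem_erase hk0)
      have hk0supp : x k0 ≠ 0 := by
        have := Finset.mem_of_mem_erase (Finset.mem_of_mem_erase hk0)
        simpa [fsupp] using this
      by_cases hik : x i' = x k0
      · -- then x j' ≠ x k0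
        have hjk : x j' ≠ x k0 := fun h => hne (by rw [hik, h])
        obtain ⟨hsum, huni⟩ := helper j' k0 (Ne.symm hk0j) hj' hk0supp hjk
        have hi1 : x i' = 1 / ((ℓ - 1 : ℕ) : ℝ) := huni i' hii hk0i.symm  hi'
        -- x k0 = x i' = 1/(ℓ-1), so x j' = 0
        rw [← hik, hi1] at hsum
        have : x j' = 0 := by linarith
        exact hj' this
      by_cases hjk : x j' = x k0
      · obtain ⟨hsum, huni⟩ := helper i' k0 (Ne.symm hk0i) hi' hk0supp (by rw [hjk] at hne; exact hne)
        have hj1 : x j' = 1 / ((ℓ - 1 : ℕ) : ℝ) := huni j' hii.symm hk0j.symm hj'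
        rw [← hjk, hj1] at hsum
        have : x i' = 0 := by linarith
        exact hi' this
      · obtain ⟨_, huni1⟩ := helper i' k0 (Ne.symm hk0i) hi' hk0supp hik
        obtain ⟨_, huni2⟩ := helper j' k0 (Ne.symm hk0j) hj' hk0supp hjk
        have h1 : x j' = 1 / ((ℓ - 1 : ℕ) : ℝ) := huni1 j' hii.symm hk0j.symm hj'
        have h2 : x i' = 1 / ((ℓ - 1 : ℕ) : ℝ) := huni2 i' hii hk0i.symm hi'
        exact hne (by rw [h1, h2])
    -- conclude
    have hsum1 : ∑ c ∈ fsupp x, x c = 1 := sum_fsupp hx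
    have hconst : ∀ c ∈ fsupp x, x c = x i := by
      intro c hc
      have : x c ≠ 0 := by simpa [fsupp] using hc
      exact hequal c i this hi
    rw [Finset.sum_congr rfl hconst, Finset.sum_const, hcard, nsmul_eq_mul] at hsum1
    have hℓne : (ℓ : ℝ) ≠ 0 := by
      have : 0 < ℓ := by omega
      exact_mod_cast this.ne'
    field_simp
    linarith [hsum1]


end TuranAux


/-- For the Turán graph `F = T(s,r)` with `2 ≤ r < s ≤ 3r+1` (part sizes: `q` parts of
size `p+1` and `r-q` of size `p`, where `s = pr+q`), any maximizer `x` of `P_{F,m}` over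
the standard simplex (`m ≥ r`) has all its nonzero coordinates equal to `1/ℓ`, where `ℓ`
is the number of nonzero coordinates of `x`. -/

theorem stmt17 {r s p q m : ℕ} (hr : 2 ≤ r) (hrs : r < s) (hs3 : s ≤ 3 * r + 1)
    (hspq : s = p * r + q) (hq : q < r) (hp : 1 ≤ p) (hm : r ≤ m)
    (x : Fin m → ℝ) (hx : x ∈ stdSimplex ℝ (Fin m))
    (hmax : ∀ y ∈ stdSimplex ℝ (Fin m),
      PF (fun i : Fin r => if (i : ℕ) < q then p + 1 else p) m y ≤
        PF (fun i : Fin r => if (i : ℕ) < q then p + 1 else p) m x) :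
    ∀ i : Fin m, x i ≠ 0 →
      x i = 1 / ((Set.ncard {j : Fin m | x j ≠ 0} : ℕ) : ℝ) := by
  classical
  set a : Fin r → ℕ := fun i : Fin r => if (i : ℕ) < q then p + 1 else p with haa
  have ha : ∀ k, a k = p ∨ a k = p + 1 := by
    intro k
    by_cases h : (k : ℕ) < q
    · right; simp [haa, h]
    · left; simp [haa, h]
  have hp3 : p ≤ 3 := by
    by_contra h
    push_neg at h
    have h4 : 4 * r ≤ p * r := Nat.mul_le_mul_right r h
    omega
  -- PF = K * Tsum with K > 0
  set K : ℝ := (((∑ i, a i).factorial : ℝ) /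
      (((∏ i, (a i).factorial) *
        ∏ n ∈ Finset.range ((∑ i, a i) + 1),
          ((Finset.univ.filter fun i => a i = n).card.factorial) : ℕ) : ℝ)) with hK
  have hPF : ∀ y : Fin m → ℝ, PF a m y = K * Tsum a m y := fun y => rfl
  have hKpos : 0 < K := by
    rw [hK]
    apply div_pos
    · exact_mod_cast Nat.factorial_pos _
    · have h1 : 0 < (∏ i, (a i).factorial) := Finset.prod_pos fun i _ => Nat.factorial_pos _
      have h2 : 0 < ∏ n ∈ Finset.range ((∑ i, a i) + 1),
          ((Finset.univ.filter fun i => a i = n).card.factorial) :=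
        Finset.prod_pos fun n _ => Nat.factorial_pos _
      positivity
  have hmax' : ∀ y ∈ stdSimplex ℝ (Fin m), Tsum a m y ≤ Tsum a m x := by
    intro y hy
    have := hmax y hy
    rw [hPF, hPF] at this
    exact le_of_mul_le_mul_left this hKpos
  have hncard : Set.ncard {j : Fin m | x j ≠ 0} = (fsupp x).card := by
    have : {j : Fin m | x j ≠ 0} = ↑(fsupp x) := by
      ext c; simp [fsupp]
    rw [this, Set.ncard_coe_finset]
  intro i hi
  rw [hncard]
  exact main_ind a ha hp hp3 hr hm (fsupp x).card x hx rfl hmax' i hi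
end

section
/- Let 2 ≤ r < s be integers and write s = pr + q with p ≥ 1 and 0 ≤ q < r. For integers ℓ ≥ r define g(ℓ) = ℓ!·s! / ((ℓ−r)!·(r−q)!·q!·(p!)^r·(p+1)^q·ℓ^s). Then g is strictly unimodal on {r, r+1, r+2, …}: there exists an integer t ≥ r such that g(ℓ) < g(ℓ+1) for all integers ℓ with r ≤ ℓ < t, and g(ℓ+1) < g(ℓ) for all integers ℓ ≥ t; in particular g attains its maximum at the unique point t. -/
open Real Filter

/-- The ratio function `f(ℓ) = (ℓ/(ℓ-r))·(1 - 1/ℓ)^s`. -/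
noncomputable def turanRatio (r s ℓ : ℕ) : ℝ :=
  ((ℓ : ℝ) / ((ℓ : ℝ) - (r : ℝ))) * (1 - 1 / (ℓ : ℝ)) ^ s

/-- `g(ℓ) = ℓ!·s!/((ℓ-r)!·(r-q)!·q!·(p!)^r·(p+1)^q·ℓ^s)`, where `s = pr + q`. -/
noncomputable def gTuran (r s p q ℓ : ℕ) : ℝ :=
  ((ℓ.factorial * s.factorial : ℕ) : ℝ) /
    (((ℓ - r).factorial * (r - q).factorial * q.factorial *
        p.factorial ^ r * (p + 1) ^ q : ℕ) * (ℓ : ℝ) ^ s)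

noncomputable def phiT (r s : ℕ) (x : ℝ) : ℝ :=
  s * (Real.log x - Real.log (x-1)) - (Real.log x - Real.log (x - r))

lemma phiT_hasDeriv {r s : ℕ} {x : ℝ} (hr : 2 ≤ r) (hx : (r:ℝ) < x) :
    HasDerivAt (phiT r s) ((s:ℝ) * (1/x - 1/(x-1)) - (1/x - 1/(x-(r:ℝ)))) x := by
  have hr2 : (2:ℝ) ≤ (r:ℝ) := by exact_mod_cast hr
  have hx0 : x ≠ 0 := by nlinarith
  have hx1 : x - 1 ≠ 0 := by nlinarith
  have hxr : x - (r:ℝ) ≠ 0 := by nlinarith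
  have h1 : HasDerivAt Real.log (1/x) x := by simpa [one_div] using Real.hasDerivAt_log hx0
  have h2 : HasDerivAt (fun y : ℝ => Real.log (y - 1)) (1/(x-1)) x := by
    have := ((hasDerivAt_id x).sub_const 1).log hx1
    simpa [one_div] using this
  have h3 : HasDerivAt (fun y : ℝ => Real.log (y - (r:ℝ))) (1/(x-(r:ℝ))) x := by
    have := ((hasDerivAt_id x).sub_const (r:ℝ)).log hxr
    simpa [one_div] using this
  exact ((h1.sub h2).const_mul (s:ℝ)).sub (h1.sub h3)

lemma turanRatio_eq_exp {r s : ℕ} (hr : 2 ≤ r) {x : ℝ} (hx : (r:ℝ) < x) :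
    (x/(x-(r:ℝ))) * (1 - 1/x)^s = Real.exp (-(phiT r s x)) := by
  have hr2 : (2:ℝ) ≤ (r:ℝ) := by exact_mod_cast hr
  have hx0 : (0:ℝ) < x := by nlinarith
  have hx1 : (0:ℝ) < x - 1 := by nlinarith
  have hxr : (0:ℝ) < x - (r:ℝ) := by nlinarith
  have e1 : Real.exp (Real.log x - Real.log (x - (r:ℝ))) = x / (x - (r:ℝ)) := by
    rw [Real.exp_sub, Real.exp_log hx0, Real.exp_log hxr]
  have e2 : Real.exp ((s:ℝ) * (Real.log (x-1) - Real.log x)) = ((x-1)/x)^s := by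
    rw [← Real.log_div hx1.ne' hx0.ne', ← Real.log_pow, Real.exp_log (by positivity)]
  have : -(phiT r s x) = (Real.log x - Real.log (x - (r:ℝ))) + (s:ℝ) * (Real.log (x-1) - Real.log x) := by
    unfold phiT; ring
  rw [this, Real.exp_add, e1, e2]
  congr 1
  rw [one_sub_div hx0.ne']

lemma turanRatio_lt_one_iff {r s : ℕ} (hr : 2 ≤ r) {x : ℝ} (hx : (r:ℝ) < x) :
    (x/(x-(r:ℝ))) * (1 - 1/x)^s < 1 ↔ 0 < phiT r s x := by
  rw [turanRatio_eq_exp hr hx, Real.exp_lt_one_iff]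
  constructor <;> intro h <;> linarith

lemma one_lt_turanRatio_iff {r s : ℕ} (hr : 2 ≤ r) {x : ℝ} (hx : (r:ℝ) < x) :
    1 < (x/(x-(r:ℝ))) * (1 - 1/x)^s ↔ phiT r s x < 0 := by
  rw [turanRatio_eq_exp hr hx, Real.one_lt_exp_iff]
  constructor <;> intro h <;> linarith

lemma phiT_tendsto (r s : ℕ) : Tendsto (phiT r s) atTop (nhds 0) := by
  have key : ∀ c : ℝ, Tendsto (fun x : ℝ => Real.log x - Real.log (x - c)) atTop (nhds 0) := by
    intro c
    have h1 : Tendsto (fun x : ℝ => 1 - c/x) atTop (nhds 1) := by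
      have := (tendsto_const_nhds (x := c) (f := atTop (α := ℝ))).div_atTop tendsto_id
      simpa using (tendsto_const_nhds (x := (1:ℝ))).sub this
    have h2 : Tendsto (fun x : ℝ => Real.log (1 - c/x)) atTop (nhds 0) := by
      have := (Real.continuousAt_log (x := 1) one_ne_zero).tendsto.comp h1
      simpa [Function.comp_def] using this
    have h3 : ∀ᶠ x : ℝ in atTop, Real.log x - Real.log (x - c) = -Real.log (1 - c/x) := by
      filter_upwards [eventually_gt_atTop (max 0 (c+1))] with x hx
      have hx0 : (0:ℝ) < x := lt_of_le_of_lt (le_max_left _ _) hx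
      have hxc : (0:ℝ) < x - c := by
        have := lt_of_le_of_lt (le_max_right 0 (c+1)) hx; linarith
      have : 1 - c/x = (x - c)/x := by field_simp
      rw [this, Real.log_div hxc.ne' hx0.ne']; ring
    have h4 := h2.neg
    have h5 : Tendsto (fun x : ℝ => Real.log x - Real.log (x - c)) atTop (nhds (-0)) :=
      Tendsto.congr' (h3.mono fun x hx => hx.symm) h4
    simpa using h5
  have := ((key 1).const_mul (s:ℝ)).sub (key (r:ℝ))
  show Tendsto (fun x : ℝ => (s:ℝ) * (Real.log x - Real.log (x-1)) - (Real.log x - Real.log (x - r))) atTop (nhds 0)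
  simpa using this

section shape
variable {r s : ℕ} (hr : 2 ≤ r) (hrs : r < s)

noncomputable def xstar (r s : ℕ) : ℝ := (r:ℝ) * ((s:ℝ) - 1) / ((s:ℝ) - (r:ℝ))

include hr hrs

lemma r_lt_xstar : (r:ℝ) < xstar r s := by
  have h1 : (2:ℝ) ≤ (r:ℝ) := by exact_mod_cast hr
  have h2 : (r:ℝ) < (s:ℝ) := by exact_mod_cast hrs
  rw [xstar, lt_div_iff₀ (by linarith)]
  nlinarith

lemma phiT_deriv_neg {x : ℝ} (hx : xstar r s < x) :
    (s:ℝ) * (1/x - 1/(x-1)) - (1/x - 1/(x-(r:ℝ))) < 0 := by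
  have h1 : (2:ℝ) ≤ (r:ℝ) := by exact_mod_cast hr
  have h2 : (r:ℝ) < (s:ℝ) := by exact_mod_cast hrs
  have hrx : (r:ℝ) < x := lt_trans (r_lt_xstar hr hrs) hx
  have hx0 : (0:ℝ) < x := by linarith
  have hx1 : (0:ℝ) < x - 1 := by linarith
  have hxr : (0:ℝ) < x - r := by linarith
  have hsr0 : (s:ℝ) - (r:ℝ) ≠ 0 := by linarith
  have hst : (xstar r s) * ((s:ℝ) - (r:ℝ)) = (r:ℝ) * ((s:ℝ) - 1) := by
    rw [xstar, div_mul_cancel₀ _ hsr0]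
  have hkey : (r:ℝ) * (x - 1) < (s:ℝ) * (x - (r:ℝ)) := by nlinarith
  have e1 : (1:ℝ)/x - 1/(x-1) = -(1/(x*(x-1))) := by field_simp; ring
  have e2 : (1:ℝ)/x - 1/(x-(r:ℝ)) = -((r:ℝ)/(x*(x-(r:ℝ)))) := by field_simp; ring
  rw [e1, e2]
  have : (r:ℝ)/(x*(x-(r:ℝ))) < (s:ℝ)/(x*(x-1)) := by
    rw [div_lt_div_iff₀ (by nlinarith) (by nlinarith)]
    nlinarith
  have hs0 : (0:ℝ) < s := by linarith
  calc (s:ℝ) * -(1/(x*(x-1))) - -((r:ℝ)/(x*(x-(r:ℝ))))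
      = (r:ℝ)/(x*(x-(r:ℝ))) - (s:ℝ)/(x*(x-1)) := by ring
    _ < 0 := by linarith

lemma phiT_deriv_pos {x : ℝ} (hrx : (r:ℝ) < x) (hx : x < xstar r s) :
    0 < (s:ℝ) * (1/x - 1/(x-1)) - (1/x - 1/(x-(r:ℝ))) := by
  have h1 : (2:ℝ) ≤ (r:ℝ) := by exact_mod_cast hr
  have h2 : (r:ℝ) < (s:ℝ) := by exact_mod_cast hrs
  have hx0 : (0:ℝ) < x := by linarith
  have hx1 : (0:ℝ) < x - 1 := by linarith
  have hxr : (0:ℝ) < x - r := by linarith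
  have hsr0 : (s:ℝ) - (r:ℝ) ≠ 0 := by linarith
  have hst : (xstar r s) * ((s:ℝ) - (r:ℝ)) = (r:ℝ) * ((s:ℝ) - 1) := by
    rw [xstar, div_mul_cancel₀ _ hsr0]
  have hkey : (s:ℝ) * (x - (r:ℝ)) < (r:ℝ) * (x - 1) := by nlinarith
  have e1 : (1:ℝ)/x - 1/(x-1) = -(1/(x*(x-1))) := by field_simp; ring
  have e2 : (1:ℝ)/x - 1/(x-(r:ℝ)) = -((r:ℝ)/(x*(x-(r:ℝ)))) := by field_simp; ring
  rw [e1, e2]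
  have : (s:ℝ)/(x*(x-1)) < (r:ℝ)/(x*(x-(r:ℝ))) := by
    rw [div_lt_div_iff₀ (by nlinarith) (by nlinarith)]
    nlinarith
  calc (0:ℝ) < (r:ℝ)/(x*(x-(r:ℝ))) - (s:ℝ)/(x*(x-1)) := by linarith
    _ = (s:ℝ) * -(1/(x*(x-1))) - -((r:ℝ)/(x*(x-(r:ℝ)))) := by ring

lemma phiT_strictAnti : StrictAntiOn (phiT r s) (Set.Ici (xstar r s)) := by
  apply strictAntiOn_of_deriv_neg (convex_Ici _)
  · intro x hx
    exact (phiT_hasDeriv hr (lt_of_lt_of_le (r_lt_xstar hr hrs) hx)).continuousAt.continuousWithinAt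
  · intro x hx
    rw [interior_Ici] at hx
    rw [(phiT_hasDeriv hr (lt_trans (r_lt_xstar hr hrs) hx)).deriv]
    exact phiT_deriv_neg hr hrs hx

lemma phiT_pos_of_xstar_le {x : ℝ} (hx : xstar r s ≤ x) : 0 < phiT r s x := by
  have hanti := phiT_strictAnti hr hrs
  have h1 : phiT r s (x+1) < phiT r s x :=
    hanti (Set.mem_Ici.2 hx) (Set.mem_Ici.2 (by linarith)) (by linarith)
  have h2 : 0 ≤ phiT r s (x+1) := by
    refine le_of_tendsto (phiT_tendsto r s) ?_
    filter_upwards [eventually_ge_atTop (x+1+1)] with y hy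
    exact le_of_lt (hanti (Set.mem_Ici.2 (by linarith)) (Set.mem_Ici.2 (by linarith)) (by linarith))
  linarith

lemma phiT_pos_shape {a b : ℝ} (ha : (r:ℝ) < a) (hab : a ≤ b) (hpa : 0 < phiT r s a) :
    0 < phiT r s b := by
  rcases le_or_gt (xstar r s) b with hb | hb
  · exact phiT_pos_of_xstar_le hr hrs hb
  rcases eq_or_lt_of_le hab with rfl | hab'
  · exact hpa
  have hmono : StrictMonoOn (phiT r s) (Set.Icc a b) := by
    apply strictMonoOn_of_deriv_pos (convex_Icc _ _)
    · intro x hx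
      exact (phiT_hasDeriv hr (lt_of_lt_of_le ha hx.1)).continuousAt.continuousWithinAt
    · intro x hx
      rw [interior_Icc] at hx
      rw [(phiT_hasDeriv hr (lt_trans ha hx.1)).deriv]
      exact phiT_deriv_pos hr hrs (lt_trans ha hx.1) (lt_trans hx.2 hb)
  have := hmono (Set.left_mem_Icc.2 hab) (Set.right_mem_Icc.2 hab) hab'
  linarith

end shape

lemma turanRatio_ne_one {r s : ℕ} (hr : 2 ≤ r) (hrs : r < s) {m : ℕ} (hm : r < m) :
    turanRatio r s m ≠ 1 := by
  intro h
  have hm3 : 3 ≤ m := by omega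
  have hmr : (0:ℝ) < (m:ℝ) - (r:ℝ) := by
    have : (r:ℝ) < (m:ℝ) := by exact_mod_cast hm
    linarith
  have hm0 : (0:ℝ) < (m:ℝ) := by positivity
  have h1 : (1:ℝ) - 1/(m:ℝ) = ((m:ℝ) - 1)/(m:ℝ) := by field_simp
  rw [turanRatio, h1] at h
  have hreal : (m:ℝ) * ((m:ℝ) - 1)^s = ((m:ℝ) - (r:ℝ)) * (m:ℝ)^s := by
    have := h
    field_simp [div_pow] at this
    calc (m:ℝ) * ((m:ℝ)-1)^s = ((m:ℝ) * (((m:ℝ)-1)/(m:ℝ))^s) * (m:ℝ)^s := by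
          rw [div_pow, mul_assoc, div_mul_cancel₀ _ (pow_ne_zero _ hm0.ne')]
      _ = _ := by rw [this]
  have hcast1 : ((m - 1 : ℕ) : ℝ) = (m:ℝ) - 1 := by
    have : 1 ≤ m := by omega
    push_cast [Nat.cast_sub this]; ring
  have hcast2 : ((m - r : ℕ) : ℝ) = (m:ℝ) - (r:ℝ) := by
    have : r ≤ m := le_of_lt hm
    push_cast [Nat.cast_sub this]; ring
  have hnat : m * (m - 1)^s = (m - r) * m^s := by
    have : ((m * (m-1)^s : ℕ) : ℝ) = (((m - r) * m^s : ℕ) : ℝ) := by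
      push_cast [hcast1, hcast2]
      linarith [hreal]
    exact_mod_cast this
  have hdvd : m^(s-1) ∣ (m-1)^s := by
    have h2 : m^s ∣ m * (m-1)^s := ⟨m - r, by rw [hnat]; ring⟩
    have h3 : m * m^(s-1) ∣ m * (m-1)^s := by
      have : m * m^(s-1) = m^s := by
        rw [← pow_succ']
        congr 1; omega
      rwa [this]
    exact (mul_dvd_mul_iff_left (by omega : m ≠ 0)).1 h3
  have hcop : Nat.Coprime (m^(s-1)) ((m-1)^s) := by
    apply Nat.Coprime.pow
    obtain ⟨k, rfl⟩ : ∃ k, m = k + 1 := ⟨m-1, by omega⟩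
    simp only [Nat.add_sub_cancel]
    unfold Nat.Coprime
    rw [Nat.gcd_self_add_left, Nat.gcd_one_left]
  have hone : m^(s-1) = 1 := hcop.eq_one_of_dvd hdvd
  have : s - 1 ≠ 0 := by omega
  have := pow_eq_one_iff |>.1 hone
  omega

lemma gTuran_pos {r s p q ℓ : ℕ} (hr : 2 ≤ r) (hl : r ≤ ℓ) : 0 < gTuran r s p q ℓ := by
  rw [gTuran]
  apply div_pos
  · exact_mod_cast Nat.mul_pos ℓ.factorial_pos s.factorial_pos
  · apply mul_pos
    · have : 0 < (ℓ - r).factorial * (r - q).factorial * q.factorial * p.factorial ^ r * (p + 1) ^ q := by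
        positivity
      exact_mod_cast this
    · have : (0:ℝ) < (ℓ:ℝ) := by
        have : 0 < ℓ := by omega
        exact_mod_cast this
      positivity

set_option maxHeartbeats 1000000 in
lemma gTuran_succ {r s p q ℓ : ℕ} (hr : 2 ≤ r) (hl : r ≤ ℓ) :
    gTuran r s p q (ℓ + 1) = gTuran r s p q ℓ * turanRatio r s (ℓ + 1) := by
  have h1 : (ℓ + 1) - r = (ℓ - r) + 1 := by omega
  have hl0 : (0:ℝ) < (ℓ:ℝ) := by
    have : 0 < ℓ := by omega
    exact_mod_cast this
  have hl1 : (0:ℝ) < (ℓ:ℝ) + 1 := by linarith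
  have hlr1 : ((ℓ - r : ℕ) : ℝ) + 1 ≠ 0 := by positivity
  have hfl : ((ℓ.factorial : ℕ) : ℝ) ≠ 0 := by exact_mod_cast ℓ.factorial_pos.ne'
  have hflr : (((ℓ - r).factorial : ℕ) : ℝ) ≠ 0 := by exact_mod_cast (ℓ - r).factorial_pos.ne'
  have hrq : (((r - q).factorial : ℕ) : ℝ) ≠ 0 := by exact_mod_cast (r - q).factorial_pos.ne'
  have hqf : ((q.factorial : ℕ) : ℝ) ≠ 0 := by exact_mod_cast q.factorial_pos.ne'
  have hpf : ((p.factorial : ℕ) : ℝ) ≠ 0 := by exact_mod_cast p.factorial_pos.ne'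
  have hp1 : ((p : ℝ) + 1) ≠ 0 := by positivity
  have h3 : (ℓ:ℝ) + 1 - (r:ℝ) = ((ℓ - r : ℕ) : ℝ) + 1 := by
    push_cast [Nat.cast_sub hl]; ring
  rw [gTuran, gTuran, turanRatio, h1]
  push_cast [Nat.factorial_succ]
  rw [h3]
  have h2 : (1:ℝ) - 1/((ℓ:ℝ)+1) = (ℓ:ℝ)/((ℓ:ℝ)+1) := by field_simp; ring
  rw [h2, div_pow]
  rw [div_mul_div_comm, div_mul_div_comm, div_eq_div_iff (by positivity) (by positivity)]
  ring

/-- Strict unimodality of `g(ℓ) = ℓ!·s!/((ℓ-r)!·(r-q)!·q!·(p!)^r·(p+1)^q·ℓ^s)` on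
`{r, r+1, …}`: there is `t ≥ r` such that `g` strictly increases up to `t` and strictly
decreases afterwards; in particular `g` attains its maximum at the unique point `t`. -/
theorem stmt18 {r s p q : ℕ} (hr : 2 ≤ r) (hrs : r < s) (hp : 1 ≤ p)
    (hspq : s = p * r + q) (hq : q < r) :
    ∃ t : ℕ, r ≤ t ∧
      (∀ ℓ : ℕ, r ≤ ℓ → ℓ < t → gTuran r s p q ℓ < gTuran r s p q (ℓ + 1)) ∧
      (∀ ℓ : ℕ, t ≤ ℓ → gTuran r s p q (ℓ + 1) < gTuran r s p q ℓ) ∧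
      (∀ ℓ : ℕ, r ≤ ℓ → ℓ ≠ t → gTuran r s p q ℓ < gTuran r s p q t) := by
  classical
  -- existence of m with ratio < 1
  have hP : ∃ m : ℕ, r + 1 ≤ m ∧ turanRatio r s m < 1 := by
    refine ⟨max (r+1) (⌈xstar r s⌉₊ + 1), le_max_left _ _, ?_⟩
    set M := max (r+1) (⌈xstar r s⌉₊ + 1) with hM
    have hMr : r < M := lt_of_lt_of_le (Nat.lt_succ_self r) (le_max_left _ _)
    have hMrR : (r:ℝ) < (M:ℝ) := by exact_mod_cast hMr
    have hMx : xstar r s ≤ (M:ℝ) := by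
      have h1 : (⌈xstar r s⌉₊ : ℝ) ≤ (M:ℝ) := by
        have : ⌈xstar r s⌉₊ ≤ M := le_trans (Nat.le_succ _) (le_max_right _ _)
        exact_mod_cast this
      exact le_trans (Nat.le_ceil _) h1
    have hphi : 0 < phiT r s (M:ℝ) := phiT_pos_of_xstar_le hr hrs hMx
    exact (turanRatio_lt_one_iff hr hMrR).2 hphi
  let m0 := Nat.find hP
  have hm0 : r + 1 ≤ m0 ∧ turanRatio r s m0 < 1 := Nat.find_spec hP
  have hmin : ∀ m < m0, ¬ (r + 1 ≤ m ∧ turanRatio r s m < 1) := fun m hm => Nat.find_min hP hm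
  have inc : ∀ ℓ : ℕ, r ≤ ℓ → ℓ < m0 - 1 → gTuran r s p q ℓ < gTuran r s p q (ℓ + 1) := by
    intro ℓ hℓ hlt
    have hm : r < ℓ + 1 := by omega
    have hmR : (r:ℝ) < ((ℓ+1 : ℕ):ℝ) := by exact_mod_cast hm
    have hnot : ¬ (r + 1 ≤ ℓ + 1 ∧ turanRatio r s (ℓ+1) < 1) := hmin (ℓ+1) (by omega)
    have hge : ¬ turanRatio r s (ℓ+1) < 1 := fun hc => hnot ⟨by omega, hc⟩
    have hne : turanRatio r s (ℓ+1) ≠ 1 := turanRatio_ne_one hr hrs hm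
    have hgt : 1 < turanRatio r s (ℓ+1) := lt_of_le_of_ne (not_lt.1 hge) (Ne.symm hne)
    have hpos := gTuran_pos (p := p) (q := q) (s := s) hr hℓ
    rw [gTuran_succ hr hℓ]
    nlinarith
  have dec : ∀ ℓ : ℕ, m0 - 1 ≤ ℓ → gTuran r s p q (ℓ + 1) < gTuran r s p q ℓ := by
    intro ℓ hℓ
    have hℓr : r ≤ ℓ := by omega
    have hm : r < ℓ + 1 := by omega
    have hmR : (r:ℝ) < ((ℓ+1 : ℕ):ℝ) := by exact_mod_cast hm
    have hm0r : (r:ℝ) < ((m0 : ℕ):ℝ) := by exact_mod_cast (by omega : r < m0)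
    have hphi0 : 0 < phiT r s (m0:ℝ) := (turanRatio_lt_one_iff hr hm0r).1 hm0.2
    have hle : ((m0:ℕ):ℝ) ≤ ((ℓ+1:ℕ):ℝ) := by exact_mod_cast (by omega : m0 ≤ ℓ + 1)
    have hphi : 0 < phiT r s ((ℓ+1:ℕ):ℝ) := phiT_pos_shape hr hrs hm0r hle hphi0
    have hlt1 : turanRatio r s (ℓ+1) < 1 := (turanRatio_lt_one_iff hr hmR).2 hphi
    have hpos := gTuran_pos (p := p) (q := q) (s := s) hr hℓr
    have hrpos : 0 < turanRatio r s (ℓ+1) := by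
      have := turanRatio_eq_exp hr hmR (s := s)
      rw [turanRatio, this]
      exact Real.exp_pos _
    rw [gTuran_succ hr hℓr]
    nlinarith
  refine ⟨m0 - 1, by omega, inc, dec, ?_⟩
  intro ℓ hℓ hne
  rcases lt_or_gt_of_ne hne with hlt | hgt
  · have step : ∀ b a : ℕ, r ≤ a → a < b → b ≤ m0 - 1 → gTuran r s p q a < gTuran r s p q b := by
      intro b
      induction b with
      | zero => intro a _ hab _; omega
      | succ n ih =>
        intro a ha hab hbt
        rcases Nat.lt_succ_iff_lt_or_eq.mp hab with h | h
        · exact lt_trans (ih a ha h (by omega)) (inc n (by omega) (by omega))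
        · subst h; exact inc a ha (by omega)
    exact step (m0 - 1) ℓ hℓ hlt le_rfl
  · have step : ∀ b : ℕ, (m0 - 1) + 1 ≤ b → gTuran r s p q b < gTuran r s p q (m0 - 1) := by
      intro b hb
      induction b, hb using Nat.le_induction with
      | base => exact dec (m0 - 1) le_rfl
      | succ n hn ih => exact lt_trans (dec n (by omega)) ih
    exact step ℓ (by omega)
end
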